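/- arXiv:2211.07253 — 5 statements merged into one kernel-verified Lean document; each statement's English description precedes it below -/
import Mathlib

section
/- Let θ = (θ_i)_{i∈ℕ} be a sequence of positive reals with Σ_i θ_i² < ∞, and for ε > 0 set γ_θ(ε) = Σ_{i : θ_i > ε} θ_i (a finite, positive sum, assuming at least one θ_i > ε). Let (ξ_i)_{i∈ℕ} be independent random variables, ξ_i exponentially distributed with rate θ_i, and for s ≥ 0 define A_ε(s) = Σ_{i : θ_i > ε} θ_i · min(s, ξ_i). Then for every t > 0, E[ sup_{0 ≤ s ≤ t} | A_ε(s)/γ_θ(ε) − s | ] ≤ (Σ_i θ_i²) · t² / γ_θ(ε). -/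
open MeasureTheory

/-- With `θ` positive, `Σ θ_i² < ∞`, `ξ_i` independent exponentials of rates `θ_i`,
`A_ε(s) = Σ_{θ_i > ε} θ_i min(s, ξ_i)` and `γ_θ(ε) = Σ_{θ_i > ε} θ_i > 0`, one has for
every `t > 0`: `E[sup_{0 ≤ s ≤ t} |A_ε(s)/γ_θ(ε) − s|] ≤ (Σ_i θ_i²) t² / γ_θ(ε)`. -/
theorem stmt9 {Ω : Type*} [MeasurableSpace Ω] (P : Measure Ω) [IsProbabilityMeasure P]
    (θ : ℕ → ℝ) (hpos : ∀ i, 0 < θ i)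
    (hsq : Summable fun i => (θ i) ^ 2)
    (ξ : ℕ → Ω → ℝ) (hmeas : ∀ i, Measurable (ξ i))
    (hindep : ProbabilityTheory.iIndepFun ξ P)
    (hexp : ∀ i, ∀ s : ℝ, 0 ≤ s →
      P {ω | s < ξ i ω} = ENNReal.ofReal (Real.exp (-(θ i * s))))
    (ε : ℝ) (hε : 0 < ε) (hsome : ∃ i, ε < θ i) (t : ℝ) (ht : 0 < t) :
    (∫ ω, (⨆ s : Set.Icc (0 : ℝ) t,
        |(∑' i, if ε < θ i then θ i * min (s : ℝ) (ξ i ω) else 0) /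
            (∑' i, if ε < θ i then θ i else 0) - (s : ℝ)|) ∂P)
      ≤ (∑' i, (θ i) ^ 2) * t ^ 2 / (∑' i, if ε < θ i then θ i else 0) := by
  classical
  -- the set of large rates is finite
  have hS : {i : ℕ | ε < θ i}.Finite := by
    have htend : Filter.Tendsto (fun i => (θ i) ^ 2) Filter.atTop (nhds 0) :=
      hsq.tendsto_atTop_zero
    have hev : ∀ᶠ i in Filter.atTop, (θ i) ^ 2 < ε ^ 2 :=
      htend.eventually (gt_mem_nhds (by positivity))
    obtain ⟨N, hN⟩ := Filter.eventually_atTop.1 hev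
    apply Set.Finite.subset (Set.finite_Iio N)
    intro i hi
    by_contra h
    simp only [Set.mem_Iio, not_lt] at h
    have h1 := hN i h
    have h2 : ε ^ 2 < (θ i) ^ 2 := by
      have : ε < θ i := hi
      nlinarith
    linarith
  set G : Finset ℕ := hS.toFinset with hGdef
  have hmemG : ∀ i, i ∈ G ↔ ε < θ i := fun i => hS.mem_toFinset
  set γ : ℝ := ∑ i ∈ G, θ i with hγdef
  have hγpos : 0 < γ := by
    obtain ⟨i, hi⟩ := hsome
    exact Finset.sum_pos' (fun j _ => (hpos j).le) ⟨i, (hmemG i).2 hi, hpos i⟩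
  have hγ : (∑' i, if ε < θ i then θ i else 0) = γ := by
    rw [tsum_eq_sum (s := G) (fun i hi => if_neg (fun h => hi ((hmemG i).2 h)))]
    exact Finset.sum_congr rfl fun i hi => if_pos ((hmemG i).1 hi)
  have hA : ∀ (s : ℝ) (ω : Ω), (∑' i, if ε < θ i then θ i * min s (ξ i ω) else 0)
      = ∑ i ∈ G, θ i * min s (ξ i ω) := by
    intro s ω
    rw [tsum_eq_sum (s := G) (fun i hi => if_neg (fun h => hi ((hmemG i).2 h)))]
    exact Finset.sum_congr rfl fun i hi => if_pos ((hmemG i).1 hi)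
  have hminmax : ∀ s x : ℝ, s - min s x = max 0 (s - x) := by
    intro s x
    rcases le_total s x with h | h
    · have h2 : s - x ≤ 0 := by linarith
      rw [min_eq_left h, max_eq_left h2]; ring
    · have h2 : 0 ≤ s - x := by linarith
      rw [min_eq_right h, max_eq_right h2]
  -- key pointwise identity
  have key : ∀ (ω : Ω) (s : ℝ),
      |(∑ i ∈ G, θ i * min s (ξ i ω)) / γ - s|
        = (∑ i ∈ G, θ i * max 0 (s - ξ i ω)) / γ := by
    intro ω s
    have hnum : (∑ i ∈ G, θ i * min s (ξ i ω)) - s * γ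
        = -∑ i ∈ G, θ i * max 0 (s - ξ i ω) := by
      rw [hγdef, Finset.mul_sum, ← Finset.sum_sub_distrib, ← Finset.sum_neg_distrib]
      refine Finset.sum_congr rfl fun i _ => ?_
      have h := hminmax s (ξ i ω)
      rw [← h]; ring
    have heq : (∑ i ∈ G, θ i * min s (ξ i ω)) / γ - s
        = -((∑ i ∈ G, θ i * max 0 (s - ξ i ω)) / γ) := by
      have hg : γ ≠ 0 := hγpos.ne'
      field_simp
      linarith [hnum]
    rw [heq, abs_neg, abs_of_nonneg]
    exact div_nonneg
      (Finset.sum_nonneg fun i _ => mul_nonneg (hpos i).le (le_max_left 0 _)) hγpos.le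
  -- the supremum over [0,t] is attained at t
  have hsup : ∀ ω : Ω, (⨆ s : Set.Icc (0 : ℝ) t,
        |(∑' i, if ε < θ i then θ i * min (s : ℝ) (ξ i ω) else 0) /
            (∑' i, if ε < θ i then θ i else 0) - (s : ℝ)|)
      = (∑ i ∈ G, θ i * max 0 (t - ξ i ω)) / γ := by
    intro ω
    haveI : Nonempty (Set.Icc (0 : ℝ) t) := ⟨⟨t, ht.le, le_rfl⟩⟩
    simp only [hγ, hA]
    have hmono : ∀ s : Set.Icc (0 : ℝ) t,
        |(∑ i ∈ G, θ i * min (s : ℝ) (ξ i ω)) / γ - (s : ℝ)|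
          ≤ (∑ i ∈ G, θ i * max 0 (t - ξ i ω)) / γ := by
      intro s
      rw [key]
      have hst : (s : ℝ) ≤ t := s.2.2
      have hsum : (∑ i ∈ G, θ i * max 0 ((s : ℝ) - ξ i ω))
          ≤ ∑ i ∈ G, θ i * max 0 (t - ξ i ω) := by
        refine Finset.sum_le_sum fun i _ => ?_
        exact mul_le_mul_of_nonneg_left
          (max_le_max le_rfl (by linarith)) (hpos i).le
      exact div_le_div_of_nonneg_right hsum hγpos.le
    refine le_antisymm (ciSup_le hmono) ?_
    have ht' : (t : ℝ) ∈ Set.Icc (0 : ℝ) t := ⟨ht.le, le_rfl⟩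
    have hle := le_ciSup (f := fun s : Set.Icc (0 : ℝ) t =>
      |(∑ i ∈ G, θ i * min (s : ℝ) (ξ i ω)) / γ - (s : ℝ)|)
      ⟨_, Set.forall_mem_range.2 hmono⟩ (⟨t, ht'⟩ : Set.Icc (0 : ℝ) t)
    rw [key] at hle
    exact hle
  -- rewrite the integral
  rw [integral_congr_ae (ae_of_all _ hsup), hγ]
  -- a.s. positivity of the ξ's
  have hae : ∀ i, ∀ᵐ ω ∂P, 0 < ξ i ω := by
    intro i
    have hms : MeasurableSet {ω | 0 < ξ i ω} :=
      measurableSet_lt measurable_const (hmeas i)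
    have h0 : P {ω | 0 < ξ i ω} = 1 := by
      have h := hexp i 0 le_rfl
      simpa using h
    have hcompl : P {ω | 0 < ξ i ω}ᶜ = 0 :=
      (prob_compl_eq_zero_iff hms).2 h0
    rw [Filter.eventually_iff, mem_ae_iff]
    simpa [Set.compl_setOf] using hcompl
  -- integrability of the truncated variables
  have hmeasg : ∀ i, Measurable fun ω => max 0 (t - ξ i ω) :=
    fun i => measurable_const.max (measurable_const.sub (hmeas i))
  have hg : ∀ i, Integrable (fun ω => max 0 (t - ξ i ω)) P := by
    intro i
    refine Integrable.mono' (integrable_const t) (hmeasg i).aestronglyMeasurable ?_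
    filter_upwards [hae i] with ω hω
    rw [Real.norm_eq_abs, abs_of_nonneg (le_max_left 0 _)]
    exact max_le ht.le (by linarith)
  -- bound on each expectation
  have hbound : ∀ i, (∫ ω, max 0 (t - ξ i ω) ∂P) ≤ θ i * t ^ 2 := by
    intro i
    set c : Set Ω := {ω | t < ξ i ω}ᶜ with hcdef
    have hms : MeasurableSet {ω | t < ξ i ω} :=
      measurableSet_lt measurable_const (hmeas i)
    have hint_ind : Integrable (c.indicator fun _ => t) P :=
      (integrable_const t).indicator hms.compl
    have hle1 : (∫ ω, max 0 (t - ξ i ω) ∂P) ≤ ∫ ω, c.indicator (fun _ => t) ω ∂P := by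
      refine integral_mono_ae (hg i) hint_ind ?_
      filter_upwards [hae i] with ω hω
      by_cases hc : t < ξ i ω
      · have : ω ∉ c := by simp [hcdef, hc]
        rw [Set.indicator_of_notMem this]
        exact max_le le_rfl (by linarith)
      · have : ω ∈ c := by simp [hcdef, hc]
        rw [Set.indicator_of_mem this]
        exact max_le ht.le (by simp at hc; linarith)
    have hle2 : (∫ ω, c.indicator (fun _ => t) ω ∂P)
        = (P c).toReal * t := by
      rw [integral_indicator_const _ hms.compl]; simp [smul_eq_mul, measureReal_def, hcdef]
    have hPc : (P c).toReal = 1 - Real.exp (-(θ i * t)) := by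
      have hPs : P {ω | t < ξ i ω} = ENNReal.ofReal (Real.exp (-(θ i * t))) :=
        hexp i t ht.le
      have hexple : Real.exp (-(θ i * t)) ≤ 1 := by
        rw [Real.exp_le_one_iff]
        nlinarith [(hpos i).le]
      rw [hcdef, measure_compl hms (measure_ne_top P _), hPs, measure_univ,
        ENNReal.toReal_sub_of_le (by simpa using hexple) ENNReal.one_ne_top]
      simp [ENNReal.toReal_ofReal (Real.exp_nonneg _)]
    have hexpbd : 1 - Real.exp (-(θ i * t)) ≤ θ i * t := by
      have := Real.add_one_le_exp (-(θ i * t))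
      linarith
    calc (∫ ω, max 0 (t - ξ i ω) ∂P) ≤ (P c).toReal * t := by rw [← hle2]; exact hle1
      _ = (1 - Real.exp (-(θ i * t))) * t := by rw [hPc]
      _ ≤ (θ i * t) * t := by
          apply mul_le_mul_of_nonneg_right hexpbd ht.le
      _ = θ i * t ^ 2 := by ring
  -- put everything together
  have hint : (∫ ω, (∑ i ∈ G, θ i * max 0 (t - ξ i ω)) / γ ∂P)
      = (∑ i ∈ G, θ i * ∫ ω, max 0 (t - ξ i ω) ∂P) / γ := by
    rw [integral_div, integral_finset_sum _ (fun i _ => (hg i).const_mul (θ i))]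
    congr 1
    exact Finset.sum_congr rfl fun i _ => integral_const_mul _ _
  rw [hint]
  calc (∑ i ∈ G, θ i * ∫ ω, max 0 (t - ξ i ω) ∂P) / γ
      ≤ (∑ i ∈ G, θ i * (θ i * t ^ 2)) / γ := by
        refine div_le_div_of_nonneg_right (Finset.sum_le_sum fun i _ => ?_) hγpos.le
        exact mul_le_mul_of_nonneg_left (hbound i) (hpos i).le
    _ = (∑ i ∈ G, (θ i) ^ 2) * t ^ 2 / γ := by
        rw [Finset.sum_mul]
        congr 1
        exact Finset.sum_congr rfl fun i _ => by ring
    _ ≤ (∑' i, (θ i) ^ 2) * t ^ 2 / γ := by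
        refine div_le_div_of_nonneg_right ?_ hγpos.le
        exact mul_le_mul_of_nonneg_right
          (hsq.sum_le_tsum G (fun i _ => sq_nonneg _)) (by positivity)
end

section
/- Let x_n, x : [0,1] → ℝ be càdlàg functions with x_n → x in the Skorokhod sense, and let b ∈ (0,1) and b_n ∈ [0,1) with b_n → b. Assume that either x is continuous at b, or Δx(b) ≠ 0 and Δx_n(b_n) → Δx(b). Then the functions y_n(t) = x_n(b_n + (1−b_n)t) − x_n(b_n) converge in the Skorokhod sense to y(t) = x(b + (1−b)t) − x(b), as functions of t ∈ [0,1]. -/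
open Filter Topology

set_option maxHeartbeats 1000000

/-- Left-limit value of a path on `[0,1]`, with the convention `x(0−) = x(0)`. -/
noncomputable def leftVal (x : ℝ → ℝ) (t : ℝ) : ℝ :=
  if t ≤ 0 then x 0 else limUnder (nhdsWithin t (Set.Iio t)) x

/-- Jump `Δx(t) = x(t) − x(t−)`, with `Δx(0) = 0`. -/
noncomputable def jump (x : ℝ → ℝ) (t : ℝ) : ℝ :=
  if t ≤ 0 then 0 else x t - leftVal x t

/-- `x : [0,1] → ℝ` is càdlàg: right-continuous on `[0,1)`, left limits on `(0,1]`. -/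
def Cadlag (x : ℝ → ℝ) : Prop :=
  (∀ t ∈ Set.Ico (0 : ℝ) 1, ContinuousWithinAt x (Set.Ici t) t) ∧
  (∀ t ∈ Set.Ioc (0 : ℝ) 1, ∃ L, Filter.Tendsto x (nhdsWithin t (Set.Iio t)) (nhds L))

/-- `x n → y` in the Skorokhod sense on `[0,1]`: there are continuous strictly increasing
bijections `λ_n` of `[0,1]` with `sup |λ_n − id| → 0` and `sup |x n − y ∘ λ_n| → 0`. -/
def SkorokhodTendsto (x : ℕ → ℝ → ℝ) (y : ℝ → ℝ) : Prop :=
  ∃ lam : ℕ → ℝ → ℝ,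
    (∀ n, ContinuousOn (lam n) (Set.Icc 0 1) ∧ StrictMonoOn (lam n) (Set.Icc 0 1) ∧
      lam n 0 = 0 ∧ lam n 1 = 1 ∧
      Set.MapsTo (lam n) (Set.Icc 0 1) (Set.Icc 0 1) ∧
      Set.SurjOn (lam n) (Set.Icc 0 1) (Set.Icc 0 1)) ∧
    Filter.Tendsto (fun n => ⨆ t : Set.Icc (0 : ℝ) 1, |lam n (t : ℝ) - (t : ℝ)|)
      Filter.atTop (nhds 0) ∧
    Filter.Tendsto (fun n => ⨆ t : Set.Icc (0 : ℝ) 1, |x n (t : ℝ) - y (lam n (t : ℝ))|)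
      Filter.atTop (nhds 0)


lemma cadlag_leftTendsto {f : ℝ → ℝ} (hf : Cadlag f) {t : ℝ} (ht : t ∈ Set.Ioc 0 1) :
    Tendsto f (𝓝[<] t) (𝓝 (leftVal f t)) := by
  obtain ⟨L, hL⟩ := hf.2 t ht
  have hv : leftVal f t = L := by
    rw [leftVal, if_neg (not_le.2 ht.1)]
    exact hL.limUnder_eq
  rw [hv]; exact hL

lemma cadlag_bdd {f : ℝ → ℝ} (hf : Cadlag f) : ∃ M, ∀ u ∈ Set.Icc (0:ℝ) 1, |f u| ≤ M := by
  refine (isCompact_Icc (a := (0:ℝ)) (b := 1)).induction_on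
    (p := fun s => ∃ M, ∀ u ∈ s, |f u| ≤ M) ⟨0, by simp⟩
    (fun s t hst ⟨M, hM⟩ => ⟨M, fun u hu => hM u (hst hu)⟩)
    (fun s t ⟨M, hM⟩ ⟨M', hM'⟩ => ⟨max M M', fun u hu => hu.elim
      (fun h => (hM u h).trans (le_max_left _ _))
      (fun h => (hM' u h).trans (le_max_right _ _))⟩) ?_
  intro x hx
  set M : ℝ := max (|f x| + 1) (|leftVal f x| + 1) with hM
  have hM1 : |f x| + 1 ≤ M := le_max_left _ _
  have hM2 : |leftVal f x| + 1 ≤ M := le_max_right _ _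
  refine ⟨{u | |f u| ≤ M}, ?_, M, fun u hu => hu⟩
  have hsplit : Set.Icc (0:ℝ) 1 = (Set.Icc 0 1 ∩ Set.Iio x) ∪ (Set.Icc 0 1 ∩ Set.Ici x) := by
    ext u; simp only [Set.mem_union, Set.mem_inter_iff, Set.mem_Iio, Set.mem_Ici]
    constructor
    · intro h; rcases lt_or_ge u x with h'|h' <;> [exact Or.inl ⟨h, h'⟩; exact Or.inr ⟨h, h'⟩]
    · rintro (⟨h, _⟩|⟨h, _⟩) <;> exact h
  rw [hsplit, nhdsWithin_union, Filter.mem_sup]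
  constructor
  · -- left part
    rcases eq_or_lt_of_le hx.1 with h0 | h0
    · have : Set.Icc (0:ℝ) 1 ∩ Set.Iio x = ∅ := by
        ext u; simp only [Set.mem_inter_iff, Set.mem_Icc, Set.mem_Iio, Set.mem_empty_iff_false,
          iff_false]
        rintro ⟨⟨h1, _⟩, h2⟩; rw [← h0] at h2; linarith
      rw [this, nhdsWithin_empty]; exact Filter.mem_bot
    · have hL := cadlag_leftTendsto hf ⟨h0, hx.2⟩
      have h1 : ∀ᶠ u in 𝓝[<] x, |f u| ≤ M := by
        filter_upwards [hL (Metric.ball_mem_nhds _ one_pos)] with u hu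
        have : |f u - leftVal f x| < 1 := by simpa [Real.dist_eq] using hu
        calc |f u| ≤ |leftVal f x| + |f u - leftVal f x| := by
              have := abs_sub_abs_le_abs_sub (f u) (leftVal f x); linarith [abs_nonneg (f u - leftVal f x)]
          _ ≤ M := by linarith
      exact nhdsWithin_mono x Set.inter_subset_right h1
  · -- right part
    rcases eq_or_lt_of_le hx.2 with h1 | h1
    · have hsub : Set.Icc (0:ℝ) 1 ∩ Set.Ici x ⊆ {x} := by
        intro u hu
        have h2 : u ≤ 1 := hu.1.2
        have h3 : x ≤ u := hu.2
        simp only [Set.mem_singleton_iff]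
        exact le_antisymm (h1 ▸ h2) h3
      refine nhdsWithin_mono x hsub ?_
      rw [nhdsWithin_singleton]
      simp only [Filter.mem_pure, Set.mem_setOf_eq]
      linarith [hM1, abs_nonneg (f x)]
    · have hc := hf.1 x ⟨hx.1, h1⟩
      have h2 : ∀ᶠ u in 𝓝[Set.Ici x] x, |f u| ≤ M := by
        filter_upwards [hc (Metric.ball_mem_nhds _ one_pos)] with u hu
        have : |f u - f x| < 1 := by simpa [Real.dist_eq] using hu
        calc |f u| ≤ |f x| + |f u - f x| := by
              have := abs_sub_abs_le_abs_sub (f u) (f x); linarith [abs_nonneg (f u - f x)]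
          _ ≤ M := by linarith
      exact nhdsWithin_mono x Set.inter_subset_right h2

lemma jump_close {f y lam : ℝ → ℝ} (hf : Cadlag f) (hy : Cadlag y)
    (hc : ContinuousOn lam (Set.Icc 0 1)) (hm : StrictMonoOn lam (Set.Icc 0 1))
    (h0 : lam 0 = 0) (hmap : Set.MapsTo lam (Set.Icc 0 1) (Set.Icc 0 1))
    {t : ℝ} (ht : t ∈ Set.Ioo (0:ℝ) 1) {E : ℝ}
    (hE : ∀ u ∈ Set.Icc (0:ℝ) 1, |f u - y (lam u)| ≤ E) :
    |jump f t - jump y (lam t)| ≤ 2 * E := by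
  have htI : t ∈ Set.Icc (0:ℝ) 1 := ⟨ht.1.le, ht.2.le⟩
  have h0I : (0:ℝ) ∈ Set.Icc (0:ℝ) 1 := ⟨le_rfl, zero_le_one⟩
  have hc0 : lam t ∈ Set.Ioc (0:ℝ) 1 := by
    constructor
    · rw [← h0]; exact hm h0I htI ht.1
    · exact (hmap htI).2
  have hIoo : Set.Ioo (0:ℝ) t ∈ 𝓝[<] t := Ioo_mem_nhdsLT ht.1
  have hsub : Set.Ioo (0:ℝ) t ⊆ Set.Icc 0 1 := fun u hu => ⟨hu.1.le, hu.2.le.trans ht.2.le⟩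
  have hlt : Tendsto lam (𝓝[<] t) (𝓝[<] (lam t)) := by
    rw [tendsto_nhdsWithin_iff]
    constructor
    · have hle : 𝓝[<] t ≤ 𝓝[Set.Icc (0:ℝ) 1] t := by
        have he : 𝓝[Set.Iio t ∩ Set.Ioi 0] t = 𝓝[<] t :=
          nhdsWithin_inter_of_mem' (mem_nhdsWithin_of_mem_nhds (Ioi_mem_nhds ht.1))
        rw [← he]
        exact nhdsWithin_mono _ (fun u hu => ⟨(Set.mem_Ioi.1 hu.2).le, hu.1.le.trans ht.2.le⟩)
      exact (hc t htI).mono_left hle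
    · filter_upwards [hIoo] with u hu
      exact hm (hsub hu) htI hu.2
  have hfL : Tendsto f (𝓝[<] t) (𝓝 (leftVal f t)) := cadlag_leftTendsto hf ⟨ht.1, ht.2.le⟩
  have hyL : Tendsto y (𝓝[<] (lam t)) (𝓝 (leftVal y (lam t))) := cadlag_leftTendsto hy hc0
  have hyLc : Tendsto (fun u => y (lam u)) (𝓝[<] t) (𝓝 (leftVal y (lam t))) := hyL.comp hlt
  have habs : Tendsto (fun u => |f u - y (lam u)|) (𝓝[<] t)
      (𝓝 (|leftVal f t - leftVal y (lam t)|)) := (hfL.sub hyLc).abs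
  have hle2 : |leftVal f t - leftVal y (lam t)| ≤ E := by
    refine le_of_tendsto habs ?_
    filter_upwards [hIoo] with u hu
    exact hE u (hsub hu)
  have hle1 : |f t - y (lam t)| ≤ E := hE t htI
  rw [jump, jump, if_neg (not_le.2 ht.1), if_neg (not_le.2 hc0.1)]
  have : f t - leftVal f t - (y (lam t) - leftVal y (lam t)) =
      (f t - y (lam t)) - (leftVal f t - leftVal y (lam t)) := by ring
  rw [this]
  calc |(f t - y (lam t)) - (leftVal f t - leftVal y (lam t))|
      ≤ |f t - y (lam t)| + |leftVal f t - leftVal y (lam t)| := abs_sub _ _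
    _ ≤ 2 * E := by linarith

lemma jump_isolated {y : ℝ → ℝ} (hy : Cadlag y) {b : ℝ} (hb : b ∈ Set.Ioo (0:ℝ) 1)
    {ε : ℝ} (hε : 0 < ε) :
    ∃ η > 0, ∀ s ∈ Set.Icc (0:ℝ) 1, s ≠ b → |s - b| < η → |jump y s| ≤ ε := by
  have hL := cadlag_leftTendsto hy ⟨hb.1, hb.2.le⟩
  set L := leftVal y b with hLdef
  have h1 : {u | |y u - L| ≤ ε/2} ∈ 𝓝[<] b := by
    have := hL (Metric.closedBall_mem_nhds L (by positivity : (0:ℝ) < ε/2))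
    filter_upwards [this] with u hu
    simpa [Real.dist_eq] using hu
  obtain ⟨a₁, ha₁, hsub1⟩ := mem_nhdsLT_iff_exists_Ioo_subset.1 h1
  have hr := hy.1 b ⟨hb.1.le, hb.2⟩
  have h2 : {u | |y u - y b| ≤ ε/2} ∈ 𝓝[≥] b := by
    have := hr (Metric.closedBall_mem_nhds (y b) (by positivity : (0:ℝ) < ε/2))
    filter_upwards [this] with u hu
    simpa [Real.dist_eq] using hu
  obtain ⟨u₂, hu₂, hsub2⟩ := mem_nhdsGE_iff_exists_Ico_subset.1 h2
  have ha₁' : a₁ < b := ha₁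
  have hu₂' : b < u₂ := hu₂
  refine ⟨min (min (b - a₁) (u₂ - b)) (b/2), by have h1 := hb.1; have := sub_pos.2 ha₁'; have := sub_pos.2 hu₂'; positivity, ?_⟩
  intro s hs hsne hsd
  have hsd1 : |s - b| < b - a₁ := lt_of_lt_of_le hsd ((min_le_left _ _).trans (min_le_left _ _))
  have hsd2 : |s - b| < u₂ - b := lt_of_lt_of_le hsd ((min_le_left _ _).trans (min_le_right _ _))
  have hsd3 : |s - b| < b/2 := lt_of_lt_of_le hsd (min_le_right _ _)
  have hs0 : 0 < s := by
    have := abs_lt.1 hsd3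
    linarith [this.1]
  have hsL := cadlag_leftTendsto hy ⟨hs0, hs.2⟩
  rw [jump, if_neg (not_le.2 hs0)]
  rcases lt_or_gt_of_ne hsne with hl | hg
  · -- s < b
    have hsIoo : s ∈ Set.Ioo a₁ b := ⟨by have := abs_lt.1 hsd1; linarith [this.1], hl⟩
    have hys : |y s - L| ≤ ε/2 := hsub1 hsIoo
    have hlv : |leftVal y s - L| ≤ ε/2 := by
      refine le_of_tendsto ((hsL.sub tendsto_const_nhds).abs) ?_
      filter_upwards [Ioo_mem_nhdsLT hsIoo.1] with u hu
      exact hsub1 ⟨hu.1, hu.2.trans hl⟩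
    calc |y s - leftVal y s| ≤ |y s - L| + |leftVal y s - L| := by
          have h := abs_sub (y s - L) (leftVal y s - L)
          have : y s - leftVal y s = (y s - L) - (leftVal y s - L) := by ring
          rw [this]; exact h
      _ ≤ ε := by linarith
  · -- s > b
    have hsIco : s ∈ Set.Ico b u₂ := ⟨hg.le, by have := abs_lt.1 hsd2; linarith [this.2]⟩
    have hys : |y s - y b| ≤ ε/2 := hsub2 hsIco
    have hlv : |leftVal y s - y b| ≤ ε/2 := by
      refine le_of_tendsto ((hsL.sub tendsto_const_nhds).abs) ?_
      filter_upwards [Ioo_mem_nhdsLT hg] with u hu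
      exact hsub2 ⟨hu.1.le, hu.2.trans hsIco.2⟩
    calc |y s - leftVal y s| ≤ |y s - y b| + |leftVal y s - y b| := by
          have h := abs_sub (y s - y b) (leftVal y s - y b)
          have : y s - leftVal y s = (y s - y b) - (leftVal y s - y b) := by ring
          rw [this]; exact h
      _ ≤ ε := by linarith

lemma construction
    (x : ℕ → ℝ → ℝ) (y : ℝ → ℝ) (b : ℝ) (hb : b ∈ Set.Ioo (0:ℝ) 1)
    (bn : ℕ → ℝ) (hbn : ∀ n, bn n ∈ Set.Ico (0:ℝ) 1)
    (lam : ℕ → ℝ → ℝ)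
    (hlam : ∀ n, ContinuousOn (lam n) (Set.Icc 0 1) ∧ StrictMonoOn (lam n) (Set.Icc 0 1) ∧
      lam n 0 = 0 ∧ lam n 1 = 1 ∧ Set.MapsTo (lam n) (Set.Icc 0 1) (Set.Icc 0 1) ∧
      Set.SurjOn (lam n) (Set.Icc 0 1) (Set.Icc 0 1))
    (e1 e2 : ℕ → ℝ)
    (he1 : Tendsto e1 atTop (nhds 0)) (he2 : Tendsto e2 atTop (nhds 0))
    (hbnlim : Tendsto bn atTop (nhds b))
    (pw1 : ∀ n, ∀ u ∈ Set.Icc (0:ℝ) 1, |lam n u - u| ≤ e1 n)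
    (pw2 : ∀ n, ∀ u ∈ Set.Icc (0:ℝ) 1, |x n u - y (lam n u)| ≤ e2 n)
    (w r : ℕ → ℝ) (sf g : ℕ → ℝ → ℝ)
    (hw : ∀ n, w n = e1 n + |bn n - b| + ((n:ℝ)+1)⁻¹)
    (hr : ∀ n, r n = w n / (1 - bn n))
    (hsf : ∀ n t, sf n t = bn n + (1 - bn n) * t)
    (hg : ∀ n t, g n t = (lam n (sf n t) - b) / (1 - b))
    (hosc : ∀ ε > 0, ∃ δ > 0, ∀ u ∈ Set.Icc (0:ℝ) 1, b ≤ u → |u - b| < δ → |y u - y b| < ε)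
    (hxb : ∀ ε > 0, ∀ᶠ n in atTop, |x n (bn n) - y b| < ε)
    (hnear : ∀ ε > 0, ∀ᶠ n in atTop, ∀ u ∈ Set.Icc (0:ℝ) 1,
      bn n ≤ u → u ≤ bn n + w n → |y (lam n u) - y b| < ε) :
    SkorokhodTendsto (fun n t => x n (bn n + (1 - bn n) * t) - x n (bn n))
      (fun t => y (b + (1 - b) * t) - y b) := by
  classical
  have hb0 : (0:ℝ) < b := hb.1
  have hb1 : b < 1 := hb.2
  have h1b : (0:ℝ) < 1 - b := by linarith
  have h1bn : ∀ n, (0:ℝ) < 1 - bn n := fun n => by linarith [(hbn n).2]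
  have he1nn : ∀ n, 0 ≤ e1 n := fun n =>
    (abs_nonneg _).trans (pw1 n 0 ⟨le_rfl, zero_le_one⟩)
  have hdnn : ∀ n, (0:ℝ) ≤ |bn n - b| := fun n => abs_nonneg _
  have hinvpos : ∀ n : ℕ, (0:ℝ) < ((n:ℝ)+1)⁻¹ := fun n => by positivity
  have hwpos : ∀ n, 0 < w n := fun n => by
    rw [hw]; have := he1nn n; have := hdnn n; have := hinvpos n; linarith
  have hrpos : ∀ n, 0 < r n := fun n => by
    rw [hr]; exact div_pos (hwpos n) (h1bn n)
  have hsfmem : ∀ n, ∀ t ∈ Set.Icc (0:ℝ) 1, sf n t ∈ Set.Icc (0:ℝ) 1 := by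
    intro n t ht
    rw [hsf]
    constructor
    · nlinarith [(hbn n).1, ht.1, h1bn n]
    · nlinarith [(hbn n).2, ht.2, h1bn n]
  have hsfr : ∀ n, sf n (r n) = bn n + w n := by
    intro n; rw [hsf, hr, mul_div_cancel₀ _ (ne_of_gt (h1bn n))]
  have hsfmono : ∀ n, ∀ t u : ℝ, t < u → sf n t < sf n u := by
    intro n t u htu; rw [hsf, hsf]; have := h1bn n; nlinarith
  have hsfmono' : ∀ n, ∀ t u : ℝ, t ≤ u → sf n t ≤ sf n u := by
    intro n t u htu; rw [hsf, hsf]; have := h1bn n; nlinarith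
  have hg1 : ∀ n, g n 1 = 1 := by
    intro n
    have h1 : sf n 1 = 1 := by rw [hsf]; ring
    rw [hg, h1, (hlam n).2.2.2.1]
    field_simp
  have hgmono : ∀ n, StrictMonoOn (g n) (Set.Icc 0 1) := by
    intro n t ht u hu htu
    rw [hg, hg]
    have h := (hlam n).2.1 (hsfmem n t ht) (hsfmem n u hu) (hsfmono n t u htu)
    apply div_lt_div_of_pos_right ?_ h1b
    linarith
  have hgcont : ∀ n, ContinuousOn (g n) (Set.Icc 0 1) := by
    intro n
    have hsc : Continuous (sf n) := by
      have hh : sf n = fun t => bn n + (1 - bn n) * t := funext (hsf n)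
      rw [hh]; continuity
    have h1 : ContinuousOn (fun t => lam n (sf n t)) (Set.Icc 0 1) :=
      (hlam n).1.comp hsc.continuousOn (fun t ht => hsfmem n t ht)
    have hh : g n = fun t => (lam n (sf n t) - b)/(1-b) := funext (hg n)
    rw [hh]
    exact (h1.sub continuousOn_const).div_const _
  have hgdev : ∀ n, ∀ t ∈ Set.Icc (0:ℝ) 1, |g n t - t| ≤ (e1 n + |bn n - b|) / (1 - b) := by
    intro n t ht
    have hnum : g n t - t = ((lam n (sf n t) - sf n t) + (bn n - b) * (1 - t)) / (1 - b) := by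
      rw [hg, hsf]; field_simp; ring
    rw [hnum, abs_div, abs_of_pos h1b]
    gcongr
    calc |lam n (sf n t) - sf n t + (bn n - b) * (1 - t)|
        ≤ |lam n (sf n t) - sf n t| + |(bn n - b) * (1 - t)| := abs_add_le _ _
      _ ≤ e1 n + |bn n - b| := by
          have h1 := pw1 n _ (hsfmem n t ht)
          have h2 : |(bn n - b) * (1 - t)| ≤ |bn n - b| := by
            rw [abs_mul]
            have h3 : |1 - t| ≤ 1 := by rw [abs_le]; constructor <;> linarith [ht.1, ht.2]
            nlinarith [hdnn n]
          linarith
  have hgrB : ∀ n, r n < 1 → b + ((n:ℝ)+1)⁻¹ ≤ lam n (sf n (r n)) := by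
    intro n hn
    have hrI : r n ∈ Set.Icc (0:ℝ) 1 := ⟨(hrpos n).le, hn.le⟩
    have h2 := (abs_le.1 (pw1 n _ (hsfmem n (r n) hrI))).1
    have h3 : sf n (r n) = bn n + w n := hsfr n
    have hd : b - bn n ≤ |bn n - b| := by rw [abs_sub_comm]; exact le_abs_self _
    have h5 := hw n
    rw [h3] at h2 ⊢
    linarith
  have hgr0 : ∀ n, r n < 1 → 0 < g n (r n) := by
    intro n hn
    rw [hg]
    exact div_pos (by linarith [hgrB n hn, hinvpos n]) h1b
  set lam' : ℕ → ℝ → ℝ :=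
    fun n t => if r n < 1 then (if t ≤ r n then (g n (r n) / r n) * t else g n t) else t
    with hlam'def
  have hlam'pos : ∀ n, r n < 1 →
      lam' n = fun t => if t ≤ r n then (g n (r n) / r n) * t else g n t := by
    intro n hn; funext t; rw [hlam'def]; simp only [if_pos hn]
  have hlam'neg : ∀ n, ¬ (r n < 1) → lam' n = fun t => t := by
    intro n hn; funext t; rw [hlam'def]; simp only [if_neg hn]
  -- structural properties
  have hstruct : ∀ n, ContinuousOn (lam' n) (Set.Icc 0 1) ∧ StrictMonoOn (lam' n) (Set.Icc 0 1) ∧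
      lam' n 0 = 0 ∧ lam' n 1 = 1 ∧ Set.MapsTo (lam' n) (Set.Icc 0 1) (Set.Icc 0 1) ∧
      Set.SurjOn (lam' n) (Set.Icc 0 1) (Set.Icc 0 1) := by
    intro n
    by_cases hn : r n < 1
    · rw [hlam'pos n hn]
      have hr0 := hrpos n
      have hgr := hgr0 n hn
      have hslope : 0 < g n (r n) / r n := div_pos hgr hr0
      have hrI : r n ∈ Set.Icc (0:ℝ) 1 := ⟨hr0.le, hn.le⟩
      have hmatch : g n (r n) / r n * r n = g n (r n) := div_mul_cancel₀ _ (ne_of_gt hr0)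
      set ν : ℝ → ℝ := fun t => if t ≤ r n then (g n (r n) / r n) * t else g n t with hν
      have hνred : ∀ t, r n < t → ν t = g n t := by
        intro t ht; rw [hν]; simp only [if_neg (not_le.2 ht)]
      have hνlin : ∀ t, t ≤ r n → ν t = g n (r n) / r n * t := by
        intro t ht; rw [hν]; simp only [if_pos ht]
      have hmono : StrictMonoOn ν (Set.Icc 0 1) := by
        intro t ht u hu htu
        by_cases h1 : u ≤ r n
        · rw [hνlin u h1, hνlin t (htu.le.trans h1)]
          exact mul_lt_mul_of_pos_left htu hslope
        · push_neg at h1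
          rw [hνred u h1]
          by_cases h2 : t ≤ r n
          · rw [hνlin t h2]
            have ha : g n (r n) / r n * t ≤ g n (r n) := by
              calc g n (r n)/r n * t ≤ g n (r n)/r n * r n :=
                    mul_le_mul_of_nonneg_left h2 hslope.le
                _ = g n (r n) := hmatch
            exact ha.trans_lt (hgmono n hrI hu h1)
          · push_neg at h2
            rw [hνred t h2]
            exact hgmono n ht hu htu
      have hcont : ContinuousOn ν (Set.Icc 0 1) := by
        have hsplit : Set.Icc (0:ℝ) 1 = Set.Icc 0 (r n) ∪ Set.Icc (r n) 1 :=
          (Set.Icc_union_Icc_eq_Icc hr0.le hn.le).symm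
        rw [hsplit]
        intro z hz
        apply ContinuousWithinAt.union
        · by_cases hzm : z ∈ Set.Icc (0:ℝ) (r n)
          · have hcw : ContinuousWithinAt (fun t => g n (r n) / r n * t)
                (Set.Icc 0 (r n)) z := (continuous_const.mul continuous_id).continuousWithinAt
            exact hcw.congr (fun u hu => hνlin u hu.2) (hνlin z hzm.2)
          · exact continuousWithinAt_of_notMem_closure (by rwa [closure_Icc])
        · by_cases hzm : z ∈ Set.Icc (r n) 1
          · have hgc : ContinuousWithinAt (g n) (Set.Icc (r n) 1) z :=
              ((hgcont n).mono (Set.Icc_subset_Icc_left hr0.le)) z hzm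
            have heq : ∀ u ∈ Set.Icc (r n) 1, ν u = g n u := by
              intro u hu
              rcases eq_or_lt_of_le hu.1 with he | hl
              · rw [← he, hνlin (r n) le_rfl, hmatch]
              · exact hνred u hl
            exact hgc.congr heq (heq z hzm)
          · exact continuousWithinAt_of_notMem_closure (by rwa [closure_Icc])
      have h0 : ν 0 = 0 := by rw [hνlin 0 hr0.le]; ring
      have h1 : ν 1 = 1 := by rw [hνred 1 hn]; exact hg1 n
      have hmap : Set.MapsTo ν (Set.Icc 0 1) (Set.Icc 0 1) := by
        intro t ht
        have hm := hmono.monotoneOn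
        constructor
        · have := hm (Set.left_mem_Icc.2 zero_le_one) ht ht.1
          rwa [h0] at this
        · have := hm ht (Set.right_mem_Icc.2 zero_le_one) ht.2
          rwa [h1] at this
      refine ⟨hcont, hmono, h0, h1, hmap, ?_⟩
      · have hs := intermediate_value_Icc zero_le_one hcont
        rw [h0, h1] at hs
        exact hs
    · rw [hlam'neg n hn]
      exact ⟨continuous_id.continuousOn, fun a _ c _ h => h, rfl, rfl,
        fun u hu => hu, fun u hu => ⟨u, hu, rfl⟩⟩
  -- limits
  have hdlim : Tendsto (fun n => |bn n - b|) atTop (nhds 0) := by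
    have h := (hbnlim.sub_const b).abs
    simpa using h
  have hinv : Tendsto (fun n : ℕ => ((n:ℝ)+1)⁻¹) atTop (nhds 0) := by
    have := tendsto_one_div_add_atTop_nhds_zero_nat (𝕜 := ℝ)
    simpa [one_div] using this
  have hwlim : Tendsto w atTop (nhds 0) := by
    have h : Tendsto (fun n => e1 n + |bn n - b| + ((n:ℝ)+1)⁻¹) atTop (nhds 0) := by
      have := (he1.add hdlim).add hinv
      simpa using this
    have hh : w = fun n => e1 n + |bn n - b| + ((n:ℝ)+1)⁻¹ := funext hw
    rw [hh]; exact h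
  have hrlim : Tendsto r atTop (nhds 0) := by
    have h2 : Tendsto (fun n => 1 - bn n) atTop (nhds (1 - b)) :=
      tendsto_const_nhds.sub hbnlim
    have h3 := hwlim.div h2 (by linarith : (1:ℝ) - b ≠ 0)
    have hh : r = fun n => w n / (1 - bn n) := funext hr
    rw [hh]
    simpa using (show Tendsto (fun n => w n / (1 - bn n)) atTop (nhds (0 / (1 - b))) from h3)
  have hP : ∀ᶠ n in atTop, r n < 1 := hrlim.eventually_lt_const one_pos
  refine ⟨lam', hstruct, ?_, ?_⟩
  · -- sup |lam' - id| → 0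
    have hKlim : Tendsto (fun n => 2 * r n + (e1 n + |bn n - b|)/(1-b)) atTop (nhds 0) := by
      have h2 : Tendsto (fun n => (e1 n + |bn n - b|)/(1-b)) atTop (nhds 0) := by
        have := (he1.add hdlim).div_const (1-b)
        simpa using this
      have := (hrlim.const_mul 2).add h2
      simpa using this
    apply squeeze_zero' (Eventually.of_forall fun n => Real.iSup_nonneg fun t => abs_nonneg _)
      ?_ hKlim
    filter_upwards [hP] with n hn
    have hqnn : 0 ≤ (e1 n + |bn n - b|)/(1-b) := by
      have := he1nn n; have := hdnn n; positivity
    refine Real.iSup_le ?_ (by linarith [hrpos n])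
    rintro ⟨t, ht⟩
    rw [hlam'pos n hn]
    simp only
    by_cases hc : (t:ℝ) ≤ r n
    · rw [if_pos hc]
      have hν0 : 0 ≤ g n (r n) / r n * t := by
        have := (hgr0 n hn); have := hrpos n; have := ht.1
        positivity
      have hνle : g n (r n) / r n * t ≤ g n (r n) := by
        calc g n (r n)/r n * (t:ℝ) ≤ g n (r n)/r n * r n :=
              mul_le_mul_of_nonneg_left hc (div_pos (hgr0 n hn) (hrpos n)).le
          _ = g n (r n) := div_mul_cancel₀ _ (ne_of_gt (hrpos n))
      have hgrup : g n (r n) ≤ r n + (e1 n + |bn n - b|)/(1-b) := by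
        have := abs_le.1 (hgdev n (r n) ⟨(hrpos n).le, hn.le⟩)
        linarith [this.2]
      rw [abs_le]
      constructor
      · have := ht.2; have := hrpos n
        nlinarith [hqnn]
      · have := ht.1
        nlinarith [hrpos n]
    · rw [if_neg hc]
      have := hgdev n t ht
      have h2 := abs_le.1 this
      rw [abs_le]
      constructor
      · linarith [h2.1, hrpos n]
      · linarith [h2.2, hrpos n]
  · -- sup |z - Z ∘ lam'| → 0
    refine NormedAddCommGroup.tendsto_nhds_zero.mpr ?_
    intro ε hε
    have hε' : 0 < ε/5 := by positivity
    obtain ⟨δ, hδ0, hδ⟩ := hosc (ε/5) hε'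
    have hev3 : ∀ᶠ n in atTop, e2 n < ε/5 := he2.eventually_lt_const hε'
    have hev4 : ∀ᶠ n in atTop, 2*(e1 n + |bn n - b|) + ((n:ℝ)+1)⁻¹ < δ := by
      have h : Tendsto (fun n => 2*(e1 n + |bn n - b|) + ((n:ℝ)+1)⁻¹) atTop (nhds 0) := by
        have := ((he1.add hdlim).const_mul 2).add hinv
        simpa using this
      exact h.eventually_lt_const hδ0
    filter_upwards [hP, hxb (ε/5) hε', hnear (ε/5) hε', hev3, hev4] with n hn h1 h2 h3 h4
    have hbound : ∀ t ∈ Set.Icc (0:ℝ) 1,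
        |x n (bn n + (1 - bn n) * t) - x n (bn n) -
          (y (b + (1-b) * lam' n t) - y b)| ≤ 4*(ε/5) := by
      intro t ht
      have hst : sf n t ∈ Set.Icc (0:ℝ) 1 := hsfmem n t ht
      have hsteq : bn n + (1 - bn n) * t = sf n t := (hsf n t).symm
      rw [hsteq, hlam'pos n hn]
      simp only
      have d1 := abs_le.1 (pw2 n (sf n t) hst)
      have d4 := abs_lt.1 h1
      by_cases hc : t ≤ r n
      · rw [if_pos hc]
        have hgr := hgr0 n hn
        have hr0 := hrpos n
        have hν0 : 0 ≤ g n (r n) / r n * t := by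
          have := ht.1; positivity
        have hνle : g n (r n) / r n * t ≤ g n (r n) := by
          calc g n (r n)/r n * t ≤ g n (r n)/r n * r n :=
                mul_le_mul_of_nonneg_left hc (div_pos hgr hr0).le
            _ = g n (r n) := div_mul_cancel₀ _ (ne_of_gt hr0)
        have hgr_eq : (1-b) * g n (r n) = lam n (sf n (r n)) - b := by
          rw [hg]; field_simp
        have hlamr_le : lam n (sf n (r n)) ≤ 1 :=
          ((hlam n).2.2.2.2.1 (hsfmem n (r n) ⟨hr0.le, hn.le⟩)).2
        have hlamr_δ : lam n (sf n (r n)) - b < δ := by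
          have h5 := (abs_le.1 (pw1 n _ (hsfmem n (r n) ⟨hr0.le, hn.le⟩))).2
          have h6 : sf n (r n) = bn n + w n := hsfr n
          rw [h6] at h5 ⊢
          have hd : bn n - b ≤ |bn n - b| := le_abs_self _
          have h7 := hw n
          linarith
        -- T2 : near bound for y (lam (sf t))
        have hT2 : |y (lam n (sf n t)) - y b| < ε/5 := by
          apply h2 (sf n t) hst
          · rw [hsf]; nlinarith [ht.1, h1bn n]
          · have : sf n t ≤ sf n (r n) := hsfmono' n t (r n) hc
            rw [hsfr n] at this
            exact this
        have d2 := abs_lt.1 hT2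
        -- T3 : y at b + (1-b) * ν t
        have hT3 : |y (b + (1-b) * (g n (r n) / r n * t)) - y b| < ε/5 := by
          apply hδ
          · constructor
            · nlinarith
            · nlinarith [hgr_eq, hlamr_le]
          · nlinarith
          · rw [abs_of_nonneg (by nlinarith : (0:ℝ) ≤ b + (1-b) * (g n (r n)/r n * t) - b)]
            nlinarith [hgr_eq, hlamr_δ]
        have d3 := abs_lt.1 hT3
        rw [abs_le]
        constructor
        · linarith [d1.1, d2.1, d3.2, d4.2, h3]
        · linarith [d1.2, d2.2, d3.1, d4.1, h3]
      · rw [if_neg hc]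
        have hlameq : b + (1-b) * g n t = lam n (sf n t) := by
          rw [hg]; field_simp; ring
        rw [hlameq]
        rw [abs_le]
        constructor
        · linarith [d1.1, d4.2, h3, hε'.le]
        · linarith [d1.2, d4.1, h3, hε'.le]
    have hnn : 0 ≤ ⨆ t : Set.Icc (0:ℝ) 1,
        |x n (bn n + (1 - bn n) * (t:ℝ)) - x n (bn n) -
          (y (b + (1-b) * lam' n (t:ℝ)) - y b)| :=
      Real.iSup_nonneg fun t => abs_nonneg _
    rw [Real.norm_eq_abs, abs_of_nonneg hnn]
    have hsup : (⨆ t : Set.Icc (0:ℝ) 1,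
        |x n (bn n + (1 - bn n) * (t:ℝ)) - x n (bn n) -
          (y (b + (1-b) * lam' n (t:ℝ)) - y b)|) ≤ 4*(ε/5) :=
      Real.iSup_le (fun t => hbound t t.2) (by positivity)
    calc (⨆ t : Set.Icc (0:ℝ) 1, _) ≤ 4*(ε/5) := hsup
      _ < ε := by linarith

/-- If `x n → y` in the Skorokhod sense, `b_n → b ∈ (0,1)` with `b_n ∈ [0,1)`, and either
`y` is continuous at `b`, or `Δy(b) ≠ 0` and `Δx_n(b_n) → Δy(b)`, then
`t ↦ x n (b_n + (1−b_n)t) − x n (b_n)` converges in the Skorokhod sense to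
`t ↦ y (b + (1−b)t) − y b`. -/
theorem stmt10 (x : ℕ → ℝ → ℝ) (y : ℝ → ℝ)
    (hxc : ∀ n, Cadlag (x n)) (hyc : Cadlag y)
    (hconv : SkorokhodTendsto x y)
    (b : ℝ) (hb : b ∈ Set.Ioo (0 : ℝ) 1)
    (bn : ℕ → ℝ) (hbn : ∀ n, bn n ∈ Set.Ico (0 : ℝ) 1)
    (hbnlim : Filter.Tendsto bn Filter.atTop (nhds b))
    (hcase : ContinuousWithinAt y (Set.Icc 0 1) b ∨
      (jump y b ≠ 0 ∧
        Filter.Tendsto (fun n => jump (x n) (bn n)) Filter.atTop (nhds (jump y b)))) :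
    SkorokhodTendsto (fun n t => x n (bn n + (1 - bn n) * t) - x n (bn n))
      (fun t => y (b + (1 - b) * t) - y b) := by
  obtain ⟨lam, hlam, hs1, hs2⟩ := hconv
  have hbnI : ∀ n, bn n ∈ Set.Icc (0:ℝ) 1 := fun n => ⟨(hbn n).1, (hbn n).2.le⟩
  -- pointwise bounds
  have pw1 : ∀ n, ∀ u ∈ Set.Icc (0:ℝ) 1,
      |lam n u - u| ≤ ⨆ t : Set.Icc (0:ℝ) 1, |lam n (t:ℝ) - (t:ℝ)| := by
    intro n u hu
    have hbd : BddAbove (Set.range fun t : Set.Icc (0:ℝ) 1 => |lam n (t:ℝ) - (t:ℝ)|) := by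
      refine ⟨1, ?_⟩
      rintro v ⟨t, rfl⟩
      have h1 := (hlam n).2.2.2.2.1 t.2
      have h2 := t.2
      rw [abs_le]
      constructor
      · linarith [h1.1, (h2 : (t:ℝ) ∈ Set.Icc (0:ℝ) 1).2]
      · linarith [h1.2, (h2 : (t:ℝ) ∈ Set.Icc (0:ℝ) 1).1]
    exact le_ciSup hbd (⟨u, hu⟩ : Set.Icc (0:ℝ) 1)
  have pw2 : ∀ n, ∀ u ∈ Set.Icc (0:ℝ) 1,
      |x n u - y (lam n u)| ≤ ⨆ t : Set.Icc (0:ℝ) 1, |x n (t:ℝ) - y (lam n (t:ℝ))| := by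
    intro n u hu
    obtain ⟨Mx, hMx⟩ := cadlag_bdd (hxc n)
    obtain ⟨My, hMy⟩ := cadlag_bdd hyc
    have hbd : BddAbove (Set.range fun t : Set.Icc (0:ℝ) 1 => |x n (t:ℝ) - y (lam n (t:ℝ))|) := by
      refine ⟨Mx + My, ?_⟩
      rintro v ⟨t, rfl⟩
      calc |x n (t:ℝ) - y (lam n (t:ℝ))| ≤ |x n (t:ℝ)| + |y (lam n (t:ℝ))| := abs_sub _ _
        _ ≤ Mx + My := add_le_add (hMx _ t.2) (hMy _ ((hlam n).2.2.2.2.1 t.2))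
    exact le_ciSup hbd (⟨u, hu⟩ : Set.Icc (0:ℝ) 1)
  -- right-oscillation control at b
  have hosc : ∀ ε > 0, ∃ δ > 0, ∀ u ∈ Set.Icc (0:ℝ) 1, b ≤ u → |u - b| < δ → |y u - y b| < ε := by
    intro ε hε
    have h := (hyc.1 b ⟨hb.1.le, hb.2⟩) (Metric.ball_mem_nhds (y b) hε)
    obtain ⟨u₂, hu₂, hsub⟩ := mem_nhdsGE_iff_exists_Ico_subset.1 h
    refine ⟨u₂ - b, by linarith [Set.mem_Ioi.1 hu₂], ?_⟩
    intro u _ hbu habs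
    have hm : u ∈ Set.Ico b u₂ := ⟨hbu, by have := abs_lt.1 habs; linarith⟩
    have := hsub hm
    simpa [Real.dist_eq] using this
  -- auxiliary limits
  have hdlim : Tendsto (fun n => |bn n - b|) atTop (nhds 0) := by
    have h := (hbnlim.sub_const b).abs
    simpa using h
  have hinv : Tendsto (fun n : ℕ => ((n:ℝ)+1)⁻¹) atTop (nhds 0) := by
    have := tendsto_one_div_add_atTop_nhds_zero_nat (𝕜 := ℝ)
    simpa [one_div] using this
  have hwlim : Tendsto (fun n => (⨆ t : Set.Icc (0:ℝ) 1, |lam n (t:ℝ) - (t:ℝ)|)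
      + |bn n - b| + ((n:ℝ)+1)⁻¹) atTop (nhds 0) := by
    have := (hs1.add hdlim).add hinv
    simpa using this
  -- per-case facts
  have key : (∀ ε > 0, ∀ᶠ n in atTop, |x n (bn n) - y b| < ε) ∧
      (∀ ε > 0, ∀ᶠ n in atTop, ∀ u ∈ Set.Icc (0:ℝ) 1, bn n ≤ u →
        u ≤ bn n + ((⨆ t : Set.Icc (0:ℝ) 1, |lam n (t:ℝ) - (t:ℝ)|) + |bn n - b| + ((n:ℝ)+1)⁻¹) →
        |y (lam n u) - y b| < ε) := by
    rcases hcase with hcont | ⟨hΔ, hjconv⟩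
    · -- continuity case
      have hcm : ∀ ε > 0, ∃ δ > 0, ∀ u ∈ Set.Icc (0:ℝ) 1, |u - b| < δ → |y u - y b| < ε := by
        intro ε hε
        have h := hcont (Metric.ball_mem_nhds (y b) hε)
        rw [Filter.mem_map, Metric.mem_nhdsWithin_iff] at h
        obtain ⟨δ, hδ0, hsub⟩ := h
        refine ⟨δ, hδ0, fun u hu hd => ?_⟩
        have hmem : u ∈ Metric.ball b δ ∩ Set.Icc 0 1 := ⟨by simpa [Real.dist_eq] using hd, hu⟩
        simpa [Real.dist_eq] using hsub hmem
      constructor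
      · intro ε hε
        obtain ⟨δ, hδ0, hδ⟩ := hcm (ε/2) (by positivity)
        have hT : Tendsto (fun n => (⨆ t : Set.Icc (0:ℝ) 1, |lam n (t:ℝ) - (t:ℝ)|)
            + |bn n - b|) atTop (nhds 0) := by simpa using hs1.add hdlim
        have hev1 := hT.eventually_lt_const hδ0
        have hev2 : ∀ᶠ n in atTop,
            (⨆ t : Set.Icc (0:ℝ) 1, |x n (t:ℝ) - y (lam n (t:ℝ))|) < ε/2 :=
          hs2.eventually_lt_const (by positivity)
        filter_upwards [hev1, hev2] with n h1 h2
        have hc1 := pw2 n (bn n) (hbnI n)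
        have hcd : |lam n (bn n) - b| < δ := by
          have ht := abs_sub_le (lam n (bn n)) (bn n) b
          have := pw1 n (bn n) (hbnI n)
          linarith
        have hym := hδ (lam n (bn n)) ((hlam n).2.2.2.2.1 (hbnI n)) hcd
        have := abs_sub_le (x n (bn n)) (y (lam n (bn n))) (y b)
        linarith
      · intro ε hε
        obtain ⟨δ, hδ0, hδ⟩ := hcm ε hε
        have hev : ∀ᶠ n in atTop, (⨆ t : Set.Icc (0:ℝ) 1, |lam n (t:ℝ) - (t:ℝ)|) + (|bn n - b| +
            ((⨆ t : Set.Icc (0:ℝ) 1, |lam n (t:ℝ) - (t:ℝ)|) + |bn n - b| + ((n:ℝ)+1)⁻¹)) < δ := by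
          have h := hs1.add (hdlim.add hwlim)
          have h2 : Tendsto (fun n => (⨆ t : Set.Icc (0:ℝ) 1, |lam n (t:ℝ) - (t:ℝ)|) + (|bn n - b| +
            ((⨆ t : Set.Icc (0:ℝ) 1, |lam n (t:ℝ) - (t:ℝ)|) + |bn n - b| + ((n:ℝ)+1)⁻¹)))
            atTop (nhds 0) := by simpa using h
          exact h2.eventually_lt_const hδ0
        filter_upwards [hev] with n h1 u hu hbu huw
        apply hδ (lam n u) ((hlam n).2.2.2.2.1 hu)
        have ht1 := abs_sub_le (lam n u) u b
        have ht2 := abs_sub_le u (bn n) b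
        have ht3 : |u - bn n| ≤ (⨆ t : Set.Icc (0:ℝ) 1, |lam n (t:ℝ) - (t:ℝ)|) + |bn n - b| +
            ((n:ℝ)+1)⁻¹ := by
          rw [abs_of_nonneg (by linarith)]
          linarith
        have := pw1 n u hu
        linarith
    · -- jump case
      have hΔpos : 0 < |jump y b| := abs_pos.2 hΔ
      obtain ⟨η, hη0, hiso⟩ := jump_isolated hyc hb (show 0 < |jump y b|/2 by positivity)
      have hev1 : ∀ᶠ n in atTop, 0 < bn n := hbnlim.eventually_const_lt hb.1
      have hev2 : ∀ᶠ n in atTop, (⨆ t : Set.Icc (0:ℝ) 1, |lam n (t:ℝ) - (t:ℝ)|)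
          + |bn n - b| < η := by
        have h : Tendsto (fun n => (⨆ t : Set.Icc (0:ℝ) 1, |lam n (t:ℝ) - (t:ℝ)|) + |bn n - b|)
            atTop (nhds 0) := by simpa using hs1.add hdlim
        exact h.eventually_lt_const hη0
      have hev3 : ∀ᶠ n in atTop,
          2 * (⨆ t : Set.Icc (0:ℝ) 1, |x n (t:ℝ) - y (lam n (t:ℝ))|) < |jump y b|/4 := by
        have h : Tendsto (fun n => 2 * (⨆ t : Set.Icc (0:ℝ) 1, |x n (t:ℝ) - y (lam n (t:ℝ))|))
            atTop (nhds 0) := by simpa using hs2.const_mul 2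
        exact h.eventually_lt_const (by positivity)
      have hev4 : ∀ᶠ n in atTop, |jump (x n) (bn n) - jump y b| < |jump y b|/4 := by
        have h := hjconv (Metric.ball_mem_nhds (jump y b) (show 0 < |jump y b|/4 by positivity))
        filter_upwards [h] with n hn
        simpa [Real.dist_eq] using hn
      have halign : ∀ᶠ n in atTop, lam n (bn n) = b := by
        filter_upwards [hev1, hev2, hev3, hev4] with n h1 h2 h3 h4
        have hjc := jump_close (hxc n) hyc (hlam n).1 (hlam n).2.1 (hlam n).2.2.1
          (hlam n).2.2.2.2.1 (⟨h1, (hbn n).2⟩ : bn n ∈ Set.Ioo (0:ℝ) 1) (pw2 n)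
        by_contra hne
        have hcI : lam n (bn n) ∈ Set.Icc (0:ℝ) 1 := (hlam n).2.2.2.2.1 (hbnI n)
        have hcd : |lam n (bn n) - b| < η := by
          have ht := abs_sub_le (lam n (bn n)) (bn n) b
          have := pw1 n (bn n) (hbnI n)
          linarith
        have hbnd := hiso (lam n (bn n)) hcI hne hcd
        have habs1 := abs_sub_abs_le_abs_sub (jump y b) (jump y (lam n (bn n)))
        have habs2 : |jump y b - jump y (lam n (bn n))| ≤
            |jump y b - jump (x n) (bn n)| + |jump (x n) (bn n) - jump y (lam n (bn n))| :=
          abs_sub_le _ _ _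
        rw [abs_sub_comm] at h4
        linarith
      constructor
      · intro ε hε
        filter_upwards [halign, hs2.eventually_lt_const hε] with n h1 h2
        have := pw2 n (bn n) (hbnI n)
        rw [h1] at this
        linarith
      · intro ε hε
        obtain ⟨δr, hδr0, hδr⟩ := hosc ε hε
        have hev : ∀ᶠ n in atTop, (⨆ t : Set.Icc (0:ℝ) 1, |lam n (t:ℝ) - (t:ℝ)|) + (|bn n - b| +
            ((⨆ t : Set.Icc (0:ℝ) 1, |lam n (t:ℝ) - (t:ℝ)|) + |bn n - b| + ((n:ℝ)+1)⁻¹)) < δr := by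
          have h := hs1.add (hdlim.add hwlim)
          have h2 : Tendsto (fun n => (⨆ t : Set.Icc (0:ℝ) 1, |lam n (t:ℝ) - (t:ℝ)|) + (|bn n - b| +
            ((⨆ t : Set.Icc (0:ℝ) 1, |lam n (t:ℝ) - (t:ℝ)|) + |bn n - b| + ((n:ℝ)+1)⁻¹)))
            atTop (nhds 0) := by simpa using h
          exact h2.eventually_lt_const hδr0
        filter_upwards [halign, hev] with n ha h1 u hu hbu huw
        have hblam : b ≤ lam n u := by
          have := (hlam n).2.1.monotoneOn (hbnI n) hu hbu
          rwa [ha] at this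
        apply hδr (lam n u) ((hlam n).2.2.2.2.1 hu) hblam
        have ht1 := abs_sub_le (lam n u) u b
        have ht2 := abs_sub_le u (bn n) b
        have ht3 : |u - bn n| ≤ (⨆ t : Set.Icc (0:ℝ) 1, |lam n (t:ℝ) - (t:ℝ)|) + |bn n - b| +
            ((n:ℝ)+1)⁻¹ := by
          rw [abs_of_nonneg (by linarith)]
          linarith
        have := pw1 n u hu
        linarith
  exact construction x y b hb bn hbn lam hlam
    (fun n => ⨆ t : Set.Icc (0:ℝ) 1, |lam n (t:ℝ) - (t:ℝ)|)
    (fun n => ⨆ t : Set.Icc (0:ℝ) 1, |x n (t:ℝ) - y (lam n (t:ℝ))|)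
    hs1 hs2 hbnlim pw1 pw2
    (fun n => (⨆ t : Set.Icc (0:ℝ) 1, |lam n (t:ℝ) - (t:ℝ)|) + |bn n - b| + ((n:ℝ)+1)⁻¹)
    (fun n => ((⨆ t : Set.Icc (0:ℝ) 1, |lam n (t:ℝ) - (t:ℝ)|) + |bn n - b| + ((n:ℝ)+1)⁻¹)
      / (1 - bn n))
    (fun n t => bn n + (1 - bn n) * t)
    (fun n t => (lam n (bn n + (1 - bn n) * t) - b) / (1 - b))
    (fun n => rfl) (fun n => rfl) (fun n t => rfl) (fun n t => rfl)
    hosc key.1 key.2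
end

section
/- Let x_n, x : [0,1] → ℝ be càdlàg functions with x_n → x in the Skorokhod sense, let 0 ≤ s < t ≤ 1 be such that x is continuous at s and at t, and let s_n → s, t_n → t with 0 ≤ s_n ≤ t_n ≤ 1. Then inf_{u ∈ [s_n, t_n]} x_n(u) → inf_{u ∈ [s,t]} x(u) as n → ∞. -/
open Filter Topology

lemma cadlag_bounded {y : ℝ → ℝ} (h : Cadlag y) :
    ∃ M : ℝ, ∀ u ∈ Set.Icc (0:ℝ) 1, |y u| ≤ M := by
  have key : ∀ x ∈ Set.Icc (0:ℝ) 1, ∃ M : ℝ, ∀ᶠ u in nhdsWithin x (Set.Icc (0:ℝ) 1), |y u| ≤ M := by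
    intro x hx
    have hright : x < 1 → ∀ᶠ u in nhdsWithin x (Set.Ici x), |y u| ≤ |y x| + 1 := by
      intro hx1
      have hc := h.1 x ⟨hx.1, hx1⟩
      have := Metric.tendsto_nhds.mp hc 1 one_pos
      filter_upwards [this] with u hu
      rw [Real.dist_eq] at hu
      calc |y u| ≤ |y u - y x| + |y x| := by
            simpa using abs_add_le (y u - y x) (y x)
        _ ≤ |y x| + 1 := by linarith [le_of_lt hu]
    have hleft : 0 < x → ∃ C : ℝ, ∀ᶠ u in nhdsWithin x (Set.Iio x), |y u| ≤ C := by
      intro hx0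
      obtain ⟨L, hL⟩ := h.2 x ⟨hx0, hx.2⟩
      have := Metric.tendsto_nhds.mp hL 1 one_pos
      refine ⟨|L| + 1, ?_⟩
      filter_upwards [this] with u hu
      rw [Real.dist_eq] at hu
      calc |y u| ≤ |y u - L| + |L| := by simpa using abs_add_le (y u - L) L
        _ ≤ |L| + 1 := by linarith [le_of_lt hu]
    rcases eq_or_lt_of_le hx.1 with h0 | h0
    · refine ⟨|y x| + 1, ?_⟩
      have hm : nhdsWithin x (Set.Icc (0:ℝ) 1) ≤ nhdsWithin x (Set.Ici x) := by
        apply nhdsWithin_mono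
        intro u hu; rw [← h0]; exact hu.1
      exact hm (hright (by rw [← h0]; norm_num))
    · rcases eq_or_lt_of_le hx.2 with h1 | h1
      · obtain ⟨C, hC⟩ := hleft h0
        refine ⟨max C (|y x|), ?_⟩
        have hsplit : nhdsWithin x (Set.Icc (0:ℝ) 1) ≤
            nhdsWithin x (Set.Iio x) ⊔ pure x := by
          have h2 : nhdsWithin x (Set.Icc (0:ℝ) 1) ≤ nhdsWithin x (Set.Iic x) := by
            apply nhdsWithin_mono; intro u hu; exact hu.2.trans (le_of_eq h1.symm)
          have h3 : Set.Iic x = Set.Iio x ∪ {x} := (Set.Iio_union_right).symm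
          rw [h3] at h2
          rw [nhdsWithin_union, nhdsWithin_singleton] at h2
          exact h2
        have : ∀ᶠ u in nhdsWithin x (Set.Iio x) ⊔ pure x, |y u| ≤ max C (|y x|) := by
          rw [eventually_sup]
          constructor
          · filter_upwards [hC] with u hu; exact le_max_of_le_left hu
          · rw [eventually_pure]; exact le_max_right _ _
        exact hsplit this
      · obtain ⟨C, hC⟩ := hleft h0
        refine ⟨max C (|y x| + 1), ?_⟩
        have hsplit : nhdsWithin x (Set.Icc (0:ℝ) 1) ≤
            nhdsWithin x (Set.Iio x) ⊔ nhdsWithin x (Set.Ici x) := by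
          refine le_trans (nhdsWithin_mono x (Set.subset_univ _)) ?_
          rw [nhdsWithin_univ]
          have : 𝓝 x = nhdsWithin x (Set.Iio x ∪ Set.Ici x) := by
            rw [Set.Iio_union_Ici, nhdsWithin_univ]
          rw [this, nhdsWithin_union]
        have : ∀ᶠ u in nhdsWithin x (Set.Iio x) ⊔ nhdsWithin x (Set.Ici x),
            |y u| ≤ max C (|y x| + 1) := by
          rw [eventually_sup]
          constructor
          · filter_upwards [hC] with u hu; exact le_max_of_le_left hu
          · filter_upwards [hright h1] with u hu; exact le_max_of_le_right hu
        exact hsplit this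
  have := (isCompact_Icc : IsCompact (Set.Icc (0:ℝ) 1)).induction_on
    (p := fun S => ∃ M : ℝ, ∀ u ∈ S, |y u| ≤ M)
    ⟨0, by simp⟩
    (fun S T hST ⟨M, hM⟩ => ⟨M, fun u hu => hM u (hST hu)⟩)
    (fun S T ⟨M1, h1⟩ ⟨M2, h2⟩ => ⟨max M1 M2, fun u hu => hu.elim
      (fun h => le_max_of_le_left (h1 u h)) (fun h => le_max_of_le_right (h2 u h))⟩)
    (fun x hx => by
      obtain ⟨M, hM⟩ := key x hx
      exact ⟨{u | |y u| ≤ M}, hM, M, fun u hu => hu⟩)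
  exact this

lemma inf_tendsto {y : ℝ → ℝ} {M : ℝ} (hb : ∀ u ∈ Set.Icc (0:ℝ) 1, |y u| ≤ M)
    (s t : ℝ) (hs : 0 ≤ s) (hst : s < t) (ht : t ≤ 1)
    (hcs : ContinuousWithinAt y (Set.Icc 0 1) s)
    (hct : ContinuousWithinAt y (Set.Icc 0 1) t)
    (a b : ℕ → ℝ) (hab : ∀ n, 0 ≤ a n ∧ a n ≤ b n ∧ b n ≤ 1)
    (ha : Tendsto a atTop (nhds s)) (hbt : Tendsto b atTop (nhds t)) :
    Tendsto (fun n => sInf (y '' Set.Icc (a n) (b n))) atTop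
      (nhds (sInf (y '' Set.Icc s t))) := by
  set m := sInf (y '' Set.Icc s t) with hm
  have hsub : ∀ n, Set.Icc (a n) (b n) ⊆ Set.Icc (0:ℝ) 1 := fun n =>
    Set.Icc_subset_Icc (hab n).1 (hab n).2.2
  have hbddn : ∀ n, BddBelow (y '' Set.Icc (a n) (b n)) := fun n =>
    ⟨-M, by rintro _ ⟨u, hu, rfl⟩; exact neg_le_of_abs_le (hb u (hsub n hu))⟩
  have hnen : ∀ n, (y '' Set.Icc (a n) (b n)).Nonempty := fun n =>
    ⟨y (a n), ⟨a n, Set.left_mem_Icc.2 (hab n).2.1, rfl⟩⟩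
  have hstsub : Set.Icc s t ⊆ Set.Icc (0:ℝ) 1 := Set.Icc_subset_Icc hs ht
  have hbdd : BddBelow (y '' Set.Icc s t) :=
    ⟨-M, by rintro _ ⟨u, hu, rfl⟩; exact neg_le_of_abs_le (hb u (hstsub hu))⟩
  have hne : (y '' Set.Icc s t).Nonempty := ⟨y s, ⟨s, Set.left_mem_Icc.2 hst.le, rfl⟩⟩
  rw [Metric.tendsto_atTop]
  intro ε₀ hε₀
  have hε : (0:ℝ) < ε₀/2 := by linarith
  set ε : ℝ := ε₀/2 with hεdef
  have hε2 : (0:ℝ) < ε / 2 := by positivity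
  -- continuity moduli
  obtain ⟨δ1, hδ1pos, hδ1⟩ := Metric.continuousWithinAt_iff.mp hcs (ε/2) hε2
  obtain ⟨δ2, hδ2pos, hδ2⟩ := Metric.continuousWithinAt_iff.mp hct (ε/2) hε2
  set δ : ℝ := min δ1 δ2 with hδ
  have hδpos : 0 < δ := lt_min hδ1pos hδ2pos
  -- lower bound : eventually ∀ u ∈ [a n, b n], y u ≥ m - ε
  have hys : m ≤ y s := csInf_le hbdd ⟨s, Set.left_mem_Icc.2 hst.le, rfl⟩
  have hyt : m ≤ y t := csInf_le hbdd ⟨t, Set.right_mem_Icc.2 hst.le, rfl⟩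
  have hlow : ∀ᶠ n in atTop, m - ε ≤ sInf (y '' Set.Icc (a n) (b n)) := by
    filter_upwards [ha (Metric.ball_mem_nhds s hδpos), hbt (Metric.ball_mem_nhds t hδpos)]
      with n han hbn
    refine le_csInf (hnen n) ?_
    rintro _ ⟨u, hu, rfl⟩
    have hu01 : u ∈ Set.Icc (0:ℝ) 1 := hsub n hu
    rcases lt_or_ge u s with hus | hsu
    · -- u < s, close to s
      have han' : |a n - s| < δ := by simpa [Metric.mem_ball, Real.dist_eq] using han
      have hdist : dist u s < δ1 := by
        rw [Real.dist_eq, abs_of_nonpos (by linarith)]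
        have hδδ1 : δ ≤ δ1 := min_le_left _ _
        cases' abs_lt.mp han' with h1 h2
        linarith [hu.1]
      have := hδ1 hu01 hdist
      rw [Real.dist_eq] at this
      have := abs_lt.mp this
      linarith [this.1]
    · rcases le_or_gt u t with hut | htu
      · -- u ∈ [s,t]
        have : m ≤ y u := csInf_le hbdd ⟨u, ⟨hsu, hut⟩, rfl⟩
        linarith
      · -- u > t, close to t
        have hdist : dist u t < δ2 := by
          rw [Real.dist_eq, abs_of_nonneg (by linarith)]
          have hbn' : |b n - t| < δ := by simpa [Metric.mem_ball, Real.dist_eq] using hbn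
          have hδδ2 : δ ≤ δ2 := min_le_right _ _
          cases' abs_lt.mp hbn' with h1 h2
          linarith [hu.2]
        have := hδ2 hu01 hdist
        rw [Real.dist_eq] at this
        have := abs_lt.mp this
        linarith [this.1]
  -- upper bound: find a point u1 ∈ (s,t) with y u1 < m + ε
  have hupt : ∃ u1, s < u1 ∧ u1 < t ∧ y u1 < m + ε := by
    obtain ⟨v, hv, hvlt⟩ := exists_lt_of_csInf_lt hne (by linarith : m < m + ε/2)
    obtain ⟨u0, hu0, rfl⟩ := hv
    rcases eq_or_lt_of_le hu0.1 with hes | hlt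
    · -- u0 = s
      refine ⟨min (s + δ1/2) ((s+t)/2), ?_, ?_, ?_⟩
      · exact lt_min (by linarith) (by linarith)
      · exact min_lt_of_right_lt (by linarith)
      · have hu1 : min (s + δ1/2) ((s+t)/2) ∈ Set.Icc (0:ℝ) 1 := by
          constructor
          · refine le_trans hs (le_of_lt (lt_min (by linarith) (by linarith)))
          · exact le_trans (le_of_lt (min_lt_of_right_lt (by linarith))) ht
        have hd : dist (min (s + δ1/2) ((s+t)/2)) s < δ1 := by
          rw [Real.dist_eq, abs_of_nonneg (by
            have := lt_min (show s < s + δ1/2 by linarith) (show s < (s+t)/2 by linarith)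
            linarith)]
          have : min (s + δ1/2) ((s+t)/2) ≤ s + δ1/2 := min_le_left _ _
          linarith
        have := hδ1 hu1 hd
        rw [Real.dist_eq] at this
        have := abs_lt.mp this
        rw [← hes] at hvlt
        linarith [this.2]
    · rcases eq_or_lt_of_le hu0.2 with het | hlt2
      · -- u0 = t
        refine ⟨max (t - δ2/2) ((s+t)/2), ?_, ?_, ?_⟩
        · exact lt_max_of_lt_right (by linarith)
        · exact max_lt (by linarith) (by linarith)
        · have hu1 : max (t - δ2/2) ((s+t)/2) ∈ Set.Icc (0:ℝ) 1 := by
            constructor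
            · refine le_trans hs (le_of_lt (lt_max_of_lt_right (by linarith)))
            · exact le_trans (le_of_lt (max_lt (by linarith) (by linarith))) ht
          have hd : dist (max (t - δ2/2) ((s+t)/2)) t < δ2 := by
            rw [Real.dist_eq, abs_of_nonpos (by
              have := max_lt (show t - δ2/2 < t by linarith) (show (s+t)/2 < t by linarith)
              linarith)]
            have : t - δ2/2 ≤ max (t - δ2/2) ((s+t)/2) := le_max_left _ _
            linarith
          have := hδ2 hu1 hd
          rw [Real.dist_eq] at this
          have := abs_lt.mp this
          rw [het] at hvlt
          linarith [this.2]
      · exact ⟨u0, hlt, hlt2, by linarith⟩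
  obtain ⟨u1, hu1s, hu1t, hu1y⟩ := hupt
  have hupp : ∀ᶠ n in atTop, sInf (y '' Set.Icc (a n) (b n)) ≤ m + ε := by
    filter_upwards [ha (Iio_mem_nhds hu1s), hbt (Ioi_mem_nhds hu1t)] with n han hbn
    have : sInf (y '' Set.Icc (a n) (b n)) ≤ y u1 :=
      csInf_le (hbddn n) ⟨u1, ⟨le_of_lt han, le_of_lt hbn⟩, rfl⟩
    linarith
  obtain ⟨N, hN⟩ := (hlow.and hupp).exists_forall_of_atTop
  refine ⟨N, fun n hn => ?_⟩
  obtain ⟨h1, h2⟩ := hN n hn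
  rw [Real.dist_eq, abs_lt]
  constructor <;> [skip; skip] <;>
    simp only [hεdef] at h1 h2 ⊢ <;> linarith

/-- If `x n → y` in the Skorokhod sense, `0 ≤ s < t ≤ 1` with `y` continuous at `s` and
`t`, and `s_n → s`, `t_n → t` with `0 ≤ s_n ≤ t_n ≤ 1`, then
`inf_{[s_n,t_n]} x n → inf_{[s,t]} y`. -/
theorem stmt11 (x : ℕ → ℝ → ℝ) (y : ℝ → ℝ)
    (hxc : ∀ n, Cadlag (x n)) (hyc : Cadlag y)
    (hconv : SkorokhodTendsto x y)
    (s t : ℝ) (hs : 0 ≤ s) (hst : s < t) (ht : t ≤ 1)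
    (hcs : ContinuousWithinAt y (Set.Icc 0 1) s)
    (hct : ContinuousWithinAt y (Set.Icc 0 1) t)
    (sn tn : ℕ → ℝ) (hrange : ∀ n, 0 ≤ sn n ∧ sn n ≤ tn n ∧ tn n ≤ 1)
    (hsn : Filter.Tendsto sn Filter.atTop (nhds s))
    (htn : Filter.Tendsto tn Filter.atTop (nhds t)) :
    Filter.Tendsto (fun n => ⨅ u : Set.Icc (sn n) (tn n), x n (u : ℝ)) Filter.atTop
      (nhds (⨅ u : Set.Icc s t, y (u : ℝ))) := by
  obtain ⟨M, hM⟩ := cadlag_bounded hyc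
  have hMx' : ∀ n, ∃ C : ℝ, ∀ u ∈ Set.Icc (0:ℝ) 1, |x n u| ≤ C :=
    fun n => cadlag_bounded (hxc n)
  choose Mx hMx using hMx'
  obtain ⟨lam, hlam, hη, hεs⟩ := hconv
  set a : ℕ → ℝ := fun n => lam n (sn n) with ha_def
  set b : ℕ → ℝ := fun n => lam n (tn n) with hb_def
  have hsn01 : ∀ n, sn n ∈ Set.Icc (0:ℝ) 1 :=
    fun n => ⟨(hrange n).1, (hrange n).2.1.trans (hrange n).2.2⟩
  have htn01 : ∀ n, tn n ∈ Set.Icc (0:ℝ) 1 :=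
    fun n => ⟨(hrange n).1.trans (hrange n).2.1, (hrange n).2.2⟩
  have hsubn : ∀ n, Set.Icc (sn n) (tn n) ⊆ Set.Icc (0:ℝ) 1 :=
    fun n => Set.Icc_subset_Icc (hrange n).1 (hrange n).2.2
  have hab : ∀ n, 0 ≤ a n ∧ a n ≤ b n ∧ b n ≤ 1 := fun n =>
    ⟨((hlam n).2.2.2.2.1 (hsn01 n)).1,
     (hlam n).2.1.monotoneOn (hsn01 n) (htn01 n) (hrange n).2.1,
     ((hlam n).2.2.2.2.1 (htn01 n)).2⟩
  -- image equality
  have himg : ∀ n, lam n '' Set.Icc (sn n) (tn n) = Set.Icc (a n) (b n) := by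
    intro n
    apply Set.Subset.antisymm
    · rintro _ ⟨u, hu, rfl⟩
      exact ⟨(hlam n).2.1.monotoneOn (hsn01 n) (hsubn n hu) hu.1,
             (hlam n).2.1.monotoneOn (hsubn n hu) (htn01 n) hu.2⟩
    · exact intermediate_value_Icc (hrange n).2.1 ((hlam n).1.mono (hsubn n))
  -- pointwise sup bounds
  have hηbd : ∀ n, ∀ u ∈ Set.Icc (0:ℝ) 1,
      |lam n u - u| ≤ ⨆ t : Set.Icc (0:ℝ) 1, |lam n (t:ℝ) - (t:ℝ)| := by
    intro n u hu
    refine le_ciSup (f := fun t : Set.Icc (0:ℝ) 1 => |lam n (t:ℝ) - (t:ℝ)|) ⟨2, ?_⟩ (⟨u, hu⟩ : Set.Icc (0:ℝ) 1)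
    rintro _ ⟨v, rfl⟩
    have h1 := (hlam n).2.2.2.2.1 v.2
    have h2 := v.2
    calc |lam n ↑v - ↑v| ≤ |lam n ↑v| + |(v:ℝ)| := abs_sub _ _
      _ ≤ 1 + 1 := add_le_add (abs_le.2 ⟨by linarith [h1.1], h1.2⟩)
          (abs_le.2 ⟨by linarith [h2.1], h2.2⟩)
      _ = 2 := by norm_num
  have hEbd : ∀ n, ∀ u ∈ Set.Icc (0:ℝ) 1,
      |x n u - y (lam n u)| ≤ ⨆ t : Set.Icc (0:ℝ) 1, |x n (t:ℝ) - y (lam n (t:ℝ))| := by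
    intro n u hu
    refine le_ciSup (f := fun t : Set.Icc (0:ℝ) 1 => |x n (t:ℝ) - y (lam n (t:ℝ))|) ⟨Mx n + M, ?_⟩ (⟨u, hu⟩ : Set.Icc (0:ℝ) 1)
    rintro _ ⟨v, rfl⟩
    calc |x n ↑v - y (lam n ↑v)| ≤ |x n ↑v| + |y (lam n ↑v)| := abs_sub _ _
      _ ≤ Mx n + M := add_le_add (hMx n _ v.2) (hM _ ((hlam n).2.2.2.2.1 v.2))
  -- a → s, b → t
  have haT : Tendsto a atTop (nhds s) := by
    rw [tendsto_iff_dist_tendsto_zero]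
    refine squeeze_zero (fun n => dist_nonneg) (fun n => ?_)
      (by simpa using hη.add (tendsto_iff_dist_tendsto_zero.mp hsn))
    calc dist (a n) s ≤ dist (a n) (sn n) + dist (sn n) s := dist_triangle _ _ _
      _ ≤ (⨆ t : Set.Icc (0:ℝ) 1, |lam n (t:ℝ) - (t:ℝ)|) + dist (sn n) s := by
          refine add_le_add_left ?_ _
          rw [Real.dist_eq]
          exact hηbd n (sn n) (hsn01 n)
  have hbT : Tendsto b atTop (nhds t) := by
    rw [tendsto_iff_dist_tendsto_zero]
    refine squeeze_zero (fun n => dist_nonneg) (fun n => ?_)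
      (by simpa using hη.add (tendsto_iff_dist_tendsto_zero.mp htn))
    calc dist (b n) t ≤ dist (b n) (tn n) + dist (tn n) t := dist_triangle _ _ _
      _ ≤ (⨆ t : Set.Icc (0:ℝ) 1, |lam n (t:ℝ) - (t:ℝ)|) + dist (tn n) t := by
          refine add_le_add_left ?_ _
          rw [Real.dist_eq]
          exact hηbd n (tn n) (htn01 n)
  have hA := inf_tendsto hM s t hs hst ht hcs hct a b hab haT hbT
  -- rewrite iInf as sInf
  have hrw : ∀ n, (⨅ u : Set.Icc (sn n) (tn n), x n (u:ℝ))
      = sInf (x n '' Set.Icc (sn n) (tn n)) := by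
    intro n; rw [Set.image_eq_range]; rfl
  have hrw2 : (⨅ u : Set.Icc s t, y (u:ℝ)) = sInf (y '' Set.Icc s t) := by
    rw [Set.image_eq_range]; rfl
  set E : ℕ → ℝ := fun n => ⨆ t : Set.Icc (0:ℝ) 1, |x n (t:ℝ) - y (lam n (t:ℝ))| with hE_def
  set A : ℕ → ℝ := fun n => sInf (y '' Set.Icc (a n) (b n)) with hA_def
  set I : ℕ → ℝ := fun n => sInf (x n '' Set.Icc (sn n) (tn n)) with hI_def
  have hbddy : ∀ n, BddBelow (y '' Set.Icc (a n) (b n)) := by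
    intro n
    refine ⟨-M, ?_⟩
    rintro _ ⟨u, hu, rfl⟩
    exact neg_le_of_abs_le (hM u (Set.Icc_subset_Icc (hab n).1 (hab n).2.2 hu))
  have hney : ∀ n, (y '' Set.Icc (a n) (b n)).Nonempty := fun n =>
    ⟨y (a n), ⟨a n, Set.left_mem_Icc.2 (hab n).2.1, rfl⟩⟩
  have hbddx : ∀ n, BddBelow (x n '' Set.Icc (sn n) (tn n)) := by
    intro n
    refine ⟨-(Mx n), ?_⟩
    rintro _ ⟨u, hu, rfl⟩
    exact neg_le_of_abs_le (hMx n u (hsubn n hu))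
  have hnex : ∀ n, (x n '' Set.Icc (sn n) (tn n)).Nonempty := fun n =>
    ⟨x n (sn n), ⟨sn n, Set.left_mem_Icc.2 (hrange n).2.1, rfl⟩⟩
  have hcomp : ∀ n, A n - E n ≤ I n ∧ I n ≤ A n + E n := by
    intro n
    constructor
    · refine le_csInf (hnex n) ?_
      rintro _ ⟨u, hu, rfl⟩
      have h1 : |x n u - y (lam n u)| ≤ E n := hEbd n u (hsubn n hu)
      have h2 : A n ≤ y (lam n u) := csInf_le (hbddy n)
        ⟨lam n u, by rw [← himg n]; exact ⟨u, hu, rfl⟩, rfl⟩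
      have := abs_le.mp h1
      linarith [this.1]
    · have : I n - E n ≤ A n := by
        refine le_csInf (hney n) ?_
        rintro _ ⟨v, hv, rfl⟩
        rw [← himg n] at hv
        obtain ⟨u, hu, rfl⟩ := hv
        have h1 : |x n u - y (lam n u)| ≤ E n := hEbd n u (hsubn n hu)
        have h2 : I n ≤ x n u := csInf_le (hbddx n) ⟨u, hu, rfl⟩
        have := abs_le.mp h1
        linarith [this.2]
      linarith
  have hfinal : Tendsto I atTop (nhds (sInf (y '' Set.Icc s t))) := by
    refine tendsto_of_tendsto_of_tendsto_of_le_of_le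
      (g := fun n => A n - E n) (h := fun n => A n + E n)
      (by simpa using hA.sub hεs) (by simpa using hA.add hεs)
      (fun n => (hcomp n).1) (fun n => (hcomp n).2)
  rw [hrw2, show (fun n => ⨅ u : Set.Icc (sn n) (tn n), x n (u:ℝ)) = I from funext hrw]
  exact hfinal
end

section
/- For a càdlàg function y : [0,1] → ℝ with y(0) = y(1) = 0, let ρ_y = inf{ t > 0 : min(y(t−), y(t)) = inf_{s∈[0,1]} y(s) } and define the Vervaat transform V(y) : [0,1] → ℝ by V(y)(t) = y((ρ_y + t) mod 1) − min(y(ρ_y−), y(ρ_y)) for 0 ≤ t < 1, and V(y)(1) = lim_{t↑1} V(y)(t). Suppose y_n, y : [0,1] → ℝ are càdlàg with y_n(0) = y_n(1) = 0 and y(0) = y(1) = 0, that y attains the value inf_{[0,1]} y (in the sense min(y(t−), y(t)) = inf y) at exactly one point ρ_y ∈ [0,1], that y is continuous at ρ_y, and that y_n → y in the Skorokhod sense. Then V(y_n) → V(y) in the Skorokhod sense. -/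
open Filter Topology

/-- The infimum of a path over `[0,1]`. -/
noncomputable def runMin01 (y : ℝ → ℝ) : ℝ := ⨅ s : Set.Icc (0 : ℝ) 1, y (s : ℝ)

/-- The first infimum point `ρ_y = inf{t > 0 : min(y(t−), y(t)) = inf_{[0,1]} y}`. -/
noncomputable def infPt (y : ℝ → ℝ) : ℝ :=
  sInf {t : ℝ | 0 < t ∧ min (leftVal y t) (y t) = runMin01 y}

/-- `V(y)(t)` for `t ∈ [0,1)`, with splitting point `ρ`:
`y((ρ+t) mod 1) − min(y(ρ−), y(ρ))`. -/
noncomputable def vervaatAux (y : ℝ → ℝ) (ρ : ℝ) (t : ℝ) : ℝ :=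
  (if ρ + t ≤ 1 then y (ρ + t) else y (ρ + t - 1)) - min (leftVal y ρ) (y ρ)

/-- The Vervaat transform, extended to `t = 1` by its left limit. -/
noncomputable def vervaat (y : ℝ → ℝ) : ℝ → ℝ := fun t =>
  if t < 1 then vervaatAux y (infPt y) t
  else limUnder (nhdsWithin 1 (Set.Iio 1)) (vervaatAux y (infPt y))

open Set

open Filter Topology Set

lemma goodE (k : ℕ) : (0:ℝ) < 1 / (k+1) := by positivity

lemma tendsto_leftVal {x : ℝ → ℝ} (hx : Cadlag x) {t : ℝ} (ht : t ∈ Ioc (0:ℝ) 1) :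
    Tendsto x (𝓝[Iio t] t) (𝓝 (leftVal x t)) := by
  obtain ⟨L, hL⟩ := hx.2 t ht
  have : leftVal x t = L := by
    rw [leftVal, if_neg (by linarith [ht.1])]
    exact hL.limUnder_eq
  rw [this]; exact hL

lemma leftVal_eq_of_tendsto {x : ℝ → ℝ} {t L : ℝ} (ht : 0 < t)
    (h : Tendsto x (𝓝[Iio t] t) (𝓝 L)) : leftVal x t = L := by
  rw [leftVal, if_neg (by linarith)]
  exact h.limUnder_eq

lemma cadlag_cluster {x : ℝ → ℝ} (hx : Cadlag x) (u : ℕ → ℝ) (hu : ∀ k, u k ∈ Icc (0:ℝ) 1) :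
    ∃ t ∈ Icc (0:ℝ) 1, ∃ φ : ℕ → ℕ, StrictMono φ ∧ Tendsto (u ∘ φ) atTop (𝓝 t) ∧
      (Tendsto (fun k => x (u (φ k))) atTop (𝓝 (x t)) ∨
       (0 < t ∧ Tendsto (fun k => x (u (φ k))) atTop (𝓝 (leftVal x t)))) := by
  obtain ⟨t, htI, ψ, hψ, hten⟩ := (isCompact_Icc (a := (0:ℝ)) (b := 1)).tendsto_subseq hu
  have hsplit : (∃ᶠ k in atTop, u (ψ k) < t) ∨ ∃ᶠ k in atTop, t ≤ u (ψ k) := by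
    rw [← frequently_or_distrib]
    exact Frequently.of_forall (fun k => lt_or_ge _ _)
  rcases hsplit with hfreq | hfreq
  · obtain ⟨ψ', hψ', hP⟩ := extraction_of_frequently_atTop hfreq
    refine ⟨t, htI, ψ ∘ ψ', hψ.comp hψ', hten.comp hψ'.tendsto_atTop, Or.inr ?_⟩
    have ht0 : 0 < t := lt_of_le_of_lt (hu (ψ (ψ' 0))).1 (hP 0)
    constructor
    · exact ht0
    · have h1 : Tendsto (u ∘ ψ ∘ ψ') atTop (𝓝[Iio t] t) := by
        rw [tendsto_nhdsWithin_iff]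
        exact ⟨hten.comp hψ'.tendsto_atTop, Eventually.of_forall (fun k => hP k)⟩
      exact (tendsto_leftVal hx ⟨ht0, htI.2⟩).comp h1
  · obtain ⟨ψ', hψ', hP⟩ := extraction_of_frequently_atTop hfreq
    refine ⟨t, htI, ψ ∘ ψ', hψ.comp hψ', hten.comp hψ'.tendsto_atTop, Or.inl ?_⟩
    rcases lt_or_eq_of_le htI.2 with ht1 | ht1
    · have h1 : Tendsto (u ∘ ψ ∘ ψ') atTop (𝓝[Ici t] t) := by
        rw [tendsto_nhdsWithin_iff]
        exact ⟨hten.comp hψ'.tendsto_atTop, Eventually.of_forall (fun k => hP k)⟩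
      exact (hx.1 t ⟨htI.1, ht1⟩).tendsto.comp h1
    · have : ∀ k, u (ψ (ψ' k)) = t := by
        intro k
        have := (hu (ψ (ψ' k))).2
        have := hP k
        linarith [ht1 ▸ this]
      have heq : (fun k => x (u ((ψ ∘ ψ') k))) = fun _ => x t := by
        funext k; simp only [Function.comp_apply, this k]
      rw [heq]
      exact tendsto_const_nhds

lemma cadlag_bounded_s12 {x : ℝ → ℝ} (hx : Cadlag x) : ∃ C, ∀ t ∈ Icc (0:ℝ) 1, |x t| ≤ C := by
  by_contra hC
  push_neg at hC
  choose u hu hbig using fun k : ℕ => hC k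
  obtain ⟨t, htI, φ, hφ, -, hlim⟩ := cadlag_cluster hx u hu
  have : ∃ l, Tendsto (fun k => x (u (φ k))) atTop (𝓝 l) := by
    rcases hlim with h | ⟨-, h⟩
    exacts [⟨_, h⟩, ⟨_, h⟩]
  obtain ⟨l, hl⟩ := this
  have hev : ∀ᶠ k in atTop, |x (u (φ k)) - l| < 1 := by
    have := Metric.tendsto_atTop.1 hl 1 one_pos
    obtain ⟨N, hN⟩ := this
    exact eventually_atTop.2 ⟨N, fun k hk => by simpa [Real.dist_eq] using hN k hk⟩
  obtain ⟨k, hk1, hk2⟩ := (hev.and (eventually_ge_atTop (⌈|l|⌉₊ + 1))).exists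
  have h1 : |x (u (φ k))| < |l| + 1 := by
    have := abs_sub_abs_le_abs_sub (x (u (φ k))) l
    linarith [hk1]
  have h2 : (k:ℝ) < |x (u (φ k))| := lt_of_le_of_lt (by exact_mod_cast Nat.cast_le.2 (hφ.id_le k)) (hbig (φ k))
  have h3 : (⌈|l|⌉₊ + 1 : ℝ) ≤ (k:ℝ) := by exact_mod_cast hk2
  have h4 : |l| ≤ (⌈|l|⌉₊ : ℝ) := Nat.le_ceil _
  linarith
lemma runMin01_le {x : ℝ → ℝ} (hx : Cadlag x) {t : ℝ} (ht : t ∈ Icc (0:ℝ) 1) :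
    runMin01 x ≤ x t := by
  obtain ⟨C, hC⟩ := cadlag_bounded_s12 hx
  have hbdd : BddBelow (range fun s : Icc (0:ℝ) 1 => x s) := by
    refine ⟨-C, ?_⟩
    rintro _ ⟨s, rfl⟩
    have := hC s s.2
    have := abs_le.1 this
    linarith [this.1]
  exact ciInf_le hbdd ⟨t, ht⟩

lemma le_runMin01 {x : ℝ → ℝ} {c : ℝ} (h : ∀ t ∈ Icc (0:ℝ) 1, c ≤ x t) : c ≤ runMin01 x :=
  le_ciInf (fun s => h s s.2)

lemma exists_runMin_lt {x : ℝ → ℝ} {c : ℝ} (h : runMin01 x < c) : ∃ t ∈ Icc (0:ℝ) 1, x t < c := by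
  obtain ⟨s, hs⟩ := exists_lt_of_ciInf_lt h
  exact ⟨s, s.2, hs⟩

lemma leftVal_ge {x : ℝ → ℝ} (hx : Cadlag x) {t c : ℝ} (ht : t ∈ Ioc (0:ℝ) 1)
    (hc : ∀ u ∈ Icc (0:ℝ) 1, c ≤ x u) : c ≤ leftVal x t := by
  refine ge_of_tendsto (tendsto_leftVal hx ht) ?_
  filter_upwards [Ioo_mem_nhdsLT_of_mem (⟨ht.1, le_refl t⟩ : t ∈ Ioc (0:ℝ) t)] with u hu
  exact hc u ⟨le_of_lt hu.1, le_trans (le_of_lt hu.2) ht.2⟩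

lemma exists_near_of_min_le {x : ℝ → ℝ} (hx : Cadlag x) {s c γ : ℝ} (hs : s ∈ Icc (0:ℝ) 1)
    (hγ : 0 < γ) (h : min (leftVal x s) (x s) ≤ c) :
    ∃ u ∈ Icc (0:ℝ) 1, |u - s| ≤ γ ∧ x u ≤ c + γ := by
  rcases min_le_iff.1 h with hL | hV
  · rcases eq_or_lt_of_le hs.1 with hs0 | hs0
    · refine ⟨s, hs, by simp [abs_nonneg, le_of_lt hγ], ?_⟩
      rw [leftVal, if_pos (le_of_eq hs0.symm)] at hL
      rw [show s = 0 from hs0.symm]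
      linarith
    · have htend := tendsto_leftVal hx ⟨hs0, hs.2⟩
      have hev1 : ∀ᶠ u in 𝓝[Iio s] s, x u < leftVal x s + γ :=
        htend.eventually_lt_const (lt_add_of_pos_right _ hγ)
      have hev2 : Ioo (max 0 (s - γ)) s ∈ 𝓝[Iio s] s :=
        Ioo_mem_nhdsLT_of_mem ⟨max_lt hs0 (by linarith), le_refl s⟩
      have hev2' : ∀ᶠ u in 𝓝[Iio s] s, u ∈ Ioo (max 0 (s - γ)) s := hev2
      obtain ⟨u, hu1, hu2⟩ := (hev1.and hev2').exists
      refine ⟨u, ⟨le_of_lt (lt_of_le_of_lt (le_max_left 0 _) hu2.1),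
        le_trans (le_of_lt hu2.2) hs.2⟩, ?_, by linarith⟩
      have h1 : s - γ < u := lt_of_le_of_lt (le_max_right 0 _) hu2.1
      rw [abs_le]; constructor <;> linarith [hu2.2]
  · exact ⟨s, hs, by simp [le_of_lt hγ], by linarith⟩

lemma minAttain {x : ℝ → ℝ} (hx : Cadlag x) (h0 : runMin01 x < x 0) :
    ∃ t ∈ Ioc (0:ℝ) 1, min (leftVal x t) (x t) = runMin01 x := by
  set m := runMin01 x with hm
  have hmle : ∀ u ∈ Icc (0:ℝ) 1, m ≤ x u := fun u hu => runMin01_le hx hu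
  have hu : ∀ k : ℕ, ∃ t ∈ Icc (0:ℝ) 1, x t < m + 1/(k+1) := by
    intro k
    exact exists_runMin_lt (lt_add_of_pos_right _ (goodE k))
  choose u huI hult using hu
  obtain ⟨t, htI, φ, hφ, -, hlim⟩ := cadlag_cluster hx u huI
  have hbnd : ∀ k : ℕ, x (u (φ k)) ≤ m + 1/(k+1) := by
    intro k
    refine le_trans (le_of_lt (hult (φ k))) ?_
    have h1 : (k:ℝ) + 1 ≤ (φ k : ℝ) + 1 := by
      have h := hφ.id_le k
      have : (k:ℝ) ≤ (φ k : ℝ) := Nat.cast_le.2 h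
      linarith
    have := one_div_le_one_div_of_le (by positivity : (0:ℝ) < (k:ℝ)+1) h1
    linarith
  have htendm : Tendsto (fun k : ℕ => m + 1/((k:ℝ)+1)) atTop (𝓝 m) := by
    have := (tendsto_one_div_add_atTop_nhds_zero_nat (𝕜 := ℝ))
    simpa using tendsto_const_nhds.add this
  rcases hlim with hv | ⟨ht0, hv⟩
  · have hle : x t ≤ m := le_of_tendsto_of_tendsto' hv htendm hbnd
    have heq : x t = m := le_antisymm hle (hmle t htI)
    have ht0 : 0 < t := by
      rcases eq_or_lt_of_le htI.1 with h | h
      · exfalso; rw [← h] at heq; rw [heq] at h0; exact lt_irrefl _ h0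
      · exact h
    refine ⟨t, ⟨ht0, htI.2⟩, ?_⟩
    rw [heq, min_eq_right (leftVal_ge hx ⟨ht0, htI.2⟩ hmle)]
  · have hle : leftVal x t ≤ m := le_of_tendsto_of_tendsto' hv htendm hbnd
    have heq : leftVal x t = m := le_antisymm hle (leftVal_ge hx ⟨ht0, htI.2⟩ hmle)
    refine ⟨t, ⟨ht0, htI.2⟩, ?_⟩
    rw [heq, min_eq_left (heq ▸ hmle t htI)]
lemma infPt_mem {x : ℝ → ℝ} (hx : Cadlag x) (h0 : runMin01 x < x 0) :
    infPt x ∈ Ioc (0:ℝ) 1 ∧ min (leftVal x (infPt x)) (x (infPt x)) = runMin01 x := by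
  set m := runMin01 x with hm
  have hmle : ∀ u ∈ Icc (0:ℝ) 1, m ≤ x u := fun u hu => runMin01_le hx hu
  obtain ⟨t₀, ht₀I, ht₀⟩ := minAttain hx h0
  set S : Set ℝ := {t : ℝ | 0 < t ∧ min (leftVal x t) (x t) = m} with hS
  have ht₀S : t₀ ∈ S := ⟨ht₀I.1, ht₀⟩
  have hbdd : BddBelow S := ⟨0, fun t ht => le_of_lt ht.1⟩
  have hne : S.Nonempty := ⟨t₀, ht₀S⟩
  have hinf : infPt x = sInf S := rfl
  set ι := sInf S with hι
  have hιt₀ : ι ≤ t₀ := csInf_le hbdd ht₀S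
  have hι0 : 0 ≤ ι := le_csInf hne (fun t ht => le_of_lt ht.1)
  have key : ι ∈ S := by
    by_cases hmem : ι ∈ S
    · exact hmem
    have hιlt : ι < t₀ := lt_of_le_of_ne hιt₀ (fun h => hmem (h ▸ ht₀S))
    -- build a sequence approaching ι from the right with small values
    have hseq : ∀ k : ℕ, ∃ sk, sk ∈ Icc (0:ℝ) 1 ∧ ι ≤ sk ∧ sk < ι + 1/(k+1) ∧
        x sk ≤ m + 1/(k+1) := by
      intro k
      have hlt : ι < min (ι + 1/(k+1)) t₀ := lt_min (lt_add_of_pos_right _ (goodE k)) hιlt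
      obtain ⟨tk, htkS, htklt⟩ := (csInf_lt_iff hbdd hne).1 hlt
      have htkIoc : tk ∈ Ioc (0:ℝ) 1 :=
        ⟨htkS.1, le_trans (le_of_lt (lt_of_lt_of_le htklt (min_le_right _ _))) ht₀I.2⟩
      have htkIcc : tk ∈ Icc (0:ℝ) 1 := ⟨le_of_lt htkIoc.1, htkIoc.2⟩
      have hιtk : ι < tk := lt_of_le_of_ne (csInf_le hbdd htkS) (fun h => hmem (h ▸ htkS))
      have hmin := htkS.2
      rcases (by
        rcases le_total (leftVal x tk) (x tk) with h | h
        · left; rw [min_eq_left h] at hmin; exact hmin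
        · right; rw [min_eq_right h] at hmin; exact hmin :
        leftVal x tk = m ∨ x tk = m) with hL | hV
      · have htend := tendsto_leftVal hx htkIoc
        have hev1 : ∀ᶠ u in 𝓝[Iio tk] tk, x u < m + 1/(k+1) := by
          rw [← hL]
          exact htend.eventually_lt_const (hL ▸ lt_add_of_pos_right _ (goodE k))
        have hev2' : ∀ᶠ u in 𝓝[Iio tk] tk, u ∈ Ioo ι tk :=
          Ioo_mem_nhdsLT_of_mem ⟨hιtk, le_refl tk⟩
        obtain ⟨u, hu1, hu2⟩ := (hev1.and hev2').exists
        refine ⟨u, ⟨le_trans hι0 (le_of_lt hu2.1), le_trans (le_of_lt hu2.2) htkIcc.2⟩,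
          le_of_lt hu2.1, ?_, le_of_lt hu1⟩
        calc u < tk := hu2.2
          _ < ι + 1/(k+1) := lt_of_lt_of_le htklt (min_le_left _ _)
      · exact ⟨tk, htkIcc, le_of_lt hιtk,
          lt_of_lt_of_le htklt (min_le_left _ _), by rw [hV]; linarith [goodE k]⟩
    choose sk hskI hskge hsklt hskval using hseq
    have hsktend : Tendsto sk atTop (𝓝 ι) := by
      have h1 : Tendsto (fun k : ℕ => ι + 1/((k:ℝ)+1)) atTop (𝓝 ι) := by
        simpa using tendsto_const_nhds.add (tendsto_one_div_add_atTop_nhds_zero_nat (𝕜 := ℝ))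
      exact tendsto_of_tendsto_of_tendsto_of_le_of_le tendsto_const_nhds h1 hskge
        (fun k => le_of_lt (hsklt k))
    have hι1 : ι < 1 := lt_of_lt_of_le hιlt ht₀I.2
    have hxι : x ι = m := by
      have hrc := (hx.1 ι ⟨hι0, hι1⟩).tendsto
      have h1 : Tendsto sk atTop (𝓝[Ici ι] ι) := by
        rw [tendsto_nhdsWithin_iff]
        exact ⟨hsktend, Eventually.of_forall hskge⟩
      have h2 : Tendsto (fun k => x (sk k)) atTop (𝓝 (x ι)) := hrc.comp h1
      have htendm : Tendsto (fun k : ℕ => m + 1/((k:ℝ)+1)) atTop (𝓝 m) := by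
        simpa using tendsto_const_nhds.add (tendsto_one_div_add_atTop_nhds_zero_nat (𝕜 := ℝ))
      have hle : x ι ≤ m := le_of_tendsto_of_tendsto' h2 htendm hskval
      exact le_antisymm hle (hmle ι ⟨hι0, le_of_lt hι1⟩)
    have hι0' : 0 < ι := by
      rcases eq_or_lt_of_le hι0 with h | h
      · exfalso; rw [← h] at hxι; rw [hxι] at h0; exact lt_irrefl _ h0
      · exact h
    refine ⟨hι0', ?_⟩
    rw [hxι, min_eq_right (leftVal_ge hx ⟨hι0', le_of_lt hι1⟩ hmle)]
  exact ⟨⟨key.1, le_trans hιt₀ ht₀I.2⟩, key.2⟩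
def GoodLam (l : ℝ → ℝ) : Prop :=
  ContinuousOn l (Set.Icc 0 1) ∧ StrictMonoOn l (Set.Icc 0 1) ∧ l 0 = 0 ∧ l 1 = 1 ∧
  Set.MapsTo l (Set.Icc 0 1) (Set.Icc 0 1) ∧ Set.SurjOn l (Set.Icc 0 1) (Set.Icc 0 1)

lemma goodLam_id : GoodLam (fun t : ℝ => t) :=
  ⟨continuousOn_id, fun a _ b _ h => h, rfl, rfl, fun t ht => ht, fun t ht => ⟨t, ht, rfl⟩⟩

lemma skorokhod_of_eventually (x : ℕ → ℝ → ℝ) (Y : ℝ → ℝ)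
    (H : ∀ ε : ℝ, 0 < ε → ∀ᶠ n in atTop, ∃ l, GoodLam l ∧
      (∀ t ∈ Icc (0:ℝ) 1, |l t - t| ≤ ε) ∧ (∀ t ∈ Icc (0:ℝ) 1, |x n t - Y (l t)| ≤ ε)) :
    SkorokhodTendsto x Y := by
  haveI : Nonempty (Icc (0:ℝ) 1) := ⟨⟨0, by norm_num⟩⟩
  set P : ℕ → ℝ → Prop := fun n ε => ∃ l, GoodLam l ∧
      (∀ t ∈ Icc (0:ℝ) 1, |l t - t| ≤ ε) ∧ (∀ t ∈ Icc (0:ℝ) 1, |x n t - Y (l t)| ≤ ε) with hP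
  have hPmono : ∀ n ε ε', P n ε → ε ≤ ε' → P n ε' := by
    rintro n ε ε' ⟨l, h1, h2, h3⟩ hle
    exact ⟨l, h1, fun t ht => le_trans (h2 t ht) hle, fun t ht => le_trans (h3 t ht) hle⟩
  set B : ℕ → Set ℝ := fun n => {ε | 0 < ε ∧ P n ε} with hB
  have hbdd : ∀ n, BddBelow (B n) := fun n => ⟨0, fun ε hε => le_of_lt hε.1⟩
  set d : ℕ → ℝ := fun n => sInf (B n) with hd
  set e : ℕ → ℝ := fun n => d n + 1/(n+1) with he
  have hd0 : ∀ n, 0 ≤ d n := fun n => Real.sInf_nonneg (fun ε hε => le_of_lt hε.1)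
  have hdle : ∀ ε : ℝ, 0 < ε → ∀ᶠ n in atTop, d n ≤ ε := by
    intro ε hε
    filter_upwards [H ε hε] with n hn
    exact csInf_le (hbdd n) ⟨hε, hn⟩
  have hBne : ∀ᶠ n in atTop, (B n).Nonempty := by
    filter_upwards [H 1 one_pos] with n hn
    exact ⟨1, one_pos, hn⟩
  have hPe : ∀ n, (B n).Nonempty → P n (e n) := by
    intro n hne
    have h1 : d n < e n := lt_add_of_pos_right _ (goodE n)
    obtain ⟨ε, hεB, hεlt⟩ := (csInf_lt_iff (hbdd n) hne).1 h1
    exact hPmono n ε (e n) hεB.2 (le_of_lt hεlt)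
  classical
  set lam : ℕ → ℝ → ℝ := fun n => if h : P n (e n) then h.choose else (fun t => t) with hlam
  have hGood : ∀ n, GoodLam (lam n) := by
    intro n
    rw [hlam]
    by_cases h : P n (e n)
    · simp only [dif_pos h]; exact h.choose_spec.1
    · simp only [dif_neg h]; exact goodLam_id
  have hbound : ∀ n, P n (e n) → (∀ t ∈ Icc (0:ℝ) 1, |lam n t - t| ≤ e n) ∧
      (∀ t ∈ Icc (0:ℝ) 1, |x n t - Y (lam n t)| ≤ e n) := by
    intro n h
    rw [hlam]
    simp only [dif_pos h]
    exact ⟨h.choose_spec.2.1, h.choose_spec.2.2⟩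
  have hdtend : Tendsto d atTop (𝓝 0) := by
    rw [Metric.tendsto_atTop]
    intro ε hε
    obtain ⟨N, hN⟩ := eventually_atTop.1 (hdle (ε/2) (by linarith))
    exact ⟨N, fun n hn => by
      rw [Real.dist_eq, sub_zero, abs_of_nonneg (hd0 n)]
      linarith [hN n hn]⟩
  have hetend : Tendsto e atTop (𝓝 0) := by
    have h2 := hdtend.add tendsto_one_div_add_atTop_nhds_zero_nat
    rw [add_zero] at h2
    exact h2
  refine ⟨lam, fun n => hGood n, ?_, ?_⟩
  · refine tendsto_of_tendsto_of_tendsto_of_le_of_le' tendsto_const_nhds hetend ?_ ?_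
    · filter_upwards [hBne] with n hn
      have hb := (hbound n (hPe n hn)).1
      have hA : BddAbove (range fun t : Icc (0:ℝ) 1 => |lam n (t:ℝ) - (t:ℝ)|) := by
        refine ⟨e n, ?_⟩
        rintro _ ⟨t, rfl⟩
        exact hb t t.2
      exact le_trans (abs_nonneg _) (le_ciSup hA ⟨0, by norm_num⟩)
    · filter_upwards [hBne] with n hn
      exact ciSup_le (fun t => (hbound n (hPe n hn)).1 t t.2)
  · refine tendsto_of_tendsto_of_tendsto_of_le_of_le' tendsto_const_nhds hetend ?_ ?_
    · filter_upwards [hBne] with n hn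
      have hb := (hbound n (hPe n hn)).2
      have hA : BddAbove (range fun t : Icc (0:ℝ) 1 => |x n (t:ℝ) - Y (lam n (t:ℝ))|) := by
        refine ⟨e n, ?_⟩
        rintro _ ⟨t, rfl⟩
        exact hb t t.2
      exact le_trans (abs_nonneg _) (le_ciSup hA ⟨0, by norm_num⟩)
    · filter_upwards [hBne] with n hn
      exact ciSup_le (fun t => (hbound n (hPe n hn)).2 t t.2)
noncomputable def ext01 (f : ℝ → ℝ) : ℝ → ℝ := fun s => f (max 0 (min 1 s))

lemma ext01_eq {f : ℝ → ℝ} {s : ℝ} (hs : s ∈ Icc (0:ℝ) 1) : ext01 f s = f s := by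
  rw [ext01, min_eq_right hs.2, max_eq_right hs.1]

lemma ext01_continuous {f : ℝ → ℝ} (hf : ContinuousOn f (Icc 0 1)) :
    Continuous (ext01 f) := by
  apply hf.comp_continuous (continuous_const.max (continuous_const.min continuous_id))
  intro s
  exact ⟨le_max_left _ _, max_le zero_le_one (min_le_left _ _)⟩

lemma strictMonoOn_glue {f : ℝ → ℝ} {a b c : ℝ} (hab : a ≤ b) (hbc : b ≤ c)
    (h1 : StrictMonoOn f (Icc a b)) (h2 : StrictMonoOn f (Icc b c)) :
    StrictMonoOn f (Icc a c) := by
  intro s hs t ht hst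
  rcases le_or_gt s b with hsb | hsb
  · rcases le_or_gt t b with htb | htb
    · exact h1 ⟨hs.1, hsb⟩ ⟨ht.1, htb⟩ hst
    · have h3 : f s ≤ f b := by
        rcases eq_or_lt_of_le hsb with h | h
        · rw [h]
        · exact le_of_lt (h1 ⟨hs.1, hsb⟩ ⟨hab, le_refl b⟩ h)
      exact lt_of_le_of_lt h3 (h2 ⟨le_refl b, hbc⟩ ⟨le_of_lt htb, ht.2⟩ htb)
  · exact h2 ⟨le_of_lt hsb, hs.2⟩ ⟨le_of_lt (lt_trans hsb hst), ht.2⟩ hst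

lemma vervaat_apply_lt {x : ℝ → ℝ} {t : ℝ} (ht : t < 1) :
    vervaat x t = vervaatAux x (infPt x) t := if_pos ht

lemma vervaat_one {x : ℝ → ℝ} (hx : Cadlag x) (hρ : infPt x ∈ Ioc (0:ℝ) 1) :
    vervaat x 1 = leftVal x (infPt x) - min (leftVal x (infPt x)) (x (infPt x)) := by
  rw [vervaat, if_neg (lt_irrefl 1)]
  set ρ := infPt x with hρdef
  have hmap : Tendsto (fun s => ρ + s - 1) (𝓝[Iio (1:ℝ)] 1) (𝓝[Iio ρ] ρ) := by
    rw [tendsto_nhdsWithin_iff]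
    constructor
    · have h1 : Tendsto (fun s : ℝ => ρ + s - 1) (𝓝 1) (𝓝 (ρ + 1 - 1)) :=
        ((continuous_const.add continuous_id).sub continuous_const).tendsto 1
      have h2 : ρ + 1 - 1 = ρ := by ring
      rw [h2] at h1
      exact h1.mono_left nhdsWithin_le_nhds
    · filter_upwards [self_mem_nhdsWithin] with s hs
      simp only [mem_Iio] at hs ⊢
      linarith
  have h1 : Tendsto (fun s => x (ρ + s - 1)) (𝓝[Iio (1:ℝ)] 1) (𝓝 (leftVal x ρ)) :=
    (tendsto_leftVal hx hρ).comp hmap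
  have heq : ∀ᶠ s in 𝓝[Iio (1:ℝ)] 1,
      x (ρ + s - 1) - min (leftVal x ρ) (x ρ) = vervaatAux x ρ s := by
    filter_upwards [Ioo_mem_nhdsLT_of_mem
      (⟨by linarith [hρ.1], le_refl (1:ℝ)⟩ : (1:ℝ) ∈ Ioc (1 - ρ) 1)] with s hs
    rw [vervaatAux, if_neg (by linarith [hs.1])]
  exact ((h1.sub_const _).congr' heq).limUnder_eq

lemma leftVal_transfer {xn Y l : ℝ → ℝ} (hxn : Cadlag xn) (hY : Cadlag Y)
    (hl : GoodLam l) {t b : ℝ} (ht : t ∈ Ioc (0:ℝ) 1)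
    (hb : ∀ u ∈ Icc (0:ℝ) 1, |xn u - Y (l u)| ≤ b) :
    |leftVal xn t - leftVal Y (l t)| ≤ b := by
  obtain ⟨hcont, hmono, hl0, hl1, hmaps, hsurj⟩ := hl
  have htI : t ∈ Icc (0:ℝ) 1 := ⟨le_of_lt ht.1, ht.2⟩
  have hlt : l t ∈ Ioc (0:ℝ) 1 := by
    constructor
    · rw [← hl0]
      exact hmono ⟨le_refl 0, zero_le_one⟩ htI ht.1
    · exact (hmaps htI).2
  have hmapl : Tendsto l (𝓝[Iio t] t) (𝓝[Iio (l t)] (l t)) := by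
    rw [tendsto_nhdsWithin_iff]
    constructor
    · have hc : Tendsto l (𝓝[Icc (0:ℝ) 1] t) (𝓝 (l t)) := hcont t htI
      refine hc.mono_left ?_
      rw [← nhdsWithin_Ioo_eq_nhdsLT ht.1]
      exact nhdsWithin_mono t (fun u hu => ⟨le_of_lt hu.1, le_trans (le_of_lt hu.2) ht.2⟩)
    · filter_upwards [Ioo_mem_nhdsLT_of_mem (⟨ht.1, le_refl t⟩ : t ∈ Ioc (0:ℝ) t)] with u hu
      exact hmono ⟨le_of_lt hu.1, le_trans (le_of_lt hu.2) ht.2⟩ htI hu.2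
  have h1 : Tendsto (fun u => Y (l u)) (𝓝[Iio t] t) (𝓝 (leftVal Y (l t))) :=
    (tendsto_leftVal hY hlt).comp hmapl
  have h2 := tendsto_leftVal hxn ht
  have h3 : Tendsto (fun u => |xn u - Y (l u)|) (𝓝[Iio t] t)
      (𝓝 |leftVal xn t - leftVal Y (l t)|) := (h2.sub h1).abs
  refine le_of_tendsto h3 ?_
  filter_upwards [Ioo_mem_nhdsLT_of_mem (⟨ht.1, le_refl t⟩ : t ∈ Ioc (0:ℝ) t)] with u hu
  exact hb u ⟨le_of_lt hu.1, le_trans (le_of_lt hu.2) ht.2⟩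

lemma leftVal_window {Y : ℝ → ℝ} (hY : Cadlag Y) {ρ m γ ε : ℝ}
    (hγ : 0 < γ) (hγρ : γ ≤ ρ)
    (hw : ∀ u ∈ Icc (0:ℝ) 1, |u - ρ| < γ → |Y u - m| ≤ ε)
    {s : ℝ} (hs : s ∈ Ioc (0:ℝ) 1) (hsρ : |s - ρ| < γ/2) :
    |leftVal Y s - m| ≤ ε := by
  have habs := abs_lt.1 hsρ
  have h3 : Tendsto (fun u => |Y u - m|) (𝓝[Iio s] s) (𝓝 |leftVal Y s - m|) :=
    ((tendsto_leftVal hY hs).sub_const m).abs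
  refine le_of_tendsto h3 ?_
  filter_upwards [Ioo_mem_nhdsLT_of_mem
    (⟨by linarith, le_refl s⟩ : s ∈ Ioc (ρ - γ/2) s)] with u hu
  refine hw u ⟨by linarith [hu.1], le_trans (le_of_lt hu.2) hs.2⟩ ?_
  rw [abs_lt]
  constructor <;> [linarith [hu.1]; linarith [hu.2]]
set_option maxHeartbeats 4000000 in
lemma mu_exists {Y x Λ : ℝ → ℝ} (hY : Cadlag Y) (hx : Cadlag x)
    (hΛc : Continuous Λ) (hΛm : StrictMonoOn Λ (Icc 0 1))
    (hΛ0 : Λ 0 = 0) (hΛ1 : Λ 1 = 1) (hΛmap : MapsTo Λ (Icc 0 1) (Icc 0 1))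
    {ρ ρ' ρ'' m a b γ ε' ε : ℝ}
    (hε : 0 < ε) (hε' : ε' = ε/8)
    (hγ0 : 0 < γ) (hγρ : 4*γ ≤ ρ) (hγρ' : 4*γ ≤ 1 - ρ) (hγε : γ ≤ ε/4)
    (ha0 : 0 ≤ a) (ha : a ≤ γ/32) (hb0 : 0 ≤ b) (hb : b ≤ γ/32)
    (hρ'ρ : |ρ' - ρ| ≤ 2*(γ/32)) (hρ''ρ : |ρ'' - ρ| ≤ γ/32)
    (hρ'I : ρ' ∈ Ioc (0:ℝ) 1) (hρ''I : ρ'' ∈ Icc (0:ℝ) 1) (hΛρ'' : Λ ρ'' = ρ)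
    (hρ'def : infPt x = ρ') (hρdef : infPt Y = ρ)
    (hLYρ : leftVal Y ρ = Y ρ) (hYρ : Y ρ = m)
    (hcm : |min (leftVal x ρ') (x ρ') - m| ≤ b)
    (hw : ∀ u ∈ Icc (0:ℝ) 1, |u - ρ| < γ → |Y u - m| ≤ ε')
    (hA : ∀ t ∈ Icc (0:ℝ) 1, |Λ t - t| ≤ a)
    (hB : ∀ t ∈ Icc (0:ℝ) 1, |x t - Y (Λ t)| ≤ b)
    (hLV : |leftVal x ρ' - m| ≤ b + ε') :
    ∃ l, GoodLam l ∧ (∀ t ∈ Icc (0:ℝ) 1, |l t - t| ≤ ε) ∧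
      (∀ t ∈ Icc (0:ℝ) 1, |vervaat x t - vervaat Y (l t)| ≤ ε) := by
  have hη : (0:ℝ) < γ/32 := by linarith
  have hρ0 : 0 < ρ := by linarith
  have hρ1 : ρ < 1 := by linarith
  have hρ'ρ1 := abs_le.1 hρ'ρ
  have hρ''ρ1 := abs_le.1 hρ''ρ
  set h : ℝ := γ/4 with hh
  set w : ℝ := ρ'' - ρ' with hwdef
  set t₁ : ℝ := max w 0 + h with ht₁def
  set t₂ : ℝ := 1 + min w 0 - h with ht₂def
  have hMeq : ρ' + t₁ = max ρ'' ρ' + h := by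
    rcases le_total ρ'' ρ' with hc | hc
    · rw [ht₁def, hwdef, max_eq_right (by linarith : ρ'' - ρ' ≤ 0), max_eq_right hc]; ring
    · rw [ht₁def, hwdef, max_eq_left (by linarith : (0:ℝ) ≤ ρ'' - ρ'), max_eq_left hc]; ring
  have hNeq : ρ' + t₂ - 1 = min ρ'' ρ' - h := by
    rcases le_total ρ'' ρ' with hc | hc
    · rw [ht₂def, hwdef, min_eq_left (by linarith : ρ'' - ρ' ≤ 0), min_eq_left hc]; ring
    · rw [ht₂def, hwdef, min_eq_right (by linarith : (0:ℝ) ≤ ρ'' - ρ'), min_eq_right hc]; ring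
  have hMρ : |max ρ'' ρ' - ρ| ≤ 2*(γ/32) := by
    rw [abs_le]; constructor
    · rcases le_total ρ'' ρ' with hc | hc
      · rw [max_eq_right hc]; linarith [hρ'ρ1.1]
      · rw [max_eq_left hc]; linarith [hρ''ρ1.1]
    · rcases le_total ρ'' ρ' with hc | hc
      · rw [max_eq_right hc]; linarith [hρ'ρ1.2]
      · rw [max_eq_left hc]; linarith [hρ''ρ1.2]
  have hNρ : |min ρ'' ρ' - ρ| ≤ 2*(γ/32) := by
    rw [abs_le]; constructor
    · rcases le_total ρ'' ρ' with hc | hc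
      · rw [min_eq_left hc]; linarith [hρ''ρ1.1]
      · rw [min_eq_right hc]; linarith [hρ'ρ1.1]
    · rcases le_total ρ'' ρ' with hc | hc
      · rw [min_eq_left hc]; linarith [hρ''ρ1.2]
      · rw [min_eq_right hc]; linarith [hρ'ρ1.2]
  have hMρ1 := abs_le.1 hMρ
  have hNρ1 := abs_le.1 hNρ
  have ht₁pos : 0 < t₁ := by
    rw [ht₁def]
    have := le_max_right w 0
    linarith
  have ht₁le : t₁ ≤ h + 3*(γ/32) := by
    rw [ht₁def]
    have h1 : max w 0 ≤ 3*(γ/32) := by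
      apply max_le _ (by linarith)
      rw [hwdef]; linarith [hρ'ρ1.1, hρ''ρ1.2]
    linarith
  have hargt₁ : ρ' + t₁ ∈ Icc (0:ℝ) 1 := by
    rw [hMeq]
    constructor
    · have := le_max_left ρ'' ρ'; linarith [hρ''I.1, (show (0:ℝ) < h by rw [hh]; linarith)]
    · linarith [hMρ1.2]
  have hρ'Icc : ρ' ∈ Icc (0:ℝ) 1 := ⟨le_of_lt hρ'I.1, hρ'I.2⟩
  have h0Icc : (0:ℝ) ∈ Icc (0:ℝ) 1 := ⟨le_refl 0, zero_le_one⟩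
  have h1Icc : (1:ℝ) ∈ Icc (0:ℝ) 1 := ⟨zero_le_one, le_refl 1⟩
  set q : ℝ := Λ (ρ' + t₁) - ρ with hqdef
  have hqpos : 0 < q := by
    rw [hqdef, ← hΛρ'']
    have harg : ρ'' < ρ' + t₁ := by
      rw [hMeq]
      have := le_max_left ρ'' ρ'
      linarith
    linarith [hΛm hρ''I hargt₁ harg]
  have hqle : q ≤ h + 4*(γ/32) := by
    have h1 := (abs_le.1 (hA _ hargt₁)).2
    rw [hqdef]
    rw [hMeq] at h1 ⊢
    linarith [hMρ1.2]
  have hqγ : q < γ := by rw [hh] at hqle; linarith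
  have ht₁lt : t₁ < 1 - ρ' := by
    rw [hh] at ht₁le
    linarith [hρ'ρ1.2]
  have hNh : ρ - 3*(γ/32) - h ≤ min ρ'' ρ' - h := by linarith [hNρ1.1]
  have hNhpos : 0 < min ρ'' ρ' - h := by rw [hh]; rw [hh] at hNh; linarith
  have hargt₂ : ρ' + t₂ - 1 ∈ Icc (0:ℝ) 1 := by
    rw [hNeq]
    constructor
    · linarith
    · have := min_le_right ρ'' ρ'; linarith [hρ'I.2, (show (0:ℝ) < h by rw [hh]; linarith)]
  have ht₂gt : 1 - ρ' < t₂ := by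
    have : ρ' + t₂ - 1 > 0 := hNeq ▸ hNhpos
    linarith
  have ht₂lt : t₂ < 1 := by
    rw [ht₂def]
    have := min_le_right w 0
    linarith [(show (0:ℝ) < h by rw [hh]; linarith)]
  have ht₂ge : 1 - h - 3*(γ/32) ≤ t₂ := by
    rw [ht₂def]
    have h1 : -(3*(γ/32)) ≤ min w 0 := by
      apply le_min _ (by linarith)
      rw [hwdef]; linarith [hρ'ρ1.2, hρ''ρ1.1]
    linarith
  set r : ℝ := Λ (ρ' + t₂ - 1) + 1 - ρ with hrdef
  have hΛNpos : 0 < Λ (ρ' + t₂ - 1) := by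
    rw [← hΛ0]
    exact hΛm h0Icc hargt₂ (by rw [hNeq]; exact hNhpos)
  have hrlt1 : r < 1 := by
    rw [hrdef, ← hΛρ'']
    have harg : ρ' + t₂ - 1 < ρ'' := by
      rw [hNeq]
      have := min_le_left ρ'' ρ'
      linarith [(show (0:ℝ) < h by rw [hh]; linarith)]
    linarith [hΛm hargt₂ hρ''I harg]
  have hrge : 1 - h - 4*(γ/32) ≤ r := by
    have h1 := (abs_le.1 (hA _ hargt₂)).1
    rw [hrdef]
    rw [hNeq] at h1 ⊢
    linarith [hNρ1.1]
  have hrγ : 1 - γ < r := by rw [hh] at hrge; linarith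
  have ht₂γ : 1 - γ < t₂ := by rw [hh] at ht₂ge; linarith
  have hrgt : 1 - ρ < r := by
    rw [hrdef]; linarith [hΛNpos]
  -- the time change
  set μ : ℝ → ℝ := fun t =>
    if t ≤ t₁ then q/t₁ * t
    else if t ≤ 1 - ρ' then Λ (ρ' + t) - ρ
    else if t ≤ t₂ then Λ (ρ' + t - 1) + 1 - ρ
    else r + (1 - r)/(1 - t₂) * (t - t₂) with hμdef
  -- piecewise identities
  have hEq1 : ∀ t, t ≤ t₁ → μ t = q/t₁ * t := by
    intro t ht; rw [hμdef]; simp only [if_pos ht]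
  have hEq2 : ∀ t, t₁ ≤ t → t ≤ 1 - ρ' → μ t = Λ (ρ' + t) - ρ := by
    intro t ht1 ht2
    rcases eq_or_lt_of_le ht1 with hc | hc
    · rw [hμdef]; simp only [← hc, if_pos (le_refl t₁)]
      rw [div_mul_cancel₀ _ (ne_of_gt ht₁pos), hqdef]
    · rw [hμdef]; simp only [if_neg (not_le.2 hc), if_pos ht2]
  have hEq3 : ∀ t, 1 - ρ' ≤ t → t ≤ t₂ → μ t = Λ (ρ' + t - 1) + 1 - ρ := by
    intro t ht1 ht2
    rcases eq_or_lt_of_le ht1 with hc | hc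
    · rw [hμdef]
      simp only [← hc, if_neg (not_le.2 ht₁lt), if_pos (le_refl (1 - ρ'))]
      have e1 : ρ' + (1 - ρ') = 1 := by ring
      have e2 : (1:ℝ) - 1 = 0 := by norm_num
      rw [e1, e2, hΛ0, hΛ1]; ring
    · rw [hμdef]
      simp only [if_neg (not_le.2 (lt_trans ht₁lt hc)), if_neg (not_le.2 hc), if_pos ht2]
  have hEq4 : ∀ t, t₂ ≤ t → μ t = r + (1 - r)/(1 - t₂) * (t - t₂) := by
    intro t ht1
    rcases eq_or_lt_of_le ht1 with hc | hc
    · rw [hμdef]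
      simp only [← hc, if_neg (not_le.2 (lt_trans ht₁lt ht₂gt)),
        if_neg (not_le.2 ht₂gt), if_pos (le_refl t₂)]
      rw [hrdef]; ring
    · rw [hμdef]
      have hn1 : ¬ t ≤ t₁ := not_le.2 (lt_trans (lt_trans ht₁lt ht₂gt) hc)
      have hn2 : ¬ t ≤ 1 - ρ' := not_le.2 (lt_trans ht₂gt hc)
      have hn3 : ¬ t ≤ t₂ := not_le.2 hc
      simp only [if_neg hn1, if_neg hn2, if_neg hn3]
  -- continuity
  have hcμ : Continuous μ := by
    rw [hμdef]
    refine Continuous.if_le ?_ ?_ continuous_id continuous_const ?_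
    · exact continuous_const.mul continuous_id
    · refine Continuous.if_le ?_ ?_ continuous_id continuous_const ?_
      · exact (hΛc.comp (continuous_const.add continuous_id)).sub continuous_const
      · refine Continuous.if_le ?_ ?_ continuous_id continuous_const ?_
        · exact ((hΛc.comp ((continuous_const.add continuous_id).sub continuous_const)).add
            continuous_const).sub continuous_const
        · exact continuous_const.add (continuous_const.mul (continuous_id.sub continuous_const))
        · intro s hs
          rw [hs, hrdef]; ring
      · intro s hs
        rw [hs]
        rw [if_pos (le_of_lt ht₂gt)]
        have e1 : ρ' + (1 - ρ') = 1 := by ring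
        have e2 : (1:ℝ) - 1 = 0 := by norm_num
        rw [e1, e2, hΛ0, hΛ1]; ring
    · intro s hs
      rw [hs]
      rw [if_pos (le_of_lt ht₁lt)]
      rw [div_mul_cancel₀ _ (ne_of_gt ht₁pos), hqdef]
  -- strict monotonicity
  have hsm1 : StrictMonoOn μ (Icc 0 t₁) := by
    intro s hs t ht hst
    rw [hEq1 s hs.2, hEq1 t ht.2]
    exact mul_lt_mul_of_pos_left hst (div_pos hqpos ht₁pos)
  have hsm2 : StrictMonoOn μ (Icc t₁ (1 - ρ')) := by
    intro s hs t ht hst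
    rw [hEq2 s hs.1 hs.2, hEq2 t ht.1 ht.2]
    have hsI : ρ' + s ∈ Icc (0:ℝ) 1 :=
      ⟨by linarith [hρ'I.1, ht₁pos, hs.1], by linarith [hs.2]⟩
    have htI : ρ' + t ∈ Icc (0:ℝ) 1 :=
      ⟨by linarith [hρ'I.1, ht₁pos, ht.1], by linarith [ht.2]⟩
    have := hΛm hsI htI (by linarith)
    linarith
  have hsm3 : StrictMonoOn μ (Icc (1 - ρ') t₂) := by
    intro s hs t ht hst
    rw [hEq3 s hs.1 hs.2, hEq3 t ht.1 ht.2]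
    have hsI : ρ' + s - 1 ∈ Icc (0:ℝ) 1 := by
      constructor
      · linarith [hs.1]
      · have := hNeq ▸ hargt₂.2; linarith [hs.2, hargt₂.2]
    have htI : ρ' + t - 1 ∈ Icc (0:ℝ) 1 := by
      constructor
      · linarith [ht.1]
      · linarith [ht.2, hargt₂.2]
    have := hΛm hsI htI (by linarith)
    linarith
  have hsm4 : StrictMonoOn μ (Icc t₂ 1) := by
    intro s hs t ht hst
    rw [hEq4 s hs.1, hEq4 t ht.1]
    have hslope : 0 < (1 - r)/(1 - t₂) := div_pos (by linarith) (by linarith)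
    have := mul_lt_mul_of_pos_left (sub_lt_sub_right hst t₂) hslope
    linarith
  have hμmono : StrictMonoOn μ (Icc 0 1) := by
    have g1 := strictMonoOn_glue (le_of_lt ht₁pos) (by linarith [ht₁lt]) hsm1 hsm2
    have g2 := strictMonoOn_glue (by linarith [ht₁pos, ht₁lt]) (le_of_lt ht₂gt) g1 hsm3
    exact strictMonoOn_glue (by linarith [ht₁pos, ht₁lt, ht₂gt]) (le_of_lt ht₂lt) g2 hsm4
  have hμ0 : μ 0 = 0 := by
    rw [hEq1 0 (le_of_lt ht₁pos)]; ring
  have hμ1 : μ 1 = 1 := by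
    rw [hEq4 1 (le_of_lt ht₂lt)]
    have hne : (1:ℝ) - t₂ ≠ 0 := by linarith
    rw [div_mul_cancel₀ _ hne]
    ring
  have hμmap : MapsTo μ (Icc 0 1) (Icc 0 1) := by
    intro t ht
    constructor
    · rw [← hμ0]; exact (hμmono.monotoneOn) h0Icc ht ht.1
    · rw [← hμ1]; exact (hμmono.monotoneOn) ht h1Icc ht.2
  have hμsurj : SurjOn μ (Icc 0 1) (Icc 0 1) := by
    have := intermediate_value_Icc (zero_le_one) hcμ.continuousOn
    rw [hμ0, hμ1] at this
    exact this
  have hgood : GoodLam μ := ⟨hcμ.continuousOn, hμmono, hμ0, hμ1, hμmap, hμsurj⟩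
  refine ⟨μ, hgood, ?_, ?_⟩
  · -- |μ t - t| ≤ ε
    intro t ht
    rcases le_or_gt t t₁ with hc1 | hc1
    · rw [hEq1 t hc1]
      have h1 : 0 ≤ q/t₁ * t := mul_nonneg (le_of_lt (div_pos hqpos ht₁pos)) ht.1
      have h2 : q/t₁ * t ≤ q := by
        have : q/t₁ * t ≤ q/t₁ * t₁ := mul_le_mul_of_nonneg_left hc1
          (le_of_lt (div_pos hqpos ht₁pos))
        rwa [div_mul_cancel₀ _ (ne_of_gt ht₁pos)] at this
      rw [abs_le]
      constructor
      · rw [hh] at ht₁le; linarith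
      · linarith [ht.1, hqγ]
    · rcases le_or_gt t (1 - ρ') with hc2 | hc2
      · rw [hEq2 t (le_of_lt hc1) hc2]
        have harg : ρ' + t ∈ Icc (0:ℝ) 1 :=
          ⟨by linarith [hρ'I.1, ht₁pos], by linarith⟩
        have h1 := abs_le.1 (hA _ harg)
        rw [abs_le]
        constructor
        · linarith [h1.1, hρ'ρ1.2]
        · linarith [h1.2, hρ'ρ1.1]
      · rcases le_or_gt t t₂ with hc3 | hc3
        · rw [hEq3 t (le_of_lt hc2) hc3]
          have harg : ρ' + t - 1 ∈ Icc (0:ℝ) 1 :=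
            ⟨by linarith, by linarith [ht.2, hρ'I.2]⟩
          have h1 := abs_le.1 (hA _ harg)
          rw [abs_le]
          constructor
          · linarith [h1.1, hρ'ρ1.2]
          · linarith [h1.2, hρ'ρ1.1]
        · rw [hEq4 t (le_of_lt hc3)]
          have hslope : 0 ≤ (1 - r)/(1 - t₂) := le_of_lt (div_pos (by linarith) (by linarith))
          have h1 : 0 ≤ (1 - r)/(1 - t₂) * (t - t₂) := mul_nonneg hslope (by linarith)
          have h2 : (1 - r)/(1 - t₂) * (t - t₂) ≤ 1 - r := by
            have : (1 - r)/(1 - t₂) * (t - t₂) ≤ (1 - r)/(1 - t₂) * (1 - t₂) :=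
              mul_le_mul_of_nonneg_left (by linarith [ht.2]) hslope
            rwa [div_mul_cancel₀ _ (by linarith : (1:ℝ) - t₂ ≠ 0)] at this
          rw [abs_le]
          constructor
          · linarith [ht.2]
          · linarith [hrγ]
  · -- the value bounds
    intro t ht
    have hcm1 := abs_le.1 hcm
    have hεε : 2*b + 2*ε' ≤ ε := by rw [hε']; linarith
    rcases eq_or_lt_of_le ht.2 with ht1 | ht1
    · -- t = 1
      rw [ht1, hμ1]
      have hV1x : vervaat x 1 = leftVal x ρ' - min (leftVal x ρ') (x ρ') := by
        have h1 := vervaat_one hx (by rw [hρ'def]; exact hρ'I)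
        rw [hρ'def] at h1; exact h1
      have hV1Y : vervaat Y 1 = 0 := by
        have h1 := vervaat_one hY (by rw [hρdef]; exact ⟨hρ0, le_of_lt hρ1⟩)
        rw [hρdef, hLYρ, min_self] at h1
        rw [h1]; ring
      rw [hV1x, hV1Y, sub_zero]
      have h2 := abs_le.1 hLV
      rw [abs_le]
      constructor
      · linarith [h2.1, hcm1.2]
      · linarith [h2.2, hcm1.1]
    · -- t < 1
      have hμt1 : μ t < 1 := by rw [← hμ1]; exact hμmono ht h1Icc ht1
      rw [vervaat_apply_lt ht1, vervaat_apply_lt hμt1, hρ'def, hρdef]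
      rcases le_or_gt t t₁ with hc1 | hc1
      · -- case 1 : t ∈ [0, t₁]
        have hb1 : ρ' + t ≤ 1 := by linarith [hargt₁.2]
        have hargI : ρ' + t ∈ Icc (0:ℝ) 1 := ⟨by linarith [hρ'I.1, ht.1], hb1⟩
        have e1 : vervaatAux x ρ' t = x (ρ' + t) - min (leftVal x ρ') (x ρ') := by
          simp only [vervaatAux, if_pos hb1]
        have hμeq : μ t = q/t₁ * t := hEq1 t hc1
        have hμge : 0 ≤ μ t := by
          rw [hμeq]; exact mul_nonneg (le_of_lt (div_pos hqpos ht₁pos)) ht.1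
        have hμle : μ t ≤ q := by
          rw [hμeq]
          have h2 : q/t₁ * t ≤ q/t₁ * t₁ :=
            mul_le_mul_of_nonneg_left hc1 (le_of_lt (div_pos hqpos ht₁pos))
          rwa [div_mul_cancel₀ _ (ne_of_gt ht₁pos)] at h2
        have hbr : ρ + μ t ≤ 1 := by linarith [hqγ]
        have e2 : vervaatAux Y ρ (μ t) = Y (ρ + μ t) - m := by
          simp only [vervaatAux, hLYρ, min_self, hYρ, if_pos hbr]
        rw [e1, e2]
        -- window bounds
        have hu1w : |Λ (ρ' + t) - ρ| < γ := by
          have hup : Λ (ρ' + t) ≤ Λ (ρ' + t₁) :=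
            hΛm.monotoneOn hargI hargt₁ (by linarith)
          have hlo : Λ ρ' ≤ Λ (ρ' + t) :=
            hΛm.monotoneOn hρ'Icc hargI (by linarith [ht.1])
          have hlo2 := (abs_le.1 (hA _ hρ'Icc)).1
          rw [abs_lt]
          constructor
          · linarith [hρ'ρ1.1, hlo, hlo2, ha, hγ0]
          · have : Λ (ρ' + t₁) = q + ρ := by rw [hqdef]; ring
            linarith [hqγ]
        have hY1 := hw _ (hΛmap hargI) hu1w
        have hB1 := abs_le.1 (hB _ hargI)
        have hY1' := abs_le.1 hY1
        have hu2I : ρ + μ t ∈ Icc (0:ℝ) 1 := ⟨by linarith, hbr⟩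
        have hu2w : |ρ + μ t - ρ| < γ := by
          rw [abs_lt]; constructor <;> [linarith; linarith [hqγ]]
        have hY2 := abs_le.1 (hw _ hu2I hu2w)
        rw [abs_le]
        constructor
        · linarith [hB1.1, hY1'.1, hcm1.2, hY2.2]
        · linarith [hB1.2, hY1'.2, hcm1.1, hY2.1]
      · rcases le_or_gt t (1 - ρ') with hc2 | hc2
        · -- case 2 : t ∈ (t₁, 1 - ρ']
          have hb1 : ρ' + t ≤ 1 := by linarith
          have hargI : ρ' + t ∈ Icc (0:ℝ) 1 := ⟨by linarith [hρ'I.1, ht.1], hb1⟩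
          have e1 : vervaatAux x ρ' t = x (ρ' + t) - min (leftVal x ρ') (x ρ') := by
            simp only [vervaatAux, if_pos hb1]
          rw [hEq2 t (le_of_lt hc1) hc2]
          have harg2 : ρ + (Λ (ρ' + t) - ρ) = Λ (ρ' + t) := by ring
          have e2 : vervaatAux Y ρ (Λ (ρ' + t) - ρ) = Y (Λ (ρ' + t)) - m := by
            simp only [vervaatAux, hLYρ, min_self, hYρ, harg2]
            rw [if_pos (hΛmap hargI).2]
          rw [e1, e2]
          have hB1 := abs_le.1 (hB _ hargI)
          rw [abs_le]
          constructor
          · linarith [hB1.1, hcm1.2]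
          · linarith [hB1.2, hcm1.1]
        · rcases le_or_gt t t₂ with hc3 | hc3
          · -- case 3 : t ∈ (1 - ρ', t₂]
            have hb1 : ¬ (ρ' + t ≤ 1) := by push_neg; linarith
            have hargI : ρ' + t - 1 ∈ Icc (0:ℝ) 1 := by
              constructor
              · linarith
              · linarith [hargt₂.2]
            have e1 : vervaatAux x ρ' t = x (ρ' + t - 1) - min (leftVal x ρ') (x ρ') := by
              simp only [vervaatAux, if_neg hb1]
            rw [hEq3 t (le_of_lt hc2) hc3]
            have hΛpos : 0 < Λ (ρ' + t - 1) := by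
              rw [← hΛ0]
              exact hΛm h0Icc hargI (by linarith)
            have hb2 : ¬ (ρ + (Λ (ρ' + t - 1) + 1 - ρ) ≤ 1) := by push_neg; linarith
            have harg2 : ρ + (Λ (ρ' + t - 1) + 1 - ρ) - 1 = Λ (ρ' + t - 1) := by ring
            have e2 : vervaatAux Y ρ (Λ (ρ' + t - 1) + 1 - ρ) = Y (Λ (ρ' + t - 1)) - m := by
              simp only [vervaatAux, hLYρ, min_self, hYρ]
              rw [if_neg hb2, harg2]
            rw [e1, e2]
            have hB1 := abs_le.1 (hB _ hargI)
            rw [abs_le]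
            constructor
            · linarith [hB1.1, hcm1.2]
            · linarith [hB1.2, hcm1.1]
          · -- case 4 : t ∈ (t₂, 1)
            have hb1 : ¬ (ρ' + t ≤ 1) := by push_neg; linarith [ht₂gt]
            have hargI : ρ' + t - 1 ∈ Icc (0:ℝ) 1 := by
              constructor
              · have := hNeq ▸ hNhpos; linarith [ht₂gt]
              · linarith [hρ'I.2]
            have e1 : vervaatAux x ρ' t = x (ρ' + t - 1) - min (leftVal x ρ') (x ρ') := by
              simp only [vervaatAux, if_neg hb1]
            rw [hEq4 t (le_of_lt hc3)]
            have hveq : μ t = r + (1 - r)/(1 - t₂) * (t - t₂) := hEq4 t (le_of_lt hc3)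
            have hvge : r ≤ r + (1 - r)/(1 - t₂) * (t - t₂) := by
              have hslope : 0 ≤ (1 - r)/(1 - t₂) :=
                le_of_lt (div_pos (by linarith) (by linarith))
              have h2 := mul_nonneg hslope (by linarith : (0:ℝ) ≤ t - t₂)
              linarith
            have hvlt : r + (1 - r)/(1 - t₂) * (t - t₂) < 1 := by
              rw [← hveq]; exact hμt1
            have hb2 : ¬ (ρ + (r + (1 - r)/(1 - t₂) * (t - t₂)) ≤ 1) := by
              push_neg; linarith [hrgt]
            have e2 : vervaatAux Y ρ (r + (1 - r)/(1 - t₂) * (t - t₂)) =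
                Y (ρ + (r + (1 - r)/(1 - t₂) * (t - t₂)) - 1) - m := by
              simp only [vervaatAux, hLYρ, min_self, hYρ]
              rw [if_neg hb2]
            rw [e1, e2]
            -- window for Λ (ρ' + t - 1)
            have hΛsw : |Λ (ρ' + t - 1) - ρ| < γ := by
              have hup : Λ (ρ' + t - 1) < Λ ρ' :=
                hΛm hargI hρ'Icc (by linarith [ht1])
              have hup2 := (abs_le.1 (hA _ hρ'Icc)).2
              have hlo : Λ (ρ' + t₂ - 1) ≤ Λ (ρ' + t - 1) :=
                hΛm.monotoneOn hargt₂ hargI (by linarith)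
              have hlo2 : r + ρ - 1 = Λ (ρ' + t₂ - 1) := by rw [hrdef]; ring
              rw [abs_lt]
              constructor
              · rw [← hlo2] at hlo; linarith [hrγ]
              · linarith [hρ'ρ1.2]
            have hY1 := abs_le.1 (hw _ (hΛmap hargI) hΛsw)
            have hB1 := abs_le.1 (hB _ hargI)
            have hu2I : ρ + (r + (1 - r)/(1 - t₂) * (t - t₂)) - 1 ∈ Icc (0:ℝ) 1 := by
              constructor
              · have hlo2 : r + ρ - 1 = Λ (ρ' + t₂ - 1) := by rw [hrdef]; ring
                linarith [hΛNpos, hvge]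
              · linarith
            have hu2w : |ρ + (r + (1 - r)/(1 - t₂) * (t - t₂)) - 1 - ρ| < γ := by
              rw [abs_lt]
              constructor
              · linarith [hvge, hrγ]
              · linarith
            have hY2 := abs_le.1 (hw _ hu2I hu2w)
            rw [abs_le]
            constructor
            · linarith [hB1.1, hY1.1, hcm1.2, hY2.2]
            · linarith [hB1.2, hY1.2, hcm1.1, hY2.1]

set_option maxHeartbeats 1000000 in
/-- If `y_n → y` in the Skorokhod sense, `y_n(0) = y_n(1) = 0 = y(0) = y(1)`, `y` attains
its infimum (in the sense `min(y(t−), y(t)) = inf y`) at exactly one point, and `y` is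
continuous at that point, then `V(y_n) → V(y)` in the Skorokhod sense. -/
theorem stmt12 (yn : ℕ → ℝ → ℝ) (y : ℝ → ℝ)
    (hync : ∀ n, Cadlag (yn n)) (hyc : Cadlag y)
    (h0n : ∀ n, yn n 0 = 0 ∧ yn n 1 = 0) (h0 : y 0 = 0 ∧ y 1 = 0)
    (huniq : ∃! ρ, ρ ∈ Set.Icc (0 : ℝ) 1 ∧ min (leftVal y ρ) (y ρ) = runMin01 y)
    (hcont : ContinuousWithinAt y (Set.Icc 0 1) (infPt y))
    (hconv : SkorokhodTendsto yn y) :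
    SkorokhodTendsto (fun n => vervaat (yn n)) (vervaat y) := by
  classical
  have h0Icc : (0:ℝ) ∈ Icc (0:ℝ) 1 := ⟨le_refl 0, zero_le_one⟩
  have h1Icc : (1:ℝ) ∈ Icc (0:ℝ) 1 := ⟨zero_le_one, le_refl 1⟩
  obtain ⟨lam0, hlam0, hA0, hB0⟩ := hconv
  obtain ⟨CY, hCY⟩ := cadlag_bounded_s12 hyc
  have hCn' : ∀ n, ∃ C, ∀ t ∈ Icc (0:ℝ) 1, |yn n t| ≤ C := fun n => cadlag_bounded_s12 (hync n)
  choose Cn hCn using hCn'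
  set m := runMin01 y with hm
  have hyge : ∀ u ∈ Icc (0:ℝ) 1, m ≤ y u := fun u hu => runMin01_le hyc hu
  obtain ⟨ρu, hρu, hρuuniq⟩ := huniq
  have hm0 : m ≤ 0 := by
    have := hyge 0 h0Icc
    rw [h0.1] at this
    exact this
  have hmneg : m < 0 := by
    rcases lt_or_eq_of_le hm0 with hlt | heq0
    · exact hlt
    exfalso
    have hL0 : leftVal y 0 = y 0 := by rw [leftVal, if_pos (le_refl (0:ℝ))]
    have h0min : min (leftVal y 0) (y 0) = m := by rw [hL0, h0.1, heq0, min_self]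
    have hL1 : m ≤ leftVal y 1 := leftVal_ge hyc ⟨one_pos, le_refl 1⟩ hyge
    have h1min : min (leftVal y 1) (y 1) = m := by
      rw [h0.2, heq0]
      refine min_eq_right ?_
      rw [heq0] at hL1
      exact hL1
    have e0 := hρuuniq 0 ⟨h0Icc, hm ▸ h0min⟩
    have e1 := hρuuniq 1 ⟨h1Icc, hm ▸ h1min⟩
    rw [← e0] at e1
    norm_num at e1
  have hinf := infPt_mem hyc (by rw [h0.1]; exact hmneg)
  set ρ := infPt y with hρdef
  have hρ0 : 0 < ρ := hinf.1.1
  have hρle1 : ρ ≤ 1 := hinf.1.2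
  have hρIcc : ρ ∈ Icc (0:ℝ) 1 := ⟨le_of_lt hρ0, hρle1⟩
  have hρeq : ρ = ρu := hρuuniq ρ ⟨hρIcc, hinf.2⟩
  have hLρ : leftVal y ρ = y ρ := by
    refine leftVal_eq_of_tendsto hρ0 ?_
    refine hcont.tendsto.mono_left ?_
    rw [← nhdsWithin_Ioo_eq_nhdsLT hρ0]
    exact nhdsWithin_mono ρ (fun u hu => ⟨le_of_lt hu.1, le_trans (le_of_lt hu.2) hρle1⟩)
  have hyρ : y ρ = m := by
    have h1 := hinf.2
    rw [hLρ, min_self] at h1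
    exact h1
  have hρ1 : ρ < 1 := by
    rcases lt_or_eq_of_le hρle1 with hlt | heq1
    · exact hlt
    exfalso
    rw [heq1, h0.2] at hyρ
    linarith
  have hcontw : ∀ e : ℝ, 0 < e → ∃ γ₀ > 0,
      ∀ u ∈ Icc (0:ℝ) 1, |u - ρ| < γ₀ → |y u - m| ≤ e := by
    intro e he
    obtain ⟨d, hd, hball⟩ := Metric.continuousWithinAt_iff.1 hcont e he
    refine ⟨d, hd, fun u hu hdu => ?_⟩
    have h1 := hball hu (by rw [Real.dist_eq]; exact hdu)
    rw [Real.dist_eq, hyρ] at h1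
    exact le_of_lt h1
  -- separation
  have hQ : ∀ e : ℝ, 0 < e → ∃ δ > 0, ∀ s ∈ Icc (0:ℝ) 1,
      min (leftVal y s) (y s) ≤ m + δ → |s - ρ| < e := by
    intro e he
    by_contra hq
    push_neg at hq
    have hsk : ∀ k : ℕ, ∃ u ∈ Icc (0:ℝ) 1, e - 1/(k+1) ≤ |u - ρ| ∧ y u ≤ m + 1/(k+1) := by
      intro k
      have hpos : (0:ℝ) < 1/(2*((k:ℝ)+1)) := by positivity
      obtain ⟨s, hsI, hsmin, hsfar⟩ := hq (1/(2*((k:ℝ)+1))) hpos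
      obtain ⟨u, huI, hud, huv⟩ := exists_near_of_min_le hyc hsI hpos hsmin
      have h12 : 1/(2*((k:ℝ)+1)) ≤ 1/((k:ℝ)+1) := by
        rw [one_div, one_div]
        apply inv_anti₀ (by positivity)
        linarith
      have hdd : (1:ℝ)/(2*((k:ℝ)+1)) + 1/(2*((k:ℝ)+1)) = 1/((k:ℝ)+1) := by
        field_simp
        norm_num
      refine ⟨u, huI, ?_, by linarith⟩
      have htri : |s - ρ| ≤ |s - u| + |u - ρ| := abs_sub_le s u ρ
      have h2 : |s - u| = |u - s| := abs_sub_comm s u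
      linarith [hsfar, hud, htri, h2 ▸ hud]
    choose u huI hufar huval using hsk
    obtain ⟨t, htI, φ, hφ, htnear, hlim⟩ := cadlag_cluster hyc u huI
    have hone : ∀ k : ℕ, 1/((φ k : ℝ)+1) ≤ 1/((k:ℝ)+1) := by
      intro k
      rw [one_div, one_div]
      apply inv_anti₀ (by positivity)
      have := hφ.id_le k
      have h2 : (k:ℝ) ≤ (φ k : ℝ) := Nat.cast_le.2 this
      linarith
    have hbnd : ∀ k : ℕ, y (u (φ k)) ≤ m + 1/((k:ℝ)+1) := by
      intro k
      linarith [huval (φ k), hone k]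
    have htendm : Tendsto (fun k : ℕ => m + 1/((k:ℝ)+1)) atTop (𝓝 m) := by
      have h2 := tendsto_const_nhds (x := m) (f := atTop (α := ℕ)) |>.add
        (tendsto_one_div_add_atTop_nhds_zero_nat (𝕜 := ℝ))
      rw [add_zero] at h2
      exact h2
    have htfar : e ≤ |t - ρ| := by
      have h1 : Tendsto (fun k => |u (φ k) - ρ|) atTop (𝓝 |t - ρ|) := by
        have := (htnear.sub_const ρ).abs
        exact this
      have h2 : Tendsto (fun k : ℕ => e - 1/((k:ℝ)+1)) atTop (𝓝 e) := by
        have h3 := tendsto_const_nhds (x := e) (f := atTop (α := ℕ)) |>.sub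
          (tendsto_one_div_add_atTop_nhds_zero_nat (𝕜 := ℝ))
        rw [sub_zero] at h3
        exact h3
      refine le_of_tendsto_of_tendsto' h2 h1 (fun k => ?_)
      have h4 := hufar (φ k)
      linarith [hone k]
    have hmin_t : min (leftVal y t) (y t) = m := by
      rcases hlim with hv | ⟨ht0, hv⟩
      · have hle : y t ≤ m := le_of_tendsto_of_tendsto' hv htendm hbnd
        have heq : y t = m := le_antisymm hle (hyge t htI)
        have hLge : m ≤ leftVal y t := by
          rcases eq_or_lt_of_le htI.1 with h00 | h00
          · rw [leftVal, if_pos (le_of_eq h00.symm)]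
            exact hyge 0 h0Icc
          · exact leftVal_ge hyc ⟨h00, htI.2⟩ hyge
        rw [heq, min_eq_right hLge]
      · have hle : leftVal y t ≤ m := le_of_tendsto_of_tendsto' hv htendm hbnd
        have heq : leftVal y t = m := le_antisymm hle (leftVal_ge hyc ⟨ht0, htI.2⟩ hyge)
        rw [heq, min_eq_left (heq ▸ hyge t htI)]
    have htρu := hρuuniq t ⟨htI, hm ▸ hmin_t⟩
    have htρ : t = ρ := by rw [htρu, ← hρeq]
    rw [htρ, sub_self, abs_zero] at htfar
    linarith
  -- pointwise bounds from the sups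
  have hApt : ∀ n, ∀ t ∈ Icc (0:ℝ) 1,
      |lam0 n t - t| ≤ ⨆ s : Icc (0:ℝ) 1, |lam0 n (s:ℝ) - (s:ℝ)| := by
    intro n t ht
    have hbdd : BddAbove (range fun s : Icc (0:ℝ) 1 => |lam0 n (s:ℝ) - (s:ℝ)|) := by
      refine ⟨1, ?_⟩
      rintro _ ⟨s, rfl⟩
      have h1 := ((hlam0 n).2.2.2.2.1) s.2
      rw [abs_le]
      exact ⟨by linarith [h1.1, s.2.2], by linarith [h1.2, s.2.1]⟩
    exact le_ciSup hbdd ⟨t, ht⟩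
  have hBpt : ∀ n, ∀ t ∈ Icc (0:ℝ) 1,
      |yn n t - y (lam0 n t)| ≤ ⨆ s : Icc (0:ℝ) 1, |yn n (s:ℝ) - y (lam0 n (s:ℝ))| := by
    intro n t ht
    have hbdd : BddAbove (range fun s : Icc (0:ℝ) 1 => |yn n (s:ℝ) - y (lam0 n (s:ℝ))|) := by
      refine ⟨Cn n + CY, ?_⟩
      rintro _ ⟨s, rfl⟩
      have h1 := hCn n s s.2
      have h2 := hCY (lam0 n s) (((hlam0 n).2.2.2.2.1) s.2)
      calc |yn n (s:ℝ) - y (lam0 n (s:ℝ))| ≤ |yn n (s:ℝ)| + |y (lam0 n (s:ℝ))| := abs_sub _ _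
        _ ≤ Cn n + CY := add_le_add h1 h2
    exact le_ciSup hbdd ⟨t, ht⟩
  -- main eventual argument
  apply skorokhod_of_eventually
  intro ε hε
  set ε' : ℝ := ε/8 with hε'def
  obtain ⟨γ₀, hγ₀, hγ₀w⟩ := hcontw ε' (by rw [hε'def]; linarith)
  set γ : ℝ := min γ₀ (min (ρ/4) (min ((1-ρ)/4) (ε/4))) with hγdef
  have hγpos : 0 < γ := by
    rw [hγdef]
    apply lt_min hγ₀
    apply lt_min (by linarith)
    exact lt_min (by linarith) (by linarith)
  have hγγ₀ : γ ≤ γ₀ := min_le_left _ _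
  have hγρ4 : γ ≤ ρ/4 := le_trans (min_le_right _ _) (min_le_left _ _)
  have hγρ'4 : γ ≤ (1-ρ)/4 := le_trans (min_le_right _ _)
    (le_trans (min_le_right _ _) (min_le_left _ _))
  have hγε : γ ≤ ε/4 := le_trans (min_le_right _ _)
    (le_trans (min_le_right _ _) (min_le_right _ _))
  have hwγ : ∀ u ∈ Icc (0:ℝ) 1, |u - ρ| < γ → |y u - m| ≤ ε' :=
    fun u hu hd => hγ₀w u hu (lt_of_lt_of_le hd hγγ₀)
  obtain ⟨δ, hδpos, hδQ⟩ := hQ (γ/32) (by linarith)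
  have hEV1 : ∀ᶠ n in atTop, (⨆ s : Icc (0:ℝ) 1, |lam0 n (s:ℝ) - (s:ℝ)|) < γ/32 :=
    hA0.eventually_lt_const (by linarith)
  have hEV2 : ∀ᶠ n in atTop, (⨆ s : Icc (0:ℝ) 1, |yn n (s:ℝ) - y (lam0 n (s:ℝ))|) <
      min (γ/32) (min (δ/2) (-m)) :=
    hB0.eventually_lt_const (lt_min (by linarith) (lt_min (by linarith) (by linarith)))
  filter_upwards [hEV1, hEV2] with n hAn hBn
  obtain ⟨hc0, hm0', hl0, hl1, hmap0, hsurj0⟩ := hlam0 n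
  set an : ℝ := ⨆ s : Icc (0:ℝ) 1, |lam0 n (s:ℝ) - (s:ℝ)| with handef
  set bn : ℝ := ⨆ s : Icc (0:ℝ) 1, |yn n (s:ℝ) - y (lam0 n (s:ℝ))| with hbndef
  have han0 : 0 ≤ an := le_trans (abs_nonneg _) (hApt n 0 h0Icc)
  have hbn0 : 0 ≤ bn := le_trans (abs_nonneg _) (hBpt n 0 h0Icc)
  have hbnγ : bn < γ/32 := lt_of_lt_of_le hBn (min_le_left _ _)
  have hbnδ : bn < δ/2 := lt_of_lt_of_le hBn (le_trans (min_le_right _ _) (min_le_left _ _))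
  have hbnm : bn < -m := lt_of_lt_of_le hBn (le_trans (min_le_right _ _) (min_le_right _ _))
  -- ρ''
  obtain ⟨ρ'', hρ''I, hρ''eq⟩ := hsurj0 hρIcc
  have hρ''ρ : |ρ'' - ρ| ≤ γ/32 := by
    have h1 := hApt n ρ'' hρ''I
    rw [hρ''eq] at h1
    rw [abs_sub_comm] at h1
    linarith [hAn]
  -- min of yn n
  have hmnge : m - bn ≤ runMin01 (yn n) := by
    apply le_runMin01
    intro t ht
    have h1 := (abs_le.1 (hBpt n t ht)).1
    have h2 := hyge (lam0 n t) (hmap0 ht)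
    linarith
  have hmnle : runMin01 (yn n) ≤ m + bn := by
    refine le_trans (runMin01_le (hync n) hρ''I) ?_
    have h1 := (abs_le.1 (hBpt n ρ'' hρ''I)).2
    rw [hρ''eq, hyρ] at h1
    linarith
  have hmnneg : runMin01 (yn n) < 0 := by linarith
  have hinfn := infPt_mem (hync n) (by rw [(h0n n).1]; exact hmnneg)
  set ρ' := infPt (yn n) with hρ'def
  have hρ'I : ρ' ∈ Ioc (0:ℝ) 1 := hinfn.1
  have hρ'Icc : ρ' ∈ Icc (0:ℝ) 1 := ⟨le_of_lt hρ'I.1, hρ'I.2⟩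
  have hcmin : min (leftVal (yn n) ρ') (yn n ρ') = runMin01 (yn n) := hinfn.2
  have hcm : |min (leftVal (yn n) ρ') (yn n ρ') - m| ≤ bn := by
    rw [hcmin, abs_le]
    exact ⟨by linarith, by linarith⟩
  -- transfer of left limits
  have glam : GoodLam (lam0 n) := ⟨hc0, hm0', hl0, hl1, hmap0, hsurj0⟩
  have hLT : |leftVal (yn n) ρ' - leftVal y (lam0 n ρ')| ≤ bn :=
    leftVal_transfer (hync n) hyc glam hρ'I (fun u hu => hBpt n u hu)
  -- λ(ρ') close to ρ
  have hlamrho : |lam0 n ρ' - ρ| < γ/32 := by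
    apply hδQ (lam0 n ρ') (hmap0 hρ'Icc)
    have h1 : leftVal y (lam0 n ρ') ≤ leftVal (yn n) ρ' + bn := by
      have := (abs_le.1 hLT).1
      linarith
    have h2 : y (lam0 n ρ') ≤ yn n ρ' + bn := by
      have := (abs_le.1 (hBpt n ρ' hρ'Icc)).1
      linarith
    have h3 : min (leftVal y (lam0 n ρ')) (y (lam0 n ρ')) ≤
        min (leftVal (yn n) ρ') (yn n ρ') + bn := by
      rcases le_total (leftVal (yn n) ρ') (yn n ρ') with hcc | hcc
      · rw [min_eq_left hcc]
        exact le_trans (min_le_left _ _) h1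
      · rw [min_eq_right hcc]
        exact le_trans (min_le_right _ _) h2
    rw [hcmin] at h3
    linarith
  have hρ'ρ : |ρ' - ρ| ≤ 2*(γ/32) := by
    have h1 := hApt n ρ' hρ'Icc
    have h2 : |ρ' - ρ| ≤ |ρ' - lam0 n ρ'| + |lam0 n ρ' - ρ| := abs_sub_le _ _ _
    have h3 : |ρ' - lam0 n ρ'| = |lam0 n ρ' - ρ'| := abs_sub_comm _ _
    linarith [hAn]
  -- windows
  have hlamrhoIoc : lam0 n ρ' ∈ Ioc (0:ℝ) 1 := by
    constructor
    · rw [← hl0]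
      exact hm0' h0Icc hρ'Icc hρ'I.1
    · exact (hmap0 hρ'Icc).2
  have hyl : |y (lam0 n ρ') - m| ≤ ε' :=
    hwγ _ (hmap0 hρ'Icc) (lt_of_lt_of_le hlamrho (by linarith))
  have hLw : |leftVal y (lam0 n ρ') - m| ≤ ε' := by
    refine leftVal_window hyc hγpos (by linarith) hwγ hlamrhoIoc ?_
    exact lt_of_lt_of_le hlamrho (by linarith)
  have hLV : |leftVal (yn n) ρ' - m| ≤ bn + ε' := by
    have h1 : |leftVal (yn n) ρ' - m| ≤
        |leftVal (yn n) ρ' - leftVal y (lam0 n ρ')| + |leftVal y (lam0 n ρ') - m| :=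
      abs_sub_le _ _ _
    linarith
  -- extended lambda
  have hΛc : Continuous (ext01 (lam0 n)) := ext01_continuous hc0
  have hΛm : StrictMonoOn (ext01 (lam0 n)) (Icc 0 1) := by
    intro s hs t ht hst
    rw [ext01_eq hs, ext01_eq ht]
    exact hm0' hs ht hst
  have hΛ0 : ext01 (lam0 n) 0 = 0 := by rw [ext01_eq h0Icc]; exact hl0
  have hΛ1 : ext01 (lam0 n) 1 = 1 := by rw [ext01_eq h1Icc]; exact hl1
  have hΛmap : MapsTo (ext01 (lam0 n)) (Icc 0 1) (Icc 0 1) := by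
    intro t ht
    rw [ext01_eq ht]
    exact hmap0 ht
  have hΛρ'' : ext01 (lam0 n) ρ'' = ρ := by rw [ext01_eq hρ''I]; exact hρ''eq
  have hAΛ : ∀ t ∈ Icc (0:ℝ) 1, |ext01 (lam0 n) t - t| ≤ an := by
    intro t ht
    rw [ext01_eq ht]
    exact hApt n t ht
  have hBΛ : ∀ t ∈ Icc (0:ℝ) 1, |yn n t - y (ext01 (lam0 n) t)| ≤ bn := by
    intro t ht
    rw [ext01_eq ht]
    exact hBpt n t ht
  exact mu_exists hyc (hync n) hΛc hΛm hΛ0 hΛ1 hΛmap hε hε'def hγpos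
    (by linarith) (by linarith) hγε han0 (le_of_lt hAn) hbn0 (le_of_lt hbnγ)
    hρ'ρ hρ''ρ hρ'I hρ''I hΛρ'' hρ'def.symm hρdef.symm hLρ hyρ hcm hwγ hAΛ hBΛ hLV
end

section
/- For a càdlàg x : [0,1] → ℝ, write x̲(t) = inf_{s∈[0,t]} x(s), and for t ∈ (0,1) define g(x,t) = sup{ s ∈ [0,t] : min(x(s), x(s−)) = x̲(t) } and d(x,t) = min( inf{ s ∈ (t,1] : min(x(s), x(s−)) ≤ x̲(t) }, 1 ). Suppose x_n, x : [0,1] → ℝ are càdlàg with x_n → x in the Skorokhod sense, t_n → t ∈ (0,1), the map s ↦ x̲(s) is continuous on [0,1], and writing g = g(x,t), d = d(x,t): 0 < g < t < d < 1, x̲(g − ε) > x̲(t) for every ε ∈ (0,g), and x̲(t) > x̲(d + ε) for every ε ∈ (0, 1−d). Then g(x_n, t_n) → g(x,t) and d(x_n, t_n) → d(x,t) as n → ∞. -/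
open Filter Topology

/-- The running infimum `x̲(t) = inf_{s ∈ [0,t]} x(s)`. -/
noncomputable def runInf (x : ℝ → ℝ) (t : ℝ) : ℝ := ⨅ s : Set.Icc (0 : ℝ) t, x (s : ℝ)

/-- `g(x,t) = sup{s ∈ [0,t] : min(x(s), x(s−)) = x̲(t)}`. -/
noncomputable def gfun (x : ℝ → ℝ) (t : ℝ) : ℝ :=
  sSup {s : ℝ | s ∈ Set.Icc 0 t ∧ min (x s) (leftVal x s) = runInf x t}

/-- `d(x,t) = inf{s ∈ (t,1] : min(x(s), x(s−)) ≤ x̲(t)} ∧ 1`. -/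
noncomputable def dfun (x : ℝ → ℝ) (t : ℝ) : ℝ :=
  sInf ({s : ℝ | s ∈ Set.Ioc t 1 ∧ min (x s) (leftVal x s) ≤ runInf x t} ∪ {1})

open Set in
section
variable {x : ℝ → ℝ}

lemma cadlag_bdd_s14 (hx : Cadlag x) : ∃ M : ℝ, ∀ s ∈ Icc (0:ℝ) 1, |x s| ≤ M := by
  set A : Set ℝ := {b | b ∈ Icc (0:ℝ) 1 ∧ ∃ M, ∀ s ∈ Icc 0 b, |x s| ≤ M} with hA
  have h0A : (0:ℝ) ∈ A := ⟨⟨le_refl _, zero_le_one⟩, |x 0|, by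
    intro s hs; rw [le_antisymm hs.2 hs.1]⟩
  have hne : A.Nonempty := ⟨0, h0A⟩
  have hbdd : BddAbove A := ⟨1, fun b hb => hb.1.2⟩
  set c := sSup A with hc
  have hc0 : 0 ≤ c := le_csSup hbdd h0A
  have hc1 : c ≤ 1 := csSup_le hne (fun b hb => hb.1.2)
  -- c ∈ A
  have hcA : c ∈ A := by
    rcases eq_or_lt_of_le hc0 with h | h
    · rwa [← h]
    · -- use left limit at c
      obtain ⟨L, hL⟩ := hx.2 c ⟨h, hc1⟩
      have hev : ∀ᶠ u in 𝓝[<] c, |x u| ≤ |L| + 1 := by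
        have := hL.eventually (eventually_le_nhds (lt_add_one L) : ∀ᶠ v in 𝓝 L, v ≤ L + 1)
        have h2 := hL.eventually (eventually_ge_nhds (by linarith : L - 1 < L) :
          ∀ᶠ v in 𝓝 L, L - 1 ≤ v)
        filter_upwards [this, h2] with u h1 h2
        rw [abs_le]; constructor <;> [skip; skip] <;> cases abs_le.1 (le_refl |L|) <;> nlinarith [abs_nonneg L, le_abs_self L, neg_abs_le L]
      obtain ⟨l, hl, hIoo⟩ := (mem_nhdsLT_iff_exists_Ioo_subset' h).1 hev
      obtain ⟨b, hbA, hbl⟩ := exists_lt_of_lt_csSup hne (max_lt hl h : max l 0 < c)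
      obtain ⟨M, hM⟩ := hbA.2
      refine ⟨⟨hc0, hc1⟩, max M (max (|L| + 1) |x c|), fun s hs => ?_⟩
      rcases le_or_gt s b with h1 | h1
      · exact le_trans (hM s ⟨hs.1, h1⟩) (le_max_left _ _)
      · rcases eq_or_lt_of_le hs.2 with h2 | h2
        · rw [h2]; exact le_trans (le_max_right _ _) (le_max_right _ _)
        · exact le_trans (hIoo ⟨lt_of_lt_of_le (lt_of_le_of_lt (le_max_left l 0) hbl) h1.le, h2⟩)
            (le_trans (le_max_left _ _) (le_max_right _ _))
  by_contra hcon
  push_neg at hcon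
  -- then c < 1 and we can extend
  have hc1' : c < 1 := by
    rcases eq_or_lt_of_le hc1 with h | h
    · exfalso; obtain ⟨M, hM⟩ := hcA.2; rw [h] at hM
      obtain ⟨s, hs, hMs⟩ := hcon M; exact absurd (hM s hs) (not_le.2 hMs)
    · exact h
  have hrc := hx.1 c ⟨hc0, hc1'⟩
  have hev : ∀ᶠ u in 𝓝[≥] c, |x u| ≤ |x c| + 1 := by
    have h1 := hrc.eventually (eventually_le_nhds (lt_add_one (x c)))
    have h2 := hrc.eventually (eventually_ge_nhds (by linarith : x c - 1 < x c))
    filter_upwards [h1, h2] with u h1 h2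
    rw [abs_le]; constructor <;> nlinarith [le_abs_self (x c), neg_abs_le (x c)]
  obtain ⟨u, hu, hIco⟩ := (mem_nhdsGE_iff_exists_Ico_subset' (lt_add_one c)).1 hev
  set c' := min ((c + u) / 2) 1 with hc'
  have hcc' : c < c' := lt_min (by rcases hu with hu; simp only [mem_Ioi] at hu; linarith) hc1'
  have hc'A : c' ∈ A := by
    obtain ⟨M, hM⟩ := hcA.2
    refine ⟨⟨le_trans hc0 hcc'.le, min_le_right _ _⟩, max M (|x c| + 1), fun s hs => ?_⟩
    rcases le_or_gt s c with h1 | h1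
    · exact le_trans (hM s ⟨hs.1, h1⟩) (le_max_left _ _)
    · refine le_trans (hIco ⟨h1.le, lt_of_le_of_lt (le_trans hs.2 (min_le_left _ _)) ?_⟩)
        (le_max_right _ _)
      rcases hu with hu; simp only [mem_Ioi] at hu; linarith
  exact absurd (le_csSup hbdd hc'A) (not_le.2 hcc')


lemma runInf_eq_sInf (x : ℝ → ℝ) (b : ℝ) : runInf x b = sInf (x '' Icc 0 b) :=
  (sInf_image' (s := Icc (0:ℝ) b) (f := x)).symm

lemma runInf_le (hbd : BddBelow (x '' Icc 0 1)) {s b : ℝ} (hs : s ∈ Icc 0 b) (hb : b ≤ 1) :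
    runInf x b ≤ x s := by
  rw [runInf_eq_sInf]
  exact csInf_le (hbd.mono (image_mono (Icc_subset_Icc le_rfl hb))) ⟨s, hs, rfl⟩

lemma le_runInf {b c : ℝ} (hb : 0 ≤ b) (h : ∀ s ∈ Icc (0:ℝ) b, c ≤ x s) : c ≤ runInf x b := by
  rw [runInf_eq_sInf]
  exact le_csInf ((nonempty_Icc.2 hb).image _) (by rintro v ⟨s, hs, rfl⟩; exact h s hs)

lemma runInf_anti (hbd : BddBelow (x '' Icc 0 1)) {b b' : ℝ} (h0 : 0 ≤ b) (hbb : b ≤ b')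
    (h1 : b' ≤ 1) : runInf x b' ≤ runInf x b := by
  rw [runInf_eq_sInf, runInf_eq_sInf]
  exact csInf_le_csInf (hbd.mono (image_mono (Icc_subset_Icc le_rfl h1)))
    ((nonempty_Icc.2 h0).image _) (image_mono (Icc_subset_Icc le_rfl hbb))

lemma leftVal_tendsto (hx : Cadlag x) {s : ℝ} (hs : s ∈ Ioc (0:ℝ) 1) :
    Tendsto x (𝓝[<] s) (𝓝 (leftVal x s)) := by
  obtain ⟨L, hL⟩ := hx.2 s hs
  have hval : leftVal x s = L := by
    rw [leftVal, if_neg (not_le.2 hs.1)]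
    exact hL.limUnder_eq
  rw [hval]; exact hL

lemma leftVal_ge_s14 (hx : Cadlag x) {s a c : ℝ} (hs : s ∈ Ioc (0:ℝ) 1) (ha : a < s)
    (h : ∀ u ∈ Ioo a s, c ≤ x u) : c ≤ leftVal x s :=
  ge_of_tendsto (leftVal_tendsto hx hs)
    (eventually_of_mem ((mem_nhdsLT_iff_exists_Ioo_subset' ha).2 ⟨a, ha, subset_rfl⟩) h)

lemma runInf_le_min (hx : Cadlag x) (hbd : BddBelow (x '' Icc 0 1)) {s b : ℝ}
    (hs : s ∈ Icc 0 b) (hb : b ≤ 1) :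
    runInf x b ≤ min (x s) (leftVal x s) := by
  rcases eq_or_lt_of_le hs.1 with h0 | h0
  · rw [← h0] at hs ⊢
    rw [leftVal, if_pos le_rfl, min_self]
    exact runInf_le hbd hs hb
  · refine le_min (runInf_le hbd hs hb) (leftVal_ge_s14 hx ⟨h0, le_trans hs.2 hb⟩ h0 ?_)
    intro u hu
    exact runInf_le hbd ⟨hu.1.le, le_trans hu.2.le hs.2⟩ hb

lemma att (hx : Cadlag x) (hbd : BddBelow (x '' Icc 0 1)) {a b : ℝ}
    (ha : 0 ≤ a) (hab : a ≤ b) (hb1 : b ≤ 1) :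
    ∃ s₀ ∈ Icc a b, min (x s₀) (leftVal x s₀) ≤ sInf (x '' Icc a b) := by
  set J := sInf (x '' Icc a b) with hJ
  have hbdab : ∀ s : ℝ, s ≤ b → BddBelow (x '' Icc a s) :=
    fun s hs => hbd.mono (image_mono (Icc_subset_Icc ha (le_trans hs hb1)))
  set T := {s : ℝ | s ∈ Icc a b ∧ sInf (x '' Icc a s) ≤ J} with hT
  have hbT : b ∈ T := ⟨⟨hab, le_rfl⟩, le_rfl⟩
  have hTne : T.Nonempty := ⟨b, hbT⟩
  have hTbd : BddBelow T := ⟨a, fun s hs => hs.1.1⟩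
  set s₀ := sInf T with hs₀
  have hs₀a : a ≤ s₀ := le_csInf hTne fun s hs => hs.1.1
  have hs₀b : s₀ ≤ b := csInf_le hTbd hbT
  have hkey : sInf (x '' Icc a s₀) ≤ J := by
    rcases eq_or_lt_of_le hs₀b with he | hlt
    · rw [he]
    · refine le_of_forall_pos_le_add fun η hη => ?_
      have hrc := hx.1 s₀ ⟨le_trans ha hs₀a, lt_of_lt_of_le hlt hb1⟩
      have hev : ∀ᶠ u in 𝓝[≥] s₀, x s₀ - η ≤ x u :=
        hrc.eventually (eventually_ge_nhds (by linarith))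
      obtain ⟨u, hu, hIco⟩ := (mem_nhdsGE_iff_exists_Ico_subset' (lt_add_one s₀)).1 hev
      obtain ⟨s, hsT, hsu⟩ := exists_lt_of_csInf_lt hTne (hu : s₀ < u)
      have hss₀ : s₀ ≤ s := csInf_le hTbd hsT
      have hmid : min (sInf (x '' Icc a s₀)) (x s₀ - η) ≤ sInf (x '' Icc a s) := by
        refine le_csInf ((nonempty_Icc.2 hsT.1.1).image _) ?_
        rintro v ⟨w, hw, rfl⟩
        rcases le_or_gt w s₀ with h1 | h1
        · exact le_trans (min_le_left _ _) (csInf_le (hbdab s₀ hs₀b) ⟨w, ⟨hw.1, h1⟩, rfl⟩)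
        · exact le_trans (min_le_right _ _) (hIco ⟨h1.le, lt_of_le_of_lt hw.2 hsu⟩)
      have hxs₀ : sInf (x '' Icc a s₀) ≤ x s₀ :=
        csInf_le (hbdab s₀ hs₀b) ⟨s₀, ⟨hs₀a, le_rfl⟩, rfl⟩
      have := le_trans hmid hsT.2
      rcases le_total (sInf (x '' Icc a s₀)) (x s₀ - η) with h | h
      · rw [min_eq_left h] at this; linarith
      · rw [min_eq_right h] at this; linarith
  rcases eq_or_lt_of_le hs₀a with he | hlt
  · refine ⟨a, ⟨le_rfl, hab⟩, le_trans (min_le_left _ _) ?_⟩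
    rw [← he] at hkey
    rwa [Icc_self, image_singleton, csInf_singleton] at hkey
  · refine ⟨s₀, ⟨hs₀a, hs₀b⟩, ?_⟩
    by_contra hcon
    push_neg at hcon
    set cm := min (x s₀) (leftVal x s₀) with hcm
    set c := (J + cm) / 2 with hc
    have hJc : J < c := by simp only [hc]; linarith
    have hccm : c < cm := by simp only [hc]; linarith
    have hLt := leftVal_tendsto hx ⟨lt_of_le_of_lt ha hlt, le_trans hs₀b hb1⟩
    have hev : ∀ᶠ u in 𝓝[<] s₀, c ≤ x u :=
      hLt.eventually (eventually_ge_nhds (lt_of_lt_of_le hccm (min_le_right _ _)))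
    obtain ⟨l, hl, hIoo⟩ := (mem_nhdsLT_iff_exists_Ioo_subset' hlt).1 hev
    set l' := max l a with hl'
    have hl's : l' < s₀ := max_lt hl hlt
    have hl'T : l' ∉ T := fun hmem => absurd (csInf_le hTbd hmem) (not_le.2 hl's)
    have hl'I : J < sInf (x '' Icc a l') := by
      refine lt_of_not_ge fun hle => hl'T ⟨⟨le_max_right _ _, le_trans hl's.le hs₀b⟩, hle⟩
    have hmin : min (sInf (x '' Icc a l')) c ≤ sInf (x '' Icc a s₀) := by
      refine le_csInf ((nonempty_Icc.2 hs₀a).image _) ?_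
      rintro v ⟨w, hw, rfl⟩
      rcases le_or_gt w l' with h1 | h1
      · exact le_trans (min_le_left _ _) (csInf_le (hbdab l' (le_trans hl's.le hs₀b)) ⟨w, ⟨hw.1, h1⟩, rfl⟩)
      · rcases eq_or_lt_of_le hw.2 with h2 | h2
        · refine le_trans (min_le_right _ _) (le_trans hccm.le ?_)
          rw [h2]; exact min_le_left _ _
        · exact le_trans (min_le_right _ _) (hIoo ⟨lt_of_le_of_lt (le_max_left l a) h1, h2⟩)
    rcases le_total (sInf (x '' Icc a l')) c with h | h
    · rw [min_eq_left h] at hmin; linarith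
    · rw [min_eq_right h] at hmin; linarith

lemma leftVal_comp_ge {x y lam : ℝ → ℝ} (hx : Cadlag x) (hy : Cadlag y)
    (hlc : ContinuousOn lam (Icc 0 1)) (hlm : StrictMonoOn lam (Icc 0 1)) (hl0 : lam 0 = 0)
    (hmap : MapsTo lam (Icc 0 1) (Icc 0 1)) {s δ : ℝ} (hs : s ∈ Ioc (0:ℝ) 1)
    (hδ : ∀ u ∈ Icc (0:ℝ) 1, y (lam u) - δ ≤ x u) :
    leftVal y (lam s) - δ ≤ leftVal x s := by
  have hsI : s ∈ Icc (0:ℝ) 1 := ⟨hs.1.le, hs.2⟩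
  have h0I : (0:ℝ) ∈ Icc (0:ℝ) 1 := ⟨le_rfl, zero_le_one⟩
  have hls : lam s ∈ Ioc (0:ℝ) 1 := ⟨hl0 ▸ hlm h0I hsI hs.1, (hmap hsI).2⟩
  have hIoo : Ioo 0 s ∈ 𝓝[<] s :=
    (mem_nhdsLT_iff_exists_Ioo_subset' hs.1).2 ⟨0, hs.1, subset_rfl⟩
  have hT1 := leftVal_tendsto hx hs
  have hlamT : Tendsto lam (𝓝[<] s) (𝓝[<] (lam s)) := by
    rw [tendsto_nhdsWithin_iff]
    constructor
    · refine (hlc s hsI).mono_left ?_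
      rw [← nhdsWithin_Ioo_eq_nhdsLT hs.1]
      exact nhdsWithin_mono _ (fun u hu => ⟨hu.1.le, le_trans hu.2.le hs.2⟩)
    · filter_upwards [hIoo] with u hu
      exact hlm ⟨hu.1.le, le_trans hu.2.le hs.2⟩ hsI hu.2
  have hT2 : Tendsto (fun u => y (lam u) - δ) (𝓝[<] s) (𝓝 (leftVal y (lam s) - δ)) :=
    ((leftVal_tendsto hy hls).comp hlamT).sub_const δ
  refine le_of_tendsto_of_tendsto hT2 hT1 ?_
  filter_upwards [hIoo] with u hu
  exact hδ u ⟨hu.1.le, le_trans hu.2.le hs.2⟩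

lemma runInf_comp {x y lam : ℝ → ℝ} (hybd : BddBelow (y '' Icc 0 1))
    (hlm : StrictMonoOn lam (Icc 0 1)) (hl0 : lam 0 = 0)
    (hmap : MapsTo lam (Icc 0 1) (Icc 0 1)) (hsurj : SurjOn lam (Icc 0 1) (Icc 0 1))
    {b δ : ℝ} (hb : b ∈ Icc (0:ℝ) 1) (hδ : ∀ u ∈ Icc (0:ℝ) 1, |x u - y (lam u)| ≤ δ) :
    |runInf x b - runInf y (lam b)| ≤ δ := by
  obtain ⟨my, hmy⟩ := hybd
  have hxbd : BddBelow (x '' Icc 0 1) := by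
    refine ⟨my - δ, ?_⟩
    rintro v ⟨u, hu, rfl⟩
    have h1 := (abs_le.1 (hδ u hu)).1
    have h2 := hmy ⟨lam u, hmap hu, rfl⟩
    simp only [mem_lowerBounds] at *
    linarith
  have hybd' : BddBelow (y '' Icc 0 1) := ⟨my, hmy⟩
  have hmono := hlm.monotoneOn
  rw [abs_le]
  constructor
  · -- runInf y (lam b) - δ ≤ runInf x b, i.e.  -δ ≤ runInf x b - runInf y (lam b)
    have : runInf y (lam b) - δ ≤ runInf x b := by
      refine le_runInf hb.1 fun u hu => ?_
      have huI : u ∈ Icc (0:ℝ) 1 := ⟨hu.1, le_trans hu.2 hb.2⟩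
      have h1 : runInf y (lam b) ≤ y (lam u) :=
        runInf_le hybd' ⟨(hmap huI).1, hmono huI hb hu.2⟩ (hmap hb).2
      have h2 := (abs_le.1 (hδ u huI)).1
      linarith
    linarith
  · -- runInf x b - runInf y (lam b) ≤ δ
    have : runInf x b - δ ≤ runInf y (lam b) := by
      refine le_runInf (hmap hb).1 fun v hv => ?_
      obtain ⟨u, hu, huv⟩ := hsurj ⟨hv.1, le_trans hv.2 (hmap hb).2⟩
      have hub : u ≤ b := by
        by_contra hcon
        push_neg at hcon
        have := hlm hb hu hcon
        rw [huv] at this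
        exact absurd hv.2 (not_le.2 this)
      have h1 : runInf x b ≤ x u := runInf_le hxbd ⟨hu.1, hub⟩ hb.2
      have h2 := (abs_le.1 (hδ u hu)).2
      rw [← huv]
      linarith
    linarith

end

/-- If `x n → y` Skorokhod, `t_n → t ∈ (0,1)`, the running infimum of `y` is continuous,
`0 < g(y,t) < t < d(y,t) < 1`, and the running infimum strictly decreases through the
levels at `g` and `d`, then `g(x n, t_n) → g(y,t)` and `d(x n, t_n) → d(y,t)`. -/
theorem stmt14 (x : ℕ → ℝ → ℝ) (y : ℝ → ℝ)
    (hxc : ∀ n, Cadlag (x n)) (hyc : Cadlag y)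
    (hconv : SkorokhodTendsto x y)
    (t : ℝ) (ht : t ∈ Set.Ioo (0 : ℝ) 1)
    (tn : ℕ → ℝ) (htn : Filter.Tendsto tn Filter.atTop (nhds t))
    (hcont : ContinuousOn (runInf y) (Set.Icc 0 1))
    (hg0 : 0 < gfun y t) (hgt : gfun y t < t)
    (htd : t < dfun y t) (hd1 : dfun y t < 1)
    (hgapg : ∀ ε : ℝ, 0 < ε → ε < gfun y t → runInf y t < runInf y (gfun y t - ε))
    (hgapd : ∀ ε : ℝ, 0 < ε → ε < 1 - dfun y t → runInf y (dfun y t + ε) < runInf y t) :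
    Filter.Tendsto (fun n => gfun (x n) (tn n)) Filter.atTop (nhds (gfun y t)) ∧
    Filter.Tendsto (fun n => dfun (x n) (tn n)) Filter.atTop (nhds (dfun y t)) := by
  obtain ⟨htg0, ht1⟩ := ht
  obtain ⟨lam, hlam, heps, hdel⟩ := hconv
  obtain ⟨My, hMy⟩ := cadlag_bdd_s14 hyc
  have hybd : BddBelow (y '' Set.Icc 0 1) :=
    ⟨-My, by rintro v ⟨s, hs, rfl⟩; linarith [(abs_le.1 (hMy s hs)).1]⟩
  have hxbd : ∀ n, BddBelow (x n '' Set.Icc 0 1) := by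
    intro n; obtain ⟨M, hM⟩ := cadlag_bdd_s14 (hxc n)
    exact ⟨-M, by rintro v ⟨s, hs, rfl⟩; linarith [(abs_le.1 (hM s hs)).1]⟩
  set g := gfun y t with hgdef
  set d := dfun y t with hddef
  set eps : ℕ → ℝ := fun n => ⨆ s : Set.Icc (0:ℝ) 1, |lam n (s:ℝ) - (s:ℝ)| with hepsdef
  set del : ℕ → ℝ := fun n => ⨆ s : Set.Icc (0:ℝ) 1, |x n (s:ℝ) - y (lam n (s:ℝ))| with hdeldef
  have heps_ge : ∀ n, ∀ s ∈ Set.Icc (0:ℝ) 1, |lam n s - s| ≤ eps n := by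
    intro n s hs
    have hbd : BddAbove (Set.range fun s : Set.Icc (0:ℝ) 1 => |lam n (s:ℝ) - (s:ℝ)|) := by
      refine ⟨2, ?_⟩; rintro w ⟨⟨u, hu⟩, rfl⟩
      have h1 := (hlam n).2.2.2.2.1 hu
      have h2 : |lam n u - u| ≤ |lam n u| + |u| := abs_sub _ _
      have h3 : |lam n u| ≤ 1 := abs_le.2 ⟨by linarith [h1.1], h1.2⟩
      have h4 : |u| ≤ 1 := abs_le.2 ⟨by linarith [hu.1], hu.2⟩
      simpa using le_trans h2 (by linarith)
    exact le_ciSup hbd (⟨s, hs⟩ : Set.Icc (0:ℝ) 1)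
  have hdel_ge : ∀ n, ∀ s ∈ Set.Icc (0:ℝ) 1, |x n s - y (lam n s)| ≤ del n := by
    intro n s hs
    obtain ⟨M, hM⟩ := cadlag_bdd_s14 (hxc n)
    have hbd : BddAbove (Set.range fun s : Set.Icc (0:ℝ) 1 => |x n (s:ℝ) - y (lam n (s:ℝ))|) := by
      refine ⟨M + My, ?_⟩; rintro w ⟨⟨u, hu⟩, rfl⟩
      have h2 : |x n u - y (lam n u)| ≤ |x n u| + |y (lam n u)| := abs_sub _ _
      have h3 := hM u hu
      have h4 := hMy (lam n u) ((hlam n).2.2.2.2.1 hu)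
      simpa using le_trans h2 (by linarith)
    exact le_ciSup hbd (⟨s, hs⟩ : Set.Icc (0:ℝ) 1)
  -- structural facts about y
  have hgd : g < d := lt_trans hgt htd
  have hDbd : BddBelow ({s : ℝ | s ∈ Set.Ioc t 1 ∧ min (y s) (leftVal y s) ≤ runInf y t} ∪ {1}) := by
    refine ⟨0, ?_⟩
    rintro r (⟨⟨h1, _⟩, _⟩ | hr)
    · linarith
    · simp only [Set.mem_singleton_iff] at hr; rw [hr]; norm_num
  have hGbd : BddAbove {s : ℝ | s ∈ Set.Icc 0 t ∧ min (y s) (leftVal y s) = runInf y t} :=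
    ⟨t, fun r hr => hr.1.2⟩
  have hP : ∀ s, g < s → s < d → runInf y t < min (y s) (leftVal y s) := by
    intro s hgs hsd
    rcases le_or_gt s t with hst | hts
    · have hmem : s ∈ Set.Icc (0:ℝ) t := ⟨le_trans hg0.le hgs.le, hst⟩
      have hge : runInf y t ≤ min (y s) (leftVal y s) := runInf_le_min hyc hybd hmem ht1.le
      rcases eq_or_lt_of_le hge with he | h
      · exact absurd (le_csSup hGbd ⟨hmem, he.symm⟩) (not_le.2 hgs)
      · exact h
    · by_contra hcon
      push_neg at hcon
      exact absurd (csInf_le hDbd (Or.inl ⟨⟨hts, le_trans hsd.le hd1.le⟩, hcon⟩))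
        (not_le.2 hsd)
  have hbeta : ∀ a₁ b₁ : ℝ, g < a₁ → a₁ ≤ b₁ → b₁ < d →
      ∃ β, runInf y t < β ∧ ∀ s ∈ Set.Ioc a₁ b₁, β ≤ min (y s) (leftVal y s) := by
    intro a₁ b₁ hga hab hbd1
    have ha0 : 0 ≤ a₁ := le_trans hg0.le (le_of_lt hga)
    have hb1' : b₁ ≤ 1 := le_trans hbd1.le hd1.le
    obtain ⟨s₀, hs₀, hmin⟩ := att hyc hybd ha0 hab hb1'
    refine ⟨sInf (y '' Set.Icc a₁ b₁),
      lt_of_lt_of_le (hP s₀ (lt_of_lt_of_le hga hs₀.1) (lt_of_le_of_lt hs₀.2 hbd1)) hmin, ?_⟩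
    intro s hs
    have hsbd := hybd.mono (Set.image_mono (Set.Icc_subset_Icc ha0 hb1'))
    refine le_min (csInf_le hsbd ⟨s, ⟨hs.1.le, hs.2⟩, rfl⟩) ?_
    refine leftVal_ge_s14 hyc ⟨lt_trans (lt_of_le_of_lt hg0.le hga) hs.1,
      le_trans hs.2 hb1'⟩ hs.1 fun u hu => ?_
    exact csInf_le hsbd ⟨u, ⟨hu.1.le, le_trans hu.2.le hs.2⟩, rfl⟩
  -- limits
  have htnIoo : ∀ᶠ n in Filter.atTop, tn n ∈ Set.Ioo (0:ℝ) 1 :=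
    htn.eventually (isOpen_Ioo.mem_nhds ⟨htg0, ht1⟩)
  have hlamtn : Filter.Tendsto (fun n => lam n (tn n)) Filter.atTop (nhds t) := by
    have h1 : Filter.Tendsto (fun n => lam n (tn n) - tn n) Filter.atTop (nhds 0) := by
      apply squeeze_zero_norm' _ heps
      filter_upwards [htnIoo] with n hn
      exact heps_ge n (tn n) ⟨hn.1.le, hn.2.le⟩
    have := h1.add htn
    simpa using this
  have hlamtnI : ∀ᶠ n in Filter.atTop, lam n (tn n) ∈ Set.Icc (0:ℝ) 1 := by
    filter_upwards [htnIoo] with n hn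
    exact (hlam n).2.2.2.2.1 ⟨hn.1.le, hn.2.le⟩
  have hmconv : Filter.Tendsto (fun n => runInf y (lam n (tn n))) Filter.atTop
      (nhds (runInf y t)) :=
    (hcont t ⟨htg0.le, ht1.le⟩).tendsto.comp (tendsto_nhdsWithin_iff.2 ⟨hlamtn, hlamtnI⟩)
  have hrho : Filter.Tendsto (fun n => runInf (x n) (tn n)) Filter.atTop
      (nhds (runInf y t)) := by
    have h1 : Filter.Tendsto (fun n => runInf (x n) (tn n) - runInf y (lam n (tn n)))
        Filter.atTop (nhds 0) := by
      apply squeeze_zero_norm' _ hdel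
      filter_upwards [htnIoo] with n hn
      exact runInf_comp hybd (hlam n).2.1 (hlam n).2.2.1 (hlam n).2.2.2.2.1
        (hlam n).2.2.2.2.2 ⟨hn.1.le, hn.2.le⟩ (fun u hu => hdel_ge n u hu)
    have := h1.add hmconv
    simpa using this
  -- the key eventual estimate
  have KEY : ∀ η : ℝ, 0 < η → η < g → η < t - g → η < d - t → η < 1 - d →
      (∀ᶠ n in Filter.atTop, g - η ≤ gfun (x n) (tn n) ∧ gfun (x n) (tn n) ≤ g + η ∧
        d - η ≤ dfun (x n) (tn n) ∧ dfun (x n) (tn n) ≤ d + η) := by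
    intro η hη hηg hηtg hηdt hη1d
    obtain ⟨β, hβ, hβbound⟩ := hbeta (g + η/2) (d - η/2) (by linarith) (by linarith) (by linarith)
    have hK : runInf y t < runInf y (g - η/2) := hgapg (η/2) (by linarith) (by linarith)
    set K := runInf y (g - η/2) with hKdef
    have hα : runInf y (d + η/2) < runInf y t := hgapd (η/2) (by linarith) (by linarith)
    have hvlt : sInf (y '' Set.Icc 0 (d + η/2)) < (runInf y (d+η/2) + runInf y t)/2 := by
      rw [← runInf_eq_sInf]; linarith
    obtain ⟨v', ⟨v, hvI, rfl⟩, hv⟩ := exists_lt_of_csInf_lt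
      (((Set.nonempty_Icc).2 (by linarith : (0:ℝ) ≤ d + η/2)).image _) hvlt
    have hyv : y v < runInf y t := by linarith
    have hvt : t < v := by
      by_contra hcon
      push_neg at hcon
      have := runInf_le hybd ⟨hvI.1, hcon⟩ ht1.le
      linarith
    have hv1 : v ≤ 1 := le_trans hvI.2 (by linarith)
    have f1 : ∀ᶠ n in Filter.atTop, eps n < η/2 :=
      heps.eventually (eventually_lt_nhds (by linarith))
    have f2 : ∀ᶠ n in Filter.atTop, eps n < (v - t)/2 :=
      heps.eventually (eventually_lt_nhds (by linarith))
    have f3 : ∀ᶠ n in Filter.atTop, del n < (β - runInf y t)/2 :=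
      hdel.eventually (eventually_lt_nhds (by linarith))
    have f4 : ∀ᶠ n in Filter.atTop, del n < (K - runInf y t)/2 :=
      hdel.eventually (eventually_lt_nhds (by linarith))
    have f5 : ∀ᶠ n in Filter.atTop, del n < (runInf y t - y v)/2 :=
      hdel.eventually (eventually_lt_nhds (by linarith))
    have f6 : ∀ᶠ n in Filter.atTop, runInf (x n) (tn n) < (runInf y t + β)/2 :=
      hrho.eventually (eventually_lt_nhds (by linarith))
    have f7 : ∀ᶠ n in Filter.atTop, runInf (x n) (tn n) < (runInf y t + K)/2 :=
      hrho.eventually (eventually_lt_nhds (by linarith))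
    have f8 : ∀ᶠ n in Filter.atTop, (runInf y t + y v)/2 < runInf (x n) (tn n) :=
      hrho.eventually (eventually_gt_nhds (by linarith))
    have f9 : ∀ᶠ n in Filter.atTop, g + η < tn n :=
      htn.eventually (eventually_gt_nhds (by linarith))
    have f10 : ∀ᶠ n in Filter.atTop, tn n < d - η :=
      htn.eventually (eventually_lt_nhds (by linarith))
    have f11 : ∀ᶠ n in Filter.atTop, tn n < (t + v)/2 :=
      htn.eventually (eventually_lt_nhds (by linarith))
    filter_upwards [f1, f2, f3, f4, f5, f6, f7, f8, f9, f10, f11] with n h1 h2 h3 h4 h5 h6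
      h7 h8 h9 h10 h11
    have htnI : tn n ∈ Set.Icc (0:ℝ) 1 := ⟨by linarith, by linarith⟩
    -- E1
    have E1 : ∀ s ∈ Set.Icc (g+η) (d-η),
        runInf (x n) (tn n) < min (x n s) (leftVal (x n) s) := by
      intro s hs
      have hsI : s ∈ Set.Ioc (0:ℝ) 1 := ⟨by linarith [hs.1], by linarith [hs.2]⟩
      have habs := abs_le.1 (heps_ge n s ⟨hsI.1.le, hsI.2⟩)
      have hlamS : lam n s ∈ Set.Ioc (g+η/2) (d-η/2) :=
        ⟨by linarith [hs.1, habs.1], by linarith [hs.2, habs.2]⟩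
      have hcomp1 : y (lam n s) - del n ≤ x n s := by
        linarith [(abs_le.1 (hdel_ge n s ⟨hsI.1.le, hsI.2⟩)).1]
      have hcomp2 : leftVal y (lam n s) - del n ≤ leftVal (x n) s :=
        leftVal_comp_ge (hxc n) hyc (hlam n).1 (hlam n).2.1 (hlam n).2.2.1
          (hlam n).2.2.2.2.1 hsI
          (fun u hu => by linarith [(abs_le.1 (hdel_ge n u hu)).1])
      have h3' : β ≤ min (y (lam n s)) (leftVal y (lam n s)) := hβbound _ hlamS
      have h4' : β - del n ≤ min (x n s) (leftVal (x n) s) := by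
        refine le_min ?_ ?_
        · linarith [min_le_left (y (lam n s)) (leftVal y (lam n s))]
        · linarith [min_le_right (y (lam n s)) (leftVal y (lam n s))]
      linarith
    -- gfun upper bound
    have Agu : gfun (x n) (tn n) ≤ g + η := by
      apply Real.sSup_le
      · rintro s ⟨hsmem, hseq⟩
        by_contra hcon
        push_neg at hcon
        have hE := E1 s ⟨hcon.le, le_trans hsmem.2 h10.le⟩
        rw [hseq] at hE
        exact lt_irrefl _ hE
      · linarith
    -- dfun lower bound
    have Adl : d - η ≤ dfun (x n) (tn n) := by
      unfold dfun
      refine le_csInf ⟨1, Or.inr rfl⟩ ?_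
      rintro r (⟨hrI, hrle⟩ | hr1)
      · by_contra hcon
        push_neg at hcon
        have hE := E1 r ⟨by linarith [hrI.1], hcon.le⟩
        exact absurd hrle (not_le.2 hE)
      · simp only [Set.mem_singleton_iff] at hr1
        rw [hr1]; linarith
    -- gfun lower bound
    have Agl : g - η ≤ gfun (x n) (tn n) := by
      obtain ⟨s₀, hs₀I, hs₀min⟩ := att (hxc n) (hxbd n) le_rfl htnI.1 htnI.2
      rw [← runInf_eq_sInf] at hs₀min
      have heq : min (x n s₀) (leftVal (x n) s₀) = runInf (x n) (tn n) :=
        le_antisymm hs₀min (runInf_le_min (hxc n) (hxbd n) hs₀I htnI.2)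
      have hs₀g : g - η < s₀ := by
        by_contra hcon
        push_neg at hcon
        have hh1 : runInf (x n) (g - η) ≤ min (x n s₀) (leftVal (x n) s₀) :=
          runInf_le_min (hxc n) (hxbd n) ⟨hs₀I.1, hcon⟩ (by linarith)
        have hh2 : K - del n ≤ runInf (x n) (g - η) := by
          refine le_runInf (by linarith) fun u hu => ?_
          have huI : u ∈ Set.Icc (0:ℝ) 1 := ⟨hu.1, by linarith [hu.2]⟩
          have hgI : (g - η : ℝ) ∈ Set.Icc (0:ℝ) 1 := ⟨by linarith, by linarith⟩
          have hh3 : runInf y (lam n (g-η)) ≤ y (lam n u) :=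
            runInf_le hybd ⟨((hlam n).2.2.2.2.1 huI).1,
              (hlam n).2.1.monotoneOn huI hgI hu.2⟩ ((hlam n).2.2.2.2.1 hgI).2
          have hh4 : K ≤ runInf y (lam n (g-η)) := by
            refine runInf_anti hybd ((hlam n).2.2.2.2.1 hgI).1 ?_ (by linarith)
            have := (abs_le.1 (heps_ge n (g-η) hgI)).2
            linarith
          have hh5 := (abs_le.1 (hdel_ge n u huI)).1
          linarith
        rw [heq] at hh1
        linarith
      have hle : s₀ ≤ gfun (x n) (tn n) :=
        le_csSup ⟨tn n, fun r hr => hr.1.2⟩ ⟨hs₀I, heq⟩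
      linarith
    -- dfun upper bound
    have Adu : dfun (x n) (tn n) ≤ d + η := by
      obtain ⟨sn, hsnI, hsnv⟩ := (hlam n).2.2.2.2.2 (⟨hvI.1, hv1⟩ : v ∈ Set.Icc (0:ℝ) 1)
      have habs := heps_ge n sn hsnI
      rw [hsnv] at habs
      have habs' := abs_le.1 habs
      have hsn_tn : tn n < sn := by linarith [habs'.2]
      have hsn_mem : sn ∈ ({s : ℝ | s ∈ Set.Ioc (tn n) 1 ∧
          min (x n s) (leftVal (x n) s) ≤ runInf (x n) (tn n)} ∪ {1}) := by
        refine Or.inl ⟨⟨hsn_tn, hsnI.2⟩, le_trans (min_le_left _ _) ?_⟩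
        have := (abs_le.1 (hdel_ge n sn hsnI)).2
        rw [hsnv] at this
        linarith
      have hbdn : BddBelow ({s : ℝ | s ∈ Set.Ioc (tn n) 1 ∧
          min (x n s) (leftVal (x n) s) ≤ runInf (x n) (tn n)} ∪ {1}) := by
        refine ⟨0, ?_⟩
        rintro r (⟨⟨hr1, _⟩, _⟩ | hr)
        · linarith
        · simp only [Set.mem_singleton_iff] at hr; rw [hr]; norm_num
      have hle : dfun (x n) (tn n) ≤ sn := csInf_le hbdn hsn_mem
      linarith [habs'.1, hvI.2, h1, hle]
    exact ⟨Agl, Agu, Adl, Adu⟩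
  -- conclude
  have hfin : ∀ ε : ℝ, 0 < ε → ∀ᶠ n in Filter.atTop,
      |gfun (x n) (tn n) - g| < ε ∧ |dfun (x n) (tn n) - d| < ε := by
    intro ε hε
    set η := (min ε (min (min g (t-g)) (min (d-t) (1-d))))/2 with hηdef
    have m1 : min ε (min (min g (t-g)) (min (d-t) (1-d))) ≤ ε := min_le_left _ _
    have m2 : min ε (min (min g (t-g)) (min (d-t) (1-d))) ≤ g :=
      le_trans (min_le_right _ _) (le_trans (min_le_left _ _) (min_le_left _ _))
    have m3 : min ε (min (min g (t-g)) (min (d-t) (1-d))) ≤ t - g :=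
      le_trans (min_le_right _ _) (le_trans (min_le_left _ _) (min_le_right _ _))
    have m4 : min ε (min (min g (t-g)) (min (d-t) (1-d))) ≤ d - t :=
      le_trans (min_le_right _ _) (le_trans (min_le_right _ _) (min_le_left _ _))
    have m5 : min ε (min (min g (t-g)) (min (d-t) (1-d))) ≤ 1 - d :=
      le_trans (min_le_right _ _) (le_trans (min_le_right _ _) (min_le_right _ _))
    have m0 : 0 < min ε (min (min g (t-g)) (min (d-t) (1-d))) := by
      refine lt_min hε (lt_min (lt_min hg0 (by linarith)) (lt_min (by linarith) (by linarith)))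
    filter_upwards [KEY η (by positivity) (by simp only [hηdef]; linarith)
      (by simp only [hηdef]; linarith) (by simp only [hηdef]; linarith)
      (by simp only [hηdef]; linarith)] with n hn
    obtain ⟨k1, k2, k3, k4⟩ := hn
    constructor
    · rw [abs_lt]; constructor <;> simp only [hηdef] at k1 k2 <;> linarith
    · rw [abs_lt]; constructor <;> simp only [hηdef] at k3 k4 <;> linarith
  constructor
  · rw [Metric.tendsto_nhds]
    intro ε hε
    filter_upwards [hfin ε hε] with n hn
    rw [Real.dist_eq]
    exact hn.1
  · rw [Metric.tendsto_nhds]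
    intro ε hε
    filter_upwards [hfin ε hε] with n hn
    rw [Real.dist_eq]
    exact hn.2
end
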